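/- arXiv:2510.00228 — 9 statements merged into one kernel-verified Lean document; each statement's English description precedes it below -/
import Mathlib

section
/- Let G be a finite connected bipartite simple graph with diameter 3. Then G is radio graceful if and only if the antipodal graph A(G) is traceable. -/
open SimpleGraph

/-- A radio labeling of a graph `G`: for all distinct vertices `u, v`,
`|f u - f v| + d(u,v) ≥ diam(G) + 1`. -/
def IsRadioLabeling {V : Type*} (G : SimpleGraph V) (f : V → ℕ) : Prop :=
  ∀ u v : V, u ≠ v →
    (G.diam : ℤ) + 1 ≤ |(f u : ℤ) - (f v : ℤ)| + (G.dist u v : ℤ)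

/-- A graph is radio graceful if it has a radio labeling whose image is exactly
`{1, ..., |V(G)|}`. -/
def RadioGraceful {V : Type*} (G : SimpleGraph V) : Prop :=
  ∃ f : V → ℕ, IsRadioLabeling G f ∧ Set.range f = Set.Icc 1 (Nat.card V)

/-- The antipodal graph of `G`: vertices are adjacent iff their distance in `G`
equals the diameter of `G`. -/
def antipodalGraph {V : Type*} (G : SimpleGraph V) : SimpleGraph V where
  Adj u v := u ≠ v ∧ G.dist u v = G.diam
  symm := ⟨fun u v ⟨h1, h2⟩ => ⟨h1.symm, by rwa [SimpleGraph.dist_comm]⟩⟩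
  loopless := ⟨fun v h => h.1 rfl⟩

/-- A graph is traceable if it has a Hamiltonian path. -/
def Traceable {V : Type*} (G : SimpleGraph V) : Prop :=
  ∃ (u v : V) (p : G.Walk u v), p.IsPath ∧ ∀ w : V, w ∈ p.support

/-- `P` together with its complement forms a bipartition of `G`. -/
def IsBipartition {V : Type*} (G : SimpleGraph V) (P : Set V) : Prop :=
  ∀ u v : V, G.Adj u v → (u ∈ P ↔ v ∉ P)

/-- A graph is bipartite if its vertices can be split into two parts with all
edges between the parts. -/
def Bipartite {V : Type*} (G : SimpleGraph V) : Prop :=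
  ∃ P : Set V, IsBipartition G P

lemma walk_parity_aux {V : Type*} {G : SimpleGraph V} {P : Set V}
    (hP : IsBipartition G P) : ∀ {a b : V} (w : G.Walk a b),
    ((a ∈ P ↔ b ∈ P) ↔ Even w.length)
  | _, _, SimpleGraph.Walk.nil => by simp
  | a, b, SimpleGraph.Walk.cons h w => by
    have h1 := hP _ _ h
    have h2 := walk_parity_aux hP w
    simp only [SimpleGraph.Walk.length_cons, Nat.even_add_one, ← h2]
    tauto

lemma not_adj_aux {V : Type*} {G : SimpleGraph V} {P : Set V}
    (hP : IsBipartition G P) {u v m : V}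
    (h1 : G.dist u m = 3) (h2 : G.dist m v = 3) : ¬ G.Adj u v := by
  obtain ⟨w1, hw1⟩ := G.exists_walk_of_dist_ne_zero (u := u) (v := m) (by omega)
  obtain ⟨w2, hw2⟩ := G.exists_walk_of_dist_ne_zero (u := m) (v := v) (by omega)
  have p1 := walk_parity_aux hP w1
  have p2 := walk_parity_aux hP w2
  rw [hw1, h1] at p1
  rw [hw2, h2] at p2
  have h3 : ¬ Even 3 := by decide
  intro hadj
  have := hP _ _ hadj
  tauto

lemma getElem_idx_congr {α : Type*} (l : List α) {i j : ℕ} (h : i = j)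
    (hi : i < l.length) : l[i]'hi = l[j]'(h ▸ hi) := by subst h; rfl

lemma walk_of_chain_aux {V : Type*} (A : SimpleGraph V) :
    ∀ (l : List V) (a : V), List.Chain A.Adj a l →
      ∃ b, ∃ p : A.Walk a b, p.support = a :: l
  | [], a, _ => ⟨a, SimpleGraph.Walk.nil, by simp⟩
  | c :: l, a, h => by
    unfold List.Chain at h
    rw [List.isChain_cons_cons] at h
    obtain ⟨b, p, hp⟩ := walk_of_chain_aux A l c h.2
    exact ⟨b, SimpleGraph.Walk.cons h.1 p, by simp [hp]⟩

theorem radioGraceful_iff_antipodal_traceable_of_bipartite_diam_three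
    {V : Type*} [Fintype V] (G : SimpleGraph V)
    (hconn : G.Connected) (hbip : Bipartite G) (hdiam : G.diam = 3) :
    RadioGraceful G ↔ Traceable (antipodalGraph G) := by
  classical
  obtain ⟨P, hP⟩ := hbip
  have hnetop : G.ediam ≠ ⊤ := G.ediam_ne_top_of_diam_ne_zero (by omega)
  have hdle : ∀ u v : V, G.dist u v ≤ 3 := fun u v => hdiam ▸ G.dist_le_diam hnetop
  have hdpos : ∀ u v : V, u ≠ v → 0 < G.dist u v := fun u v h => hconn.pos_dist_of_ne h
  have hcardV : Nat.card V = Fintype.card V := Nat.card_eq_fintype_card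
  constructor
  · rintro ⟨f, hlab, hrange⟩
    have hVne : Nonempty V := hconn.nonempty
    set n := Nat.card V with hn
    -- f is injective
    have hfinj : Function.Injective f := by
      intro u v hfe
      by_contra hne
      have h1 := hlab u v hne
      rw [hdiam, hfe] at h1
      have hd := hdle u v
      simp only [sub_self, abs_zero, zero_add] at h1
      have h2 : (G.dist u v : ℤ) ≤ 3 := by exact_mod_cast hd
      push_cast at h1
      omega
    have hex : ∀ i, i < n → ∃ v : V, f v = i + 1 := by
      intro i hi
      have : (i + 1) ∈ Set.Icc 1 n := by constructor <;> omega
      rw [← hrange] at this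
      exact this
    set g : ℕ → V := fun i => if h : i < n then (hex i h).choose else Classical.arbitrary V
      with hg
    have hfg : ∀ i, i < n → f (g i) = i + 1 := by
      intro i hi
      simp only [hg, dif_pos hi]
      exact (hex i hi).choose_spec
    have hnpos : 0 < n := hn ▸ Nat.card_pos
    obtain ⟨m, hm⟩ : ∃ m, n = m + 1 := ⟨n - 1, by omega⟩
    -- adjacency of consecutive
    have hadj : ∀ k, k + 1 < n → (antipodalGraph G).Adj (g k) (g (k + 1)) := by
      intro k hk
      have h1 : f (g k) = k + 1 := hfg k (by omega)
      have h2 : f (g (k+1)) = k + 2 := hfg (k+1) hk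
      have hne : g k ≠ g (k + 1) := by
        intro he; rw [he, h2] at h1; omega
      refine ⟨hne, ?_⟩
      have h3 := hlab _ _ hne
      rw [hdiam, h1, h2] at h3
      have hd := hdle (g k) (g (k+1))
      have habs : |((k:ℤ) + 1) - ((k:ℤ) + 2)| = 1 := by
        rw [show ((k:ℤ) + 1) - ((k:ℤ) + 2) = -1 by ring]; simp
      push_cast at h3
      rw [habs] at h3
      rw [hdiam]
      omega
    -- build the walk
    have hchain2 : List.Chain' (antipodalGraph G).Adj ((List.range n).map g) := by
      unfold List.Chain'
      rw [List.isChain_map, hm]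
      exact (List.isChain_range_succ _ m).2 fun k hk => hadj k (by omega)
    have hLcons : (List.range n).map g
        = g 0 :: ((List.range m).map Nat.succ).map g := by
      rw [hm, List.range_succ_eq_map, List.map_cons]
    rw [hLcons] at hchain2
    obtain ⟨b, p, hp⟩ := walk_of_chain_aux (antipodalGraph G) _ _ hchain2
    have hsupp : p.support = (List.range n).map g := by rw [hp, hLcons]
    refine ⟨_, _, p, ?_, ?_⟩
    · rw [SimpleGraph.Walk.isPath_def, hsupp]
      apply List.Nodup.map_on _ (List.nodup_range (n := n))
      intro x hx y hy hxy
      rw [List.mem_range] at hx hy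
      have h1 := hfg x hx
      rw [hxy, hfg y hy] at h1
      omega
    · intro w
      rw [hsupp]
      have hfw : f w ∈ Set.Icc 1 n := by rw [← hrange]; exact ⟨w, rfl⟩
      obtain ⟨h1, h2⟩ := hfw
      refine List.mem_map.2 ⟨f w - 1, List.mem_range.2 (by omega), ?_⟩
      apply hfinj
      rw [hfg (f w - 1) (by omega)]
      omega
  · rintro ⟨a, b, p, hp, hall⟩
    set s := p.support with hs
    have hnodup : s.Nodup := hp.support_nodup
    have hchain : List.Chain' (antipodalGraph G).Adj s := p.isChain_adj_support
    have hslen : s.length = Nat.card V := by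
      rw [hcardV, ← Finset.card_univ, ← List.toFinset_card_of_nodup hnodup]
      congr 1
      apply Finset.eq_univ_iff_forall.2
      intro w
      rw [List.mem_toFinset]
      exact hall w
    set f : V → ℕ := fun w => s.idxOf w + 1 with hf
    have hidx : ∀ w : V, s.idxOf w < s.length := fun w => List.idxOf_lt_length_iff.2 (hall w)
    -- key step for ordered pairs
    have key : ∀ u v : V, u ≠ v → s.idxOf u < s.idxOf v →
        (4:ℤ) ≤ |(f u : ℤ) - (f v : ℤ)| + (G.dist u v : ℤ) := by
      intro u v hne hlt
      have hiu := hidx u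
      have hiv := hidx v
      have hju : s[s.idxOf u]'hiu = u := List.getElem_idxOf hiu
      have hjv : s[s.idxOf v]'hiv = v := List.getElem_idxOf hiv
      have habs : |(f u : ℤ) - (f v : ℤ)| = (s.idxOf v : ℤ) - s.idxOf u := by
        simp only [hf]
        push_cast
        rw [abs_of_nonpos (by omega)]
        ring
      rw [habs]
      have hdp : 1 ≤ (G.dist u v : ℤ) := by exact_mod_cast hdpos u v hne
      rcases lt_trichotomy (s.idxOf v - s.idxOf u) 2 with hlt2 | heq2 | hgt2
      · -- consecutive : antipodal adjacency
        have hji : s.idxOf u + 1 = s.idxOf v := by omega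
        have hg := List.isChain_iff_getElem.1 hchain (s.idxOf u) (by omega)
        have hv2 : s[s.idxOf u + 1]'(by omega) = v :=
          (getElem_idx_congr s hji (by omega)).trans hjv
        rw [hju, hv2] at hg
        have h3 : G.dist u v = 3 := hdiam ▸ hg.2
        rw [h3]
        push_cast
        omega
      · -- two apart : use bipartiteness
        have hji : s.idxOf u + 2 = s.idxOf v := by omega
        have hg1 := List.isChain_iff_getElem.1 hchain (s.idxOf u) (by omega)
        have hg2 := List.isChain_iff_getElem.1 hchain (s.idxOf u + 1) (by omega)
        have hv2 : s[s.idxOf u + 1 + 1]'(by omega) = v :=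
          (getElem_idx_congr s (by omega : s.idxOf u + 1 + 1 = s.idxOf v)
            (by omega)).trans hjv
        rw [hju] at hg1
        rw [hv2] at hg2
        have hd1 : G.dist u _ = 3 := hdiam ▸ hg1.2
        have hd2 : G.dist _ v = 3 := hdiam ▸ hg2.2
        have hnadj : ¬ G.Adj u v := not_adj_aux hP hd1 hd2
        have hne1 : G.dist u v ≠ 1 := fun h => hnadj ((G.dist_eq_one_iff_adj).1 h)
        have h2le : 2 ≤ (G.dist u v : ℤ) := by
          have h2 : 2 ≤ G.dist u v := by
            have := hdpos u v hne
            omega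
          exact_mod_cast h2
        omega
      · omega
    refine ⟨f, ?_, ?_⟩
    · intro u v hne
      have h34 : ((3:ℕ):ℤ) + 1 = 4 := by norm_num
      rw [hdiam, h34]
      have hine : s.idxOf u ≠ s.idxOf v := by
        intro h
        exact hne ((List.getElem_idxOf (hidx u)).symm.trans
          ((getElem_idx_congr s h (hidx u)).trans (List.getElem_idxOf (hidx v))))
      rcases lt_or_gt_of_ne hine with h | h
      · exact key u v hne h
      · have hk := key v u hne.symm h
        rwa [abs_sub_comm, SimpleGraph.dist_comm] at hk
    · ext y
      simp only [Set.mem_range, Set.mem_Icc]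
      constructor
      · rintro ⟨w, rfl⟩
        have h1 := hidx w
        rw [hslen] at h1
        simp only [hf]
        omega
      · rintro ⟨h1, h2⟩
        have hy : y - 1 < s.length := by rw [hslen]; omega
        refine ⟨s[y-1]'hy, ?_⟩
        simp only [hf]
        rw [List.Nodup.idxOf_getElem hnodup]
        omega
end

section
/- Let n and r be integers with 1 < r < n/2, and let G be a finite connected r-regular bipartite simple graph on 2n vertices with diameter 3. Then G is radio graceful. -/
open SimpleGraph

section RadioAux

open Finset

set_option linter.unusedSectionVars false

variable {V : Type*} [Fintype V]

variable {V : Type*} [Fintype V]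

private lemma rg_alternation (H : SimpleGraph V) (B : Finset V)
    (hbip : ∀ u v, H.Adj u v → (u ∈ B ↔ v ∉ B))
    (l : List V) (hch : l.IsChain H.Adj)
    (hh : ∀ h0 : 0 < l.length, l[0] ∈ B) :
    ∀ i, (hi : i < l.length) → (l[i] ∈ B ↔ Even i) := by
  intro i
  induction i with
  | zero => intro hi; simpa using hh hi
  | succ m ih =>
    intro hi
    have hm : m < l.length := by omega
    have hadj : H.Adj l[m] l[m + 1] := by
      have := List.isChain_iff_getElem.mp hch m (by omega)
      simpa using this
    have h1 := hbip _ _ hadj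
    have h2 := ih hm
    have h3 : Even (m + 1) ↔ ¬ Even m := by simp [Nat.even_add_one]
    rw [h3]
    tauto

private lemma rg_caseA (H : SimpleGraph V) (B : Finset V) (n : ℕ)
    (hbip : ∀ u v, H.Adj u v → (u ∈ B ↔ v ∉ B)) (hB : B.card = n)
    (hdeg : ∀ v : V, ∃ N : Finset V, (∀ x, x ∈ N ↔ H.Adj v x) ∧ n < 2 * N.card)
    (l : List V) (hl : l ≠ []) (hnd : l.Nodup) (hch : l.IsChain H.Adj)
    (hmax : ∀ l' : List V, l'.Nodup → l'.IsChain H.Adj → l'.length ≤ l.length)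
    (w : V) (hwl : w ∉ l) (hh : l.head hl ∈ B) (hwB : w ∉ B) : False := by
  classical
  have hk0 : 0 < l.length := List.length_pos_iff.mpr hl
  have hhead0 : l[0] = l.head hl := by
    cases l with
    | nil => exact absurd rfl hl
    | cons a t => rfl
  have hheadmem : l.head hl ∈ l := List.head_mem hl
  have hheadidx : l.idxOf (l.head hl) = 0 := by
    cases l with
    | nil => exact absurd rfl hl
    | cons a t => exact List.idxOf_cons_self
  -- extension at the head is impossible
  have hext : ∀ v, v ∉ l → ¬ H.Adj v (l.head hl) := by
    intro v hv hadj
    have hch' : (v :: l).IsChain H.Adj := by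
      rw [List.isChain_cons]
      refine ⟨?_, hch⟩
      intro y hy
      rw [List.head?_eq_head hl] at hy
      simp only [Option.mem_some_iff] at hy
      subst hy
      exact hadj
    have := hmax (v :: l) (List.nodup_cons.mpr ⟨hv, hnd⟩) hch'
    simp at this
  have hNH : ∀ v, H.Adj (l.head hl) v → v ∈ l := by
    intro v hadj
    by_contra hv
    exact hext v hv (hadj.symm)
  have hwh : ¬ H.Adj w (l.head hl) := hext w hwl
  have halt : ∀ i, (hi : i < l.length) → (l[i] ∈ B ↔ Even i) :=
    rg_alternation H B hbip l hch (fun _ => hhead0 ▸ hh)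
  obtain ⟨Nw, hNw, hNwcard⟩ := hdeg w
  obtain ⟨N0, hN0, hN0card⟩ := hdeg (l.head hl)
  set d : V := l.head hl with hd
  set gi : ℕ → V := fun i => l.getD i d with hgi
  have hgieq : ∀ i (hi : i < l.length), gi i = l[i] := by
    intro i hi
    simp only [hgi]
    exact List.getD_eq_getElem l d hi
  set W : Finset ℕ := (Finset.range l.length).filter (fun i => H.Adj w (gi i)) with hWdef
  set X : Finset ℕ := (Finset.range l.length).filter
    (fun i => i + 1 < l.length ∧ H.Adj d (gi (i + 1))) with hXdef
  set E : Finset ℕ := (Finset.range l.length).filter (fun i => Even i) with hEdef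
  have hWE : W ⊆ E := by
    intro i hi
    simp only [hWdef, hEdef, Finset.mem_filter, Finset.mem_range] at hi ⊢
    obtain ⟨hik, hadj⟩ := hi
    rw [hgieq i hik] at hadj
    have h1 := hbip _ _ hadj
    have h2 := halt i hik
    refine ⟨hik, ?_⟩
    tauto
  have hXE : X ⊆ E := by
    intro i hi
    simp only [hXdef, hEdef, Finset.mem_filter, Finset.mem_range] at hi ⊢
    obtain ⟨hik, hik1, hadj⟩ := hi
    rw [hgieq _ hik1] at hadj
    have h1 := hbip _ _ hadj
    have h2 := halt (i + 1) hik1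
    have h3 : Even (i + 1) ↔ ¬ Even i := by simp [Nat.even_add_one]
    have hdB : d ∈ B := hh
    refine ⟨hik, ?_⟩
    tauto
  have hEB : E.card = (l.toFinset ∩ B).card := by
    apply Finset.card_bij (fun i _ => gi i)
    · intro i hi
      simp only [hEdef, Finset.mem_filter, Finset.mem_range] at hi
      obtain ⟨hik, hev⟩ := hi
      rw [hgieq i hik]
      exact Finset.mem_inter.mpr ⟨List.mem_toFinset.mpr (l.getElem_mem hik),
        (halt i hik).mpr hev⟩
    · intro i hi j hj hij
      simp only [hEdef, Finset.mem_filter, Finset.mem_range] at hi hj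
      rw [hgieq i hi.1, hgieq j hj.1] at hij
      exact (hnd.getElem_inj_iff).mp hij
    · intro v hv
      obtain ⟨hvl, hvB⟩ := Finset.mem_inter.mp hv
      have hvl' := List.mem_toFinset.mp hvl
      have hidx : l.idxOf v < l.length := List.idxOf_lt_length_iff.2 hvl'
      have hget : l[l.idxOf v] = v := List.getElem_idxOf hidx
      refine ⟨l.idxOf v, ?_, by rw [hgieq _ hidx, hget]⟩
      simp only [hEdef, Finset.mem_filter, Finset.mem_range]
      exact ⟨hidx, (halt _ hidx).mp (by rw [hget]; exact hvB)⟩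
  have heB : (l.toFinset ∩ B).card ≤ n := hB ▸ Finset.card_le_card Finset.inter_subset_right
  have hNwB : Nw ⊆ B := by
    intro x hx
    have hadj := (hNw x).mp hx
    have := hbip _ _ hadj
    tauto
  have hNwsplit : Nw ⊆ (B \ (l.toFinset ∩ B)) ∪ (Nw.filter (· ∈ l)) := by
    intro x hx
    rcases em (x ∈ l) with hxl | hxl
    · exact Finset.mem_union_right _ (Finset.mem_filter.mpr ⟨hx, hxl⟩)
    · refine Finset.mem_union_left _ (Finset.mem_sdiff.mpr ⟨hNwB hx, ?_⟩)
      intro hmem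
      exact hxl (List.mem_toFinset.mp (Finset.mem_inter.mp hmem).1)
  have hWlb : (Nw.filter (· ∈ l)).card ≤ W.card := by
    apply Finset.card_le_card_of_injOn (fun v => l.idxOf v)
    · intro v hv
      obtain ⟨hvN, hvl⟩ := Finset.mem_filter.mp hv
      have hidx : l.idxOf v < l.length := List.idxOf_lt_length_iff.2 hvl
      have hget : l[l.idxOf v] = v := List.getElem_idxOf hidx
      simp only [hWdef, Finset.mem_coe, Finset.mem_filter, Finset.mem_range]
      exact ⟨hidx, by rw [hgieq _ hidx, hget]; exact (hNw v).mp hvN⟩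
    · intro a ha b hb hab
      simp only at hab
      have hal := (Finset.mem_filter.mp (Finset.mem_coe.mp ha)).2
      have hbl := (Finset.mem_filter.mp (Finset.mem_coe.mp hb)).2
      exact (List.idxOf_inj hal).mp hab
  have hWcard : Nw.card ≤ (n - (l.toFinset ∩ B).card) + W.card := by
    calc Nw.card ≤ ((B \ (l.toFinset ∩ B)) ∪ (Nw.filter (· ∈ l))).card :=
          Finset.card_le_card hNwsplit
      _ ≤ (B \ (l.toFinset ∩ B)).card + (Nw.filter (· ∈ l)).card := Finset.card_union_le _ _
      _ ≤ (n - (l.toFinset ∩ B).card) + W.card := by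
          rw [Finset.card_sdiff_of_subset Finset.inter_subset_right, hB]
          omega
  have hXlb : N0.card ≤ X.card := by
    apply Finset.card_le_card_of_injOn (fun v => l.idxOf v - 1)
    · intro v hv
      have hadj : H.Adj d v := (hN0 v).mp hv
      have hvl : v ∈ l := hNH v hadj
      have hidx : l.idxOf v < l.length := List.idxOf_lt_length_iff.2 hvl
      have hget : l[l.idxOf v] = v := List.getElem_idxOf hidx
      have hidx0 : l.idxOf v ≠ 0 := by
        intro h0
        have : v = d := (List.idxOf_inj hvl).mp (by rw [h0, hheadidx])
        subst this
        exact H.irrefl hadj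
      simp only [hXdef, Finset.mem_coe, Finset.mem_filter, Finset.mem_range]
      have h1 : l.idxOf v - 1 + 1 = l.idxOf v := by omega
      refine ⟨by omega, by rw [h1]; exact hidx, ?_⟩
      rw [h1, hgieq _ hidx, hget]
      exact hadj
    · intro a ha b hb hab
      simp only at hab
      have haa : H.Adj d a := (hN0 a).mp (Finset.mem_coe.mp ha)
      have hbb : H.Adj d b := (hN0 b).mp (Finset.mem_coe.mp hb)
      have hal : a ∈ l := hNH a haa
      have hbl : b ∈ l := hNH b hbb
      have ha0 : l.idxOf a ≠ 0 := by
        intro h0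
        have : a = d := (List.idxOf_inj hal).mp (by rw [h0, hheadidx])
        subst this
        exact H.irrefl haa
      have hb0 : l.idxOf b ≠ 0 := by
        intro h0
        have : b = d := (List.idxOf_inj hbl).mp (by rw [h0, hheadidx])
        subst this
        exact H.irrefl hbb
      have : l.idxOf a = l.idxOf b := by omega
      exact (List.idxOf_inj hal).mp this
  have hunion : (W ∪ X).card ≤ E.card :=
    Finset.card_le_card (Finset.union_subset hWE hXE)
  have hWX : 0 < (W ∩ X).card := by
    have h1 := Finset.card_union_add_card_inter W X
    omega
  obtain ⟨i, hiWX⟩ := Finset.card_pos.mp hWX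
  obtain ⟨hiW, hiX⟩ := Finset.mem_inter.mp hiWX
  simp only [hWdef, Finset.mem_filter, Finset.mem_range] at hiW
  simp only [hXdef, Finset.mem_filter, Finset.mem_range] at hiX
  obtain ⟨hik, hwi⟩ := hiW
  obtain ⟨-, hik1, h0i⟩ := hiX
  -- construct a longer path
  set l₂ : List V := w :: ((l.take (i + 1)).reverse ++ l.drop (i + 1)) with hl₂
  have hperm : ((l.take (i + 1)).reverse ++ l.drop (i + 1)).Perm l := by
    have h1 := (l.take (i + 1)).reverse_perm.append_right (l.drop (i + 1))
    rwa [List.take_append_drop] at h1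
  have hl₂nd : l₂.Nodup := by
    rw [hl₂, List.nodup_cons]
    exact ⟨fun hmem => hwl (hperm.mem_iff.mp hmem), hperm.nodup_iff.mpr hnd⟩
  have htklen : (l.take (i + 1)).length = i + 1 := by
    rw [List.length_take]; omega
  have hl₂ch : l₂.IsChain H.Adj := by
    rw [hl₂, List.isChain_cons]
    constructor
    · intro y hy
      rw [List.head?_append] at hy
      have hrev : (l.take (i + 1)).reverse.head? = some l[i] := by
        rw [List.head?_reverse, List.getLast?_eq_getElem?, htklen]
        simp only [Nat.add_sub_cancel]
        rw [List.getElem?_take_of_lt (by omega)]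
        exact List.getElem?_eq_getElem hik
      rw [hrev] at hy
      simp only [Option.some_or, Option.mem_some_iff] at hy
      subst hy
      rw [hgieq i hik] at hwi
      exact hwi
    · rw [List.isChain_append]
      refine ⟨?_, hch.drop _, ?_⟩
      · rw [List.isChain_reverse]
        exact (hch.take _).imp fun a b h => h.symm
      · intro x hx y hy
        rw [List.getLast?_reverse] at hx
        have hhtk : (l.take (i + 1)).head? = some d := by
          cases l with
          | nil => exact absurd rfl hl
          | cons a t => simp [hd]
        rw [hhtk] at hx
        simp only [Option.mem_some_iff] at hx
        subst hx
        rw [List.drop_eq_getElem_cons hik1] at hy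
        simp only [List.head?_cons, Option.mem_some_iff] at hy
        subst hy
        rw [hgieq _ hik1] at h0i
        exact h0i
  have hlen2 : l₂.length = l.length + 1 := by
    rw [hl₂]
    simp only [List.length_cons, hperm.length_eq]
  have := hmax l₂ hl₂nd hl₂ch
  omega

private lemma rg_ham [Nonempty V] [DecidableEq V] (H : SimpleGraph V) (B0 : Finset V) (n : ℕ)
    (hbip : ∀ u v, H.Adj u v → (u ∈ B0 ↔ v ∉ B0))
    (hB0 : B0.card = n) (hB0c : B0ᶜ.card = n)
    (hdeg : ∀ v : V, ∃ N : Finset V, (∀ x, x ∈ N ↔ H.Adj v x) ∧ n < 2 * N.card) :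
    ∃ l : List V, l.Nodup ∧ l.IsChain H.Adj ∧ ∀ v, v ∈ l := by
  classical
  set S : Set ℕ := {m | ∃ l : List V, l.Nodup ∧ l.IsChain H.Adj ∧ l.length = m} with hS
  have hSne : S.Nonempty := ⟨1, [Classical.arbitrary V], by simp, by simp, rfl⟩
  have hSbdd : BddAbove S := by
    refine ⟨Fintype.card V, ?_⟩
    rintro m ⟨l, hnd, -, hlen⟩
    exact hlen ▸ hnd.length_le_card
  obtain ⟨l, hnd, hch, hlen⟩ := Nat.sSup_mem hSne hSbdd
  refine ⟨l, hnd, hch, ?_⟩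
  by_contra hcov
  push_neg at hcov
  obtain ⟨v0, hv0⟩ := hcov
  have hmax : ∀ l' : List V, l'.Nodup → l'.IsChain H.Adj → l'.length ≤ l.length :=
    fun l' h1 h2 => hlen ▸ le_csSup hSbdd ⟨l', h1, h2, rfl⟩
  have hl : l ≠ [] := by
    intro h
    have := hmax [v0] (by simp) (by simp)
    rw [h] at this
    simp at this
  set Q : Finset V := if l.head hl ∈ B0 then B0 else B0ᶜ with hQ
  have hQbip : ∀ u v, H.Adj u v → (u ∈ Q ↔ v ∉ Q) := by
    intro u v h
    rw [hQ]
    have := hbip u v h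
    split <;> [skip; simp only [Finset.mem_compl]] <;> tauto
  have hQcard : Q.card = n := by
    rw [hQ]; split
    · exact hB0
    · exact hB0c
  have hQccard : Qᶜ.card = n := by
    rw [hQ]; split
    · exact hB0c
    · rw [compl_compl]; exact hB0
  have hhQ : l.head hl ∈ Q := by
    rw [hQ]; split
    · assumption
    · simp only [Finset.mem_compl]; assumption
  by_cases hoff : ∃ w, w ∉ l ∧ w ∉ Q
  · obtain ⟨w, hw1, hw2⟩ := hoff
    exact rg_caseA H Q n hQbip hQcard hdeg l hl hnd hch hmax w hw1 hhQ hw2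
  · push_neg at hoff
    have hk0 : 0 < l.length := List.length_pos_iff.mpr hl
    have hhead0 : l[0] = l.head hl := by
      cases l with
      | nil => exact absurd rfl hl
      | cons a t => rfl
    have halt : ∀ i, (hi : i < l.length) → (l[i] ∈ Q ↔ Even i) :=
      rg_alternation H Q hQbip l hch (fun _ => hhead0 ▸ hhQ)
    set O : Finset ℕ := (Finset.range l.length).filter (fun i => ¬ Even i) with hO
    set E : Finset ℕ := (Finset.range l.length).filter (fun i => Even i) with hE
    have hQcO : Qᶜ.card ≤ O.card := by
      apply Finset.card_le_card_of_injOn (fun v => l.idxOf v)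
      · intro v hv
        have hvQ : v ∉ Q := Finset.mem_compl.mp hv
        have hvl : v ∈ l := by
          by_contra hvl
          exact hvQ (hoff v hvl)
        have hidx : l.idxOf v < l.length := List.idxOf_lt_length_iff.2 hvl
        have hget : l[l.idxOf v] = v := List.getElem_idxOf hidx
        simp only [hO, Finset.mem_coe, Finset.mem_filter, Finset.mem_range]
        refine ⟨hidx, fun hev => hvQ ?_⟩
        rw [← hget]
        exact (halt _ hidx).mpr hev
      · intro a ha b hb hab
        simp only at hab
        have hal : a ∈ l := by
          by_contra h
          exact (Finset.mem_compl.mp (Finset.mem_coe.mp ha)) (hoff a h)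
        have hbl : b ∈ l := by
          by_contra h
          exact (Finset.mem_compl.mp (Finset.mem_coe.mp hb)) (hoff b h)
        exact (List.idxOf_inj hal).mp hab
    have hOE : O.card ≤ E.card := by
      apply Finset.card_le_card_of_injOn (fun i => i - 1)
      · intro i hi
        simp only [hO, hE, Finset.mem_coe, Finset.mem_filter, Finset.mem_range, Nat.even_iff] at hi ⊢
        omega
      · intro a ha b hb hab
        simp only [hO, Finset.mem_coe, Finset.mem_filter, Finset.mem_range, Nat.even_iff] at ha hb
        simp only at hab
        omega
    have hEO : E.card + O.card = l.length := by
      rw [hE, hO]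
      rw [Finset.card_filter_add_card_filter_not]
      exact Finset.card_range _
    have hk2n : l.length ≤ Fintype.card V := hnd.length_le_card
    have hcV : Fintype.card V = 2 * n := by
      have := Finset.card_add_card_compl Q
      omega
    have hkk : l.length = 2 * n := by omega
    have huniv : l.toFinset = Finset.univ := by
      apply Finset.eq_univ_of_card
      rw [List.toFinset_card_of_nodup hnd]
      omega
    apply hv0
    rw [← List.mem_toFinset, huniv]
    exact Finset.mem_univ v0


end RadioAux

set_option maxHeartbeats 1600000 in
theorem radioGraceful_of_regular_bipartite_diam_three
    {V : Type*} [Fintype V] (G : SimpleGraph V) [DecidableRel G.Adj]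
    (n r : ℕ) (hr1 : 1 < r) (hr2 : 2 * r < n)
    (hconn : G.Connected) (hbip : Bipartite G)
    (hreg : G.IsRegularOfDegree r)
    (hcard : Fintype.card V = 2 * n) (hdiam : G.diam = 3) :
    RadioGraceful G := by
  classical
  obtain ⟨P, hP⟩ := hbip
  have hVpos : 0 < Fintype.card V := by omega
  have : Nonempty V := Fintype.card_pos_iff.mp hVpos
  set A : Finset V := Finset.univ.filter (· ∈ P) with hA
  have hAmem : ∀ v, v ∈ A ↔ v ∈ P := by
    intro v; simp [hA]
  have hAbip : ∀ u v, G.Adj u v → (u ∈ A ↔ v ∉ A) := by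
    intro u v h
    rw [hAmem, hAmem]
    exact hP u v h
  -- the two parts have equal size n
  have hdegsum : ∀ C : Finset V, (∀ u v, G.Adj u v → (u ∈ C ↔ v ∉ C)) →
      ∑ u ∈ C, G.degree u = ∑ v ∈ Cᶜ, G.degree v := by
    intro C hC
    have h1 : ∀ u : V, G.degree u = ∑ v : V, if G.Adj u v then 1 else 0 := by
      intro u
      rw [← SimpleGraph.card_neighborFinset_eq_degree, neighborFinset_eq_filter,
        Finset.card_filter]
    calc ∑ u ∈ C, G.degree u = ∑ u ∈ C, ∑ v : V, if G.Adj u v then 1 else 0 := by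
          exact Finset.sum_congr rfl fun u _ => h1 u
      _ = ∑ v : V, ∑ u ∈ C, if G.Adj u v then 1 else 0 := Finset.sum_comm
      _ = ∑ v : V, (C.filter (fun u => G.Adj u v)).card := by
          exact Finset.sum_congr rfl fun v _ => (Finset.card_filter _ _).symm
      _ = ∑ v ∈ Cᶜ, (C.filter (fun u => G.Adj u v)).card := by
          rw [← Finset.sum_add_sum_compl C]
          have hz : ∑ v ∈ C, (C.filter (fun u => G.Adj u v)).card = 0 := by
            apply Finset.sum_eq_zero
            intro v hv
            rw [Finset.card_eq_zero, Finset.filter_eq_empty_iff]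
            intro u hu hadj
            exact ((hC u v hadj).mp hu) hv
          omega
      _ = ∑ v ∈ Cᶜ, G.degree v := by
          apply Finset.sum_congr rfl
          intro v hv
          have hvC : v ∉ C := Finset.mem_compl.mp hv
          have : C.filter (fun u => G.Adj u v) = G.neighborFinset v := by
            ext u
            simp only [Finset.mem_filter, mem_neighborFinset]
            constructor
            · rintro ⟨-, h⟩; exact h.symm
            · intro h
              refine ⟨?_, h.symm⟩
              have := hC v u h
              tauto
          rw [this]
          exact SimpleGraph.card_neighborFinset_eq_degree _ _
  have hsum := hdegsum A hAbip
  rw [Finset.sum_congr rfl (fun u _ => hreg u), Finset.sum_congr rfl (fun u _ => hreg u),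
    Finset.sum_const, Finset.sum_const, smul_eq_mul, smul_eq_mul] at hsum
  have hcompl : A.card + Aᶜ.card = 2 * n := by
    rw [Finset.card_add_card_compl]; exact hcard
  have hAcardeq : A.card = Aᶜ.card := by
    have : A.card * r = Aᶜ.card * r := hsum
    have hr0 : 0 < r := by omega
    exact Nat.eq_of_mul_eq_mul_right hr0 this
  have hAcard : A.card = n := by omega
  have hAccard : Aᶜ.card = n := by omega
  -- parity of walks
  have hwalkpar : ∀ (u x : V) (p : G.Walk u x), Even p.length ↔ (u ∈ P ↔ x ∈ P) := by
    intro u x p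
    induction p with
    | nil => simp
    | @cons a b c h q ih =>
      have hab := hP a b h
      simp only [SimpleGraph.Walk.length_cons, Nat.even_add_one, ih]
      tauto
  -- distance facts
  have hne_top : G.ediam ≠ ⊤ := by
    apply SimpleGraph.ediam_ne_top_of_diam_ne_zero
    rw [hdiam]; omega
  have hdle : ∀ u v : V, G.dist u v ≤ 3 := by
    intro u v
    have := SimpleGraph.dist_le_diam hne_top (u := u) (v := v)
    omega
  have hdpos : ∀ u v : V, u ≠ v → 0 < G.dist u v := fun u v h => hconn.pos_dist_of_ne h
  have hpar : ∀ u v : V, Even (G.dist u v) ↔ (u ∈ P ↔ v ∈ P) := by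
    intro u v
    obtain ⟨p, hp⟩ := hconn.exists_walk_length_eq_dist u v
    rw [← hp]
    exact hwalkpar u v p
  have hdist2 : ∀ u v : V, u ≠ v → (u ∈ P ↔ v ∈ P) → G.dist u v = 2 := by
    intro u v h1 h2
    have he := (hpar u v).mpr h2
    have h3 := hdle u v
    have h4 := hdpos u v h1
    rw [Nat.even_iff] at he
    omega
  have hdist3 : ∀ u v : V, ¬ G.Adj u v → ¬(u ∈ P ↔ v ∈ P) → G.dist u v = 3 := by
    intro u v h1 h2
    have hne : u ≠ v := by rintro rfl; exact h2 Iff.rfl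
    have hodd : ¬ Even (G.dist u v) := fun he => h2 ((hpar u v).mp he)
    have h1' : G.dist u v ≠ 1 := fun h => h1 (SimpleGraph.dist_eq_one_iff_adj.mp h)
    have h3 := hdle u v
    have h4 := hdpos u v hne
    rw [Nat.even_iff] at hodd
    omega
  -- the complement-between-parts graph
  have hsymm : Symmetric (fun u v => (u ∈ A ↔ v ∉ A) ∧ ¬ G.Adj u v) := by
    rintro u v ⟨h1, h2⟩
    exact ⟨by tauto, fun h => h2 h.symm⟩
  have hloop : Irreflexive (fun u v => (u ∈ A ↔ v ∉ A) ∧ ¬ G.Adj u v) := by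
    rintro v ⟨h1, -⟩
    tauto
  set H : SimpleGraph V := ⟨(fun u v => (u ∈ A ↔ v ∉ A) ∧ ¬ G.Adj u v), ⟨hsymm⟩, ⟨hloop⟩⟩ with hH
  have hHadj : ∀ u v, H.Adj u v ↔ ((u ∈ A ↔ v ∉ A) ∧ ¬ G.Adj u v) := fun u v => Iff.rfl
  have hHbip : ∀ u v, H.Adj u v → (u ∈ A ↔ v ∉ A) := fun u v h => h.1
  have hHdeg : ∀ v : V, ∃ N : Finset V, (∀ x, x ∈ N ↔ H.Adj v x) ∧ n < 2 * N.card := by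
    intro v
    have hnfA : G.neighborFinset v ⊆ (if v ∈ A then Aᶜ else A) := by
      intro x hx
      rw [SimpleGraph.mem_neighborFinset] at hx
      have := hAbip v x hx
      split <;> [rw [Finset.mem_compl]; skip] <;> tauto
    refine ⟨(if v ∈ A then Aᶜ else A) \ G.neighborFinset v, ?_, ?_⟩
    · intro x
      rw [Finset.mem_sdiff, hHadj, SimpleGraph.mem_neighborFinset]
      by_cases hv : v ∈ A <;>
        simp only [hv, if_true, if_false, Finset.mem_compl] <;> tauto
    · rw [Finset.card_sdiff_of_subset hnfA, SimpleGraph.card_neighborFinset_eq_degree, hreg v]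
      split <;> [rw [hAccard]; rw [hAcard]] <;> omega
  obtain ⟨l, hnd, hch, hcov⟩ := rg_ham H A n hHbip hAcard hAccard hHdeg
  -- basic facts about l
  have hlenV : l.length = Fintype.card V := by
    have h1 : l.toFinset = Finset.univ := Finset.eq_univ_of_forall
      (fun v => List.mem_toFinset.mpr (hcov v))
    have h2 := List.toFinset_card_of_nodup hnd
    rw [h1] at h2
    rw [← h2, Finset.card_univ]
  have hlen2n : l.length = 2 * n := by rw [hlenV, hcard]
  set d : V := Classical.arbitrary V with hd
  set x : ℕ → V := fun i => l.getD i d with hx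
  have hxeq : ∀ i (hi : i < l.length), x i = l[i] := by
    intro i hi
    simp only [hx]
    exact List.getD_eq_getElem l d hi
  have hchadj : ∀ i (hi : i + 1 < l.length), H.Adj (x i) (x (i + 1)) := by
    intro i hi
    rw [hxeq i (by omega), hxeq (i + 1) hi]
    have := List.isChain_iff_getElem.mp hch i (by omega)
    simpa using this
  have hxne : ∀ a b, a < l.length → b < l.length → a ≠ b → x a ≠ x b := by
    intro a b ha hb hab
    rw [hxeq a ha, hxeq b hb]
    intro h
    exact hab ((hnd.getElem_inj_iff).mp h)
  -- key distance estimate along the ordering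
  have key : ∀ a b : ℕ, a < b → b < l.length → (4 : ℤ) ≤ ((b : ℤ) - a) + G.dist (x a) (x b) := by
    intro a b hab hb
    have hane : x a ≠ x b := hxne a b (by omega) hb (by omega)
    rcases Nat.lt_or_ge b (a + 3) with hlt | hge
    · rcases Nat.lt_or_ge b (a + 2) with hlt1 | hge2
      · -- b = a + 1
        have hb1 : b = a + 1 := by omega
        subst hb1
        have hadj := hchadj a hb
        have h3 : G.dist (x a) (x (a + 1)) = 3 := by
          apply hdist3
          · exact hadj.2
          · intro hiff
            have h1 := hadj.1
            rw [hAmem, hAmem] at h1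
            tauto
        rw [h3]
        push_cast
        omega
      · -- b = a + 2
        have hb2 : b = a + 2 := by omega
        subst hb2
        have hadj1 := hchadj a (by omega)
        have hadj2 := hchadj (a + 1) hb
        have h2 : G.dist (x a) (x (a + 2)) = 2 := by
          apply hdist2 _ _ hane
          have h1 := hadj1.1
          have h2 := hadj2.1
          have h2' : x (a + 1) ∈ A ↔ x (a + 2) ∉ A := h2
          simp only [hAmem] at h1 h2'
          tauto
        rw [h2]
        push_cast
        omega
    · have := hdpos _ _ hane
      have : (1 : ℤ) ≤ G.dist (x a) (x b) := by exact_mod_cast this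
      omega
  -- the labeling
  refine ⟨fun v => l.idxOf v + 1, ?_, ?_⟩
  · intro u v huv
    have hul : u ∈ l := hcov u
    have hvl : v ∈ l := hcov v
    have hui : l.idxOf u < l.length := List.idxOf_lt_length_iff.2 hul
    have hvi : l.idxOf v < l.length := List.idxOf_lt_length_iff.2 hvl
    have hxu : x (l.idxOf u) = u := by
      rw [hxeq _ hui]; exact List.getElem_idxOf hui
    have hxv : x (l.idxOf v) = v := by
      rw [hxeq _ hvi]; exact List.getElem_idxOf hvi
    have hine : l.idxOf u ≠ l.idxOf v := by
      intro h
      exact huv ((List.idxOf_inj hul).mp h)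
    rw [hdiam]
    rcases Nat.lt_or_ge (l.idxOf u) (l.idxOf v) with h | h
    · have := key (l.idxOf u) (l.idxOf v) h hvi
      rw [hxu, hxv] at this
      have habs : |((l.idxOf u : ℤ) + 1) - ((l.idxOf v : ℤ) + 1)| =
          (l.idxOf v : ℤ) - (l.idxOf u : ℤ) := by
        rw [abs_of_nonpos (by omega)]
        omega
      push_cast
      push_cast at habs
      rw [habs]
      omega
    · have hlt : l.idxOf v < l.idxOf u := by omega
      have := key (l.idxOf v) (l.idxOf u) hlt hui
      rw [hxu, hxv, G.dist_comm] at this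
      have habs : |((l.idxOf u : ℤ) + 1) - ((l.idxOf v : ℤ) + 1)| =
          (l.idxOf u : ℤ) - (l.idxOf v : ℤ) := by
        rw [abs_of_nonneg (by omega)]
        omega
      push_cast
      push_cast at habs
      rw [habs]
      omega
  · ext m
    simp only [Set.mem_range, Set.mem_Icc, Nat.card_eq_fintype_card, hcard]
    constructor
    · rintro ⟨v, rfl⟩
      have := List.idxOf_lt_length_iff.2 (hcov v)
      omega
    · rintro ⟨h1, h2⟩
      have hm : m - 1 < l.length := by omega
      refine ⟨l[m - 1], ?_⟩
      rw [List.Nodup.idxOf_getElem hnd]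
      omega
end

section
/- Let n and r be integers with n/2 < r < n, and let G be a finite r-regular bipartite simple graph on 2n vertices. Then G has diameter 3. -/
open SimpleGraph Finset

theorem diam_eq_three_of_regular_bipartite
    {V : Type*} [Fintype V] (G : SimpleGraph V) [DecidableRel G.Adj]
    (n r : ℕ) (hr1 : n < 2 * r) (hr2 : r < n)
    (hbip : Bipartite G) (hreg : G.IsRegularOfDegree r)
    (hcard : Fintype.card V = 2 * n) :
    G.diam = 3 := by
  classical
  obtain ⟨P, hP⟩ := hbip
  set A : Finset V := univ.filter (· ∈ P) with hA
  set B : Finset V := univ.filter (· ∉ P) with hB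
  have hrpos : 0 < r := by omega
  have hdeg : ∀ v : V, (G.neighborFinset v).card = r := hreg
  -- neighbors of A-vertices lie in B and vice versa
  have hNA : ∀ u ∈ A, G.neighborFinset u ⊆ B := by
    intro u hu v hv
    rw [mem_neighborFinset] at hv
    simp only [hA, hB, mem_filter, mem_univ, true_and] at hu ⊢
    exact (hP u v hv).mp hu
  have hNB : ∀ u ∈ B, G.neighborFinset u ⊆ A := by
    intro u hu v hv
    rw [mem_neighborFinset] at hv
    simp only [hA, hB, mem_filter, mem_univ, true_and] at hu ⊢
    exact (hP v u hv.symm).mpr hu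
  -- cardinalities
  have hsum : A.card + B.card = 2 * n := by
    rw [hA, hB, card_filter_add_card_filter_not, ← hcard, Finset.card_univ]
  have hsum2 : r * A.card = r * B.card := by
    have h1 : ∀ u ∈ A, (G.neighborFinset u).card = ∑ v ∈ B, (if G.Adj u v then 1 else 0) := by
      intro u hu
      rw [← Finset.sum_filter, Finset.sum_const, smul_eq_mul, mul_one]
      congr 1
      apply Finset.Subset.antisymm
      · intro v hv; exact mem_filter.mpr ⟨hNA u hu hv, by rwa [mem_neighborFinset] at hv⟩
      · intro v hv; rw [mem_neighborFinset]; exact (mem_filter.mp hv).2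
    have h2 : ∀ u ∈ B, (G.neighborFinset u).card = ∑ v ∈ A, (if G.Adj u v then 1 else 0) := by
      intro u hu
      rw [← Finset.sum_filter, Finset.sum_const, smul_eq_mul, mul_one]
      congr 1
      apply Finset.Subset.antisymm
      · intro v hv; exact mem_filter.mpr ⟨hNB u hu hv, by rwa [mem_neighborFinset] at hv⟩
      · intro v hv; rw [mem_neighborFinset]; exact (mem_filter.mp hv).2
    calc r * A.card = ∑ u ∈ A, (G.neighborFinset u).card := by
          rw [Finset.sum_congr rfl (fun u _ => hdeg u), Finset.sum_const, smul_eq_mul, mul_comm]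
      _ = ∑ u ∈ A, ∑ v ∈ B, (if G.Adj u v then 1 else 0) := Finset.sum_congr rfl h1
      _ = ∑ v ∈ B, ∑ u ∈ A, (if G.Adj u v then 1 else 0) := Finset.sum_comm
      _ = ∑ v ∈ B, ∑ u ∈ A, (if G.Adj v u then 1 else 0) := by
          apply Finset.sum_congr rfl; intro v _; apply Finset.sum_congr rfl; intro u _
          simp [SimpleGraph.adj_comm]
      _ = ∑ u ∈ B, (G.neighborFinset u).card := (Finset.sum_congr rfl h2).symm
      _ = r * B.card := by
          rw [Finset.sum_congr rfl (fun u _ => hdeg u), Finset.sum_const, smul_eq_mul, mul_comm]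
  have hcardsAB : A.card = B.card := Nat.eq_of_mul_eq_mul_left hrpos hsum2
  have hAn : A.card = n := by omega
  have hBn : B.card = n := by omega
  -- common neighbor for two vertices in the same part
  have hcommonA : ∀ u ∈ A, ∀ v ∈ A, ∃ w, G.Adj u w ∧ G.Adj v w := by
    intro u hu v hv
    have hsub : G.neighborFinset u ∪ G.neighborFinset v ⊆ B := union_subset (hNA u hu) (hNA v hv)
    have hle := card_le_card hsub
    have := Finset.card_inter_add_card_union (G.neighborFinset u) (G.neighborFinset v)
    rw [hdeg u, hdeg v] at this
    have hpos : 0 < (G.neighborFinset u ∩ G.neighborFinset v).card := by omega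
    obtain ⟨w, hw⟩ := Finset.card_pos.mp hpos
    rw [Finset.mem_inter, mem_neighborFinset, mem_neighborFinset] at hw
    exact ⟨w, hw⟩
  have hcommonB : ∀ u ∈ B, ∀ v ∈ B, ∃ w, G.Adj u w ∧ G.Adj v w := by
    intro u hu v hv
    have hsub : G.neighborFinset u ∪ G.neighborFinset v ⊆ A := union_subset (hNB u hu) (hNB v hv)
    have hle := card_le_card hsub
    have := Finset.card_inter_add_card_union (G.neighborFinset u) (G.neighborFinset v)
    rw [hdeg u, hdeg v] at this
    have hpos : 0 < (G.neighborFinset u ∩ G.neighborFinset v).card := by omega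
    obtain ⟨w, hw⟩ := Finset.card_pos.mp hpos
    rw [Finset.mem_inter, mem_neighborFinset, mem_neighborFinset] at hw
    exact ⟨w, hw⟩
  have hmemAB : ∀ v : V, v ∈ A ∨ v ∈ B := by
    intro v
    by_cases h : v ∈ P
    · left; simp [hA, h]
    · right; simp [hB, h]
  -- distance two within a part
  have hsame : ∀ u v : V, (∃ w, G.Adj u w ∧ G.Adj v w) → G.edist u v ≤ 2 := by
    intro u v ⟨w, h1, h2⟩
    have hle := SimpleGraph.edist_le (Walk.cons h1 (Walk.cons h2.symm Walk.nil))
    simpa using hle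
  -- every vertex has a neighbor
  have hnbr : ∀ v : V, ∃ w, G.Adj v w := by
    intro v
    have : 0 < (G.neighborFinset v).card := by rw [hdeg v]; exact hrpos
    obtain ⟨w, hw⟩ := Finset.card_pos.mp this
    exact ⟨w, by rwa [mem_neighborFinset] at hw⟩
  -- upper bound: edist ≤ 3 for all pairs
  have hub : ∀ u v : V, G.edist u v ≤ 3 := by
    intro u v
    rcases hmemAB u with hu | hu <;> rcases hmemAB v with hv | hv
    · exact le_trans (hsame u v (hcommonA u hu v hv)) (by norm_num)
    · obtain ⟨w, hw⟩ := hnbr v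
      have hwA : w ∈ A := hNB v hv (by rw [mem_neighborFinset]; exact hw)
      calc G.edist u v ≤ G.edist u w + G.edist w v := SimpleGraph.edist_triangle
        _ ≤ 2 + 1 := add_le_add (hsame u w (hcommonA u hu w hwA))
              (le_of_eq (edist_eq_one_iff_adj.mpr hw.symm))
        _ = 3 := by norm_num
    · obtain ⟨w, hw⟩ := hnbr v
      have hwB : w ∈ B := hNA v hv (by rw [mem_neighborFinset]; exact hw)
      calc G.edist u v ≤ G.edist u w + G.edist w v := SimpleGraph.edist_triangle
        _ ≤ 2 + 1 := add_le_add (hsame u w (hcommonB u hu w hwB))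
              (le_of_eq (edist_eq_one_iff_adj.mpr hw.symm))
        _ = 3 := by norm_num
    · exact le_trans (hsame u v (hcommonB u hu v hv)) (by norm_num)
  -- lower bound: find u, v at distance exactly 3
  have hAne : A.Nonempty := by
    rw [← Finset.card_pos, hAn]; omega
  obtain ⟨u, hu⟩ := hAne
  have hsd : 0 < (B \ G.neighborFinset u).card := by
    rw [Finset.card_sdiff_of_subset (hNA u hu), hdeg u, hBn]; omega
  obtain ⟨v, hv⟩ := Finset.card_pos.mp hsd
  rw [Finset.mem_sdiff] at hv
  obtain ⟨hvB, hvN⟩ := hv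
  have huP : u ∈ P := by simpa [hA] using hu
  have hvP : v ∉ P := by simpa [hB] using hvB
  have hne : u ≠ v := fun h => hvP (h ▸ huP)
  have hnadj : ¬ G.Adj u v := fun h => hvN (by rwa [mem_neighborFinset])
  have h0 : G.edist u v ≠ 0 := fun h => hne (edist_eq_zero_iff.mp h)
  have h1 : G.edist u v ≠ 1 := fun h => hnadj (edist_eq_one_iff_adj.mp h)
  have h2 : G.edist u v ≠ 2 := by
    intro hk
    have hk' : G.edist u v = ((2 : ℕ) : ℕ∞) := by exact_mod_cast hk
    obtain ⟨p, hp⟩ := exists_walk_of_edist_eq_coe hk'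
    cases p with
    | nil => simp at hp
    | cons h q =>
      cases q with
      | nil => simp at hp
      | cons h' q' =>
        cases q' with
        | nil =>
          rename_i w
          have hwB : w ∈ B := hNA u hu (by rw [mem_neighborFinset]; exact h)
          have hwA : w ∈ A := hNB v hvB (by rw [mem_neighborFinset]; exact h'.symm)
          simp [hA, hB] at hwA hwB
          exact hwB hwA
        | cons h'' q'' => simp [Walk.length_cons] at hp
  have h3 : G.edist u v = 3 := by
    have hle := hub u v
    have hnetop : G.edist u v ≠ ⊤ := by
      intro h; rw [h] at hle; exact absurd hle (by simp)
    lift G.edist u v to ℕ using hnetop with k hk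
    have hk0 : k ≠ 0 := by rintro rfl; simp at h0
    have hk1 : k ≠ 1 := by rintro rfl; exact h1 (by norm_num)
    have hk2 : k ≠ 2 := by rintro rfl; exact h2 (by norm_num)
    have hk3 : k ≤ 3 := by exact_mod_cast hle
    have : k = 3 := by omega
    exact_mod_cast this
  have hediam : G.ediam = 3 :=
    le_antisymm (ediam_le_of_edist_le hub) (h3 ▸ edist_le_ediam)
  rw [SimpleGraph.diam, hediam]
  rfl
end

section
/- Let n ≥ 3 and let G be a finite (n-1)-regular bipartite simple graph on 2n vertices. Then G is not radio graceful. -/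
open SimpleGraph

theorem not_radioGraceful_of_bipartite_regular_n_sub_one
    {V : Type*} [Fintype V] (G : SimpleGraph V) [DecidableRel G.Adj]
    (n : ℕ) (hn : 3 ≤ n)
    (hbip : Bipartite G) (hreg : G.IsRegularOfDegree (n - 1))
    (hcard : Fintype.card V = 2 * n) :
    ¬ RadioGraceful G := by
  classical
  obtain ⟨P, hP⟩ := hbip
  rintro ⟨f, hf, hrange⟩
  set A : Finset V := Finset.univ.filter (fun v => v ∈ P) with hA
  set B : Finset V := Finset.univ.filter (fun v => v ∉ P) with hB
  have hmemA : ∀ v : V, v ∈ A ↔ v ∈ P := by intro v; simp [hA]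
  have hmemB : ∀ v : V, v ∈ B ↔ v ∉ P := by intro v; simp [hB]
  -- neighbors lie in the opposite part
  have hNB : ∀ u : V, u ∈ P → G.neighborFinset u ⊆ B := by
    intro u hu v hv
    rw [SimpleGraph.mem_neighborFinset] at hv
    exact (hmemB v).2 ((hP u v hv).1 hu)
  have hNA : ∀ u : V, u ∉ P → G.neighborFinset u ⊆ A := by
    intro u hu v hv
    rw [SimpleGraph.mem_neighborFinset] at hv
    by_contra hvA
    exact hu ((hP u v hv).2 ((hmemB v).1 (by simp [hB, hA] at hvA ⊢; exact hvA)))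
  have hfiltB : ∀ u : V, u ∈ P → B.filter (fun v => G.Adj u v) = G.neighborFinset u := by
    intro u hu
    ext v
    simp only [Finset.mem_filter, SimpleGraph.mem_neighborFinset]
    exact ⟨fun h => h.2, fun h => ⟨hNB u hu (by rwa [SimpleGraph.mem_neighborFinset]), h⟩⟩
  have hfiltA : ∀ u : V, u ∉ P → A.filter (fun v => G.Adj u v) = G.neighborFinset u := by
    intro u hu
    ext v
    simp only [Finset.mem_filter, SimpleGraph.mem_neighborFinset]
    exact ⟨fun h => h.2, fun h => ⟨hNA u hu (by rwa [SimpleGraph.mem_neighborFinset]), h⟩⟩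
  -- double counting : |A| = |B| = n
  have hsum : A.card + B.card = 2 * n := by
    rw [hA, hB, Finset.card_filter_add_card_filter_not, Finset.card_univ, hcard]
  have hcardS : ∀ (X Y : Finset V), ((X ×ˢ Y).filter fun p => G.Adj p.1 p.2).card
      = ∑ u ∈ X, (Y.filter fun v => G.Adj u v).card := by
    intro X Y
    rw [Finset.card_filter, Finset.sum_product]
    exact Finset.sum_congr rfl fun u _ => (Finset.card_filter _ _).symm
  have hswap : ((A ×ˢ B).filter fun p => G.Adj p.1 p.2).card
      = ((B ×ˢ A).filter fun p => G.Adj p.1 p.2).card := by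
    refine Finset.card_bij' (fun p _ => p.swap) (fun p _ => p.swap) ?_ ?_ ?_ ?_
    · rintro ⟨x, y⟩ hp
      simp only [Finset.mem_filter, Finset.mem_product] at hp ⊢
      exact ⟨⟨hp.1.2, hp.1.1⟩, hp.2.symm⟩
    · rintro ⟨x, y⟩ hp
      simp only [Finset.mem_filter, Finset.mem_product] at hp ⊢
      exact ⟨⟨hp.1.2, hp.1.1⟩, hp.2.symm⟩
    · intro p hp; exact Prod.swap_swap p
    · intro p hp; exact Prod.swap_swap p
  have hSA : ((A ×ˢ B).filter fun p => G.Adj p.1 p.2).card = A.card * (n - 1) := by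
    rw [hcardS]
    rw [Finset.sum_congr rfl (fun u hu => by
      rw [hfiltB u ((hmemA u).1 hu), ← SimpleGraph.degree, hreg u])]
    simp [mul_comm]
  have hSB : ((B ×ˢ A).filter fun p => G.Adj p.1 p.2).card = B.card * (n - 1) := by
    rw [hcardS]
    rw [Finset.sum_congr rfl (fun u hu => by
      rw [hfiltA u ((hmemB u).1 hu), ← SimpleGraph.degree, hreg u])]
    simp [mul_comm]
  have hABeq : A.card = B.card := by
    have h := hswap
    rw [hSA, hSB] at h
    exact Nat.eq_of_mul_eq_mul_right (by omega) h
  have hAcard : A.card = n := by omega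
  have hBcard : B.card = n := by omega
  -- common neighbor machinery
  have key0 : ∀ (C : Finset V) (u v : V), G.neighborFinset u ⊆ C →
      G.neighborFinset v ⊆ C → C.card = n → ∃ w, G.Adj u w ∧ G.Adj v w := by
    intro C u v hu hv hC
    by_contra h
    push_neg at h
    have hdisj : Disjoint (G.neighborFinset u) (G.neighborFinset v) := by
      rw [Finset.disjoint_left]
      intro w hw hw'
      exact h w ((SimpleGraph.mem_neighborFinset G u w).1 hw)
        ((SimpleGraph.mem_neighborFinset G v w).1 hw')
    have hsub : G.neighborFinset u ∪ G.neighborFinset v ⊆ C := Finset.union_subset hu hv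
    have := Finset.card_le_card hsub
    rw [Finset.card_union_of_disjoint hdisj] at this
    have d1 : (G.neighborFinset u).card = n - 1 := by
      rw [G.card_neighborFinset_eq_degree]; exact hreg u
    have d2 : (G.neighborFinset v).card = n - 1 := by
      rw [G.card_neighborFinset_eq_degree]; exact hreg v
    omega
  have key : ∀ u v : V, (u ∈ P ↔ v ∈ P) → ∃ w, G.Adj u w ∧ G.Adj v w := by
    intro u v hsame
    by_cases hu : u ∈ P
    · exact key0 B u v (hNB u hu) (hNB v (hsame.1 hu)) hBcard
    · exact key0 A u v (hNA u hu) (hNA v (fun hv => hu (hsame.2 hv))) hAcard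
  -- uniqueness of far vertex
  have uniq : ∀ (C : Finset V) (u : V), G.neighborFinset u ⊆ C → C.card = n →
      ∀ v w : V, v ∈ C → w ∈ C → ¬G.Adj u v → ¬G.Adj u w → v = w := by
    intro C u hu hC v w hvC hwC hv hw
    have hcard1 : (C \ G.neighborFinset u).card = 1 := by
      rw [Finset.card_sdiff_of_subset hu, hC, G.card_neighborFinset_eq_degree, hreg u]; omega
    have hv' : v ∈ C \ G.neighborFinset u := by
      rw [Finset.mem_sdiff, SimpleGraph.mem_neighborFinset]; exact ⟨hvC, hv⟩
    have hw' : w ∈ C \ G.neighborFinset u := by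
      rw [Finset.mem_sdiff, SimpleGraph.mem_neighborFinset]; exact ⟨hwC, hw⟩
    exact Finset.card_le_one.1 (le_of_eq hcard1) v hv' w hw'
  -- every pair of vertices joined by a walk of length ≤ 3
  have hr3 : ∀ u v : V, ∃ p : G.Walk u v, p.length ≤ 3 := by
    intro u v
    by_cases huv : u = v
    · subst huv; exact ⟨SimpleGraph.Walk.nil, by simp⟩
    by_cases hsame : (u ∈ P ↔ v ∈ P)
    · obtain ⟨w, h1, h2⟩ := key u v hsame
      exact ⟨SimpleGraph.Walk.cons h1 (SimpleGraph.Walk.cons h2.symm SimpleGraph.Walk.nil),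
        by simp⟩
    · by_cases hadj : G.Adj u v
      · exact ⟨hadj.toWalk, by simp⟩
      · have hNne : (G.neighborFinset u).Nonempty := by
          rw [← Finset.card_pos, G.card_neighborFinset_eq_degree, hreg u]; omega
        obtain ⟨w, hw⟩ := hNne
        rw [SimpleGraph.mem_neighborFinset] at hw
        have hwv : (w ∈ P ↔ v ∈ P) := by
          have := hP u w hw
          tauto
        obtain ⟨x, h1, h2⟩ := key w v hwv
        exact ⟨SimpleGraph.Walk.cons hw (SimpleGraph.Walk.cons h1
          (SimpleGraph.Walk.cons h2.symm SimpleGraph.Walk.nil)), by simp⟩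
  have hediam : G.ediam ≤ 3 := by
    apply SimpleGraph.ediam_le_of_edist_le
    intro u v
    obtain ⟨p, hp⟩ := hr3 u v
    calc G.edist u v ≤ p.length := SimpleGraph.edist_le p
    _ ≤ 3 := by exact_mod_cast hp
  have hne_top : G.ediam ≠ ⊤ := by
    intro h; rw [h] at hediam; exact (by simp : ¬ ((⊤ : ℕ∞) ≤ 3)) hediam
  -- distance ≥ 3 for non-adjacent opposite-part pairs
  have dist3 : ∀ u v : V, u ≠ v → ¬(u ∈ P ↔ v ∈ P) → ¬G.Adj u v → 3 ≤ G.dist u v := by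
    intro u v huv hsame hadj
    have hreach : G.Reachable u v := ⟨(hr3 u v).choose⟩
    have h0 : 0 < G.dist u v := hreach.pos_dist_of_ne huv
    have h1 : G.dist u v ≠ 1 := fun h => hadj (SimpleGraph.dist_eq_one_iff_adj.1 h)
    have h2 : G.dist u v ≠ 2 := by
      intro h
      obtain ⟨p, hp⟩ := hreach.exists_walk_length_eq_dist
      rw [h] at hp
      cases p with
      | nil => simp at hp
      | cons hadj1 q =>
        cases q with
        | nil => simp at hp
        | cons hadj2 q' =>
          cases q' with
          | nil =>
            have := hP _ _ hadj1
            have := hP _ _ hadj2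
            tauto
          | cons hadj3 q'' => simp [SimpleGraph.Walk.length_cons] at hp
    omega
  -- the diameter is at least 3
  have hAne : A.Nonempty := by rw [← Finset.card_pos, hAcard]; omega
  obtain ⟨u0, hu0⟩ := hAne
  have hu0P : u0 ∈ P := (hmemA u0).1 hu0
  have hfar : ∃ v0 : V, v0 ∈ B ∧ ¬G.Adj u0 v0 := by
    have hcard1 : (B \ G.neighborFinset u0).card = 1 := by
      rw [Finset.card_sdiff_of_subset (hNB u0 hu0P), hBcard, G.card_neighborFinset_eq_degree, hreg u0]
      omega
    have : (B \ G.neighborFinset u0).Nonempty := by rw [← Finset.card_pos, hcard1]; omega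
    obtain ⟨v0, hv0⟩ := this
    rw [Finset.mem_sdiff, SimpleGraph.mem_neighborFinset] at hv0
    exact ⟨v0, hv0.1, hv0.2⟩
  obtain ⟨v0, hv0B, hv0adj⟩ := hfar
  have hv0P : v0 ∉ P := (hmemB v0).1 hv0B
  have hdiam : 3 ≤ G.diam := by
    refine le_trans (dist3 u0 v0 (fun h => hv0P (h ▸ hu0P)) (by tauto) hv0adj) ?_
    exact SimpleGraph.dist_le_diam hne_top
  -- extract vertices with labels 1, 2, 3
  have hNatCard : Nat.card V = 2 * n := by rw [Nat.card_eq_fintype_card, hcard]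
  have hmem123 : ∀ k : ℕ, 1 ≤ k → k ≤ 3 → ∃ a : V, f a = k := by
    intro k h1 h3
    have : k ∈ Set.Icc 1 (Nat.card V) := ⟨h1, by rw [hNatCard]; omega⟩
    rw [← hrange] at this
    exact this
  obtain ⟨a, ha⟩ := hmem123 1 (by omega) (by omega)
  obtain ⟨b, hb⟩ := hmem123 2 (by omega) (by omega)
  obtain ⟨c, hc⟩ := hmem123 3 (by omega) (by omega)
  have hab : a ≠ b := fun h => by rw [h, hb] at ha; omega
  have hcb : c ≠ b := fun h => by rw [h, hb] at hc; omega
  have hac : a ≠ c := fun h => by rw [h, hc] at ha; omega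
  -- distances from b to a and from b to c are at least 3
  have hdistba : 3 ≤ G.dist b a := by
    have h := hf a b hab
    rw [ha, hb] at h
    norm_num at h
    rw [SimpleGraph.dist_comm]
    have : (G.diam : ℤ) ≤ G.dist a b := by omega
    have h3 : (3 : ℤ) ≤ G.dist a b := le_trans (by exact_mod_cast hdiam) this
    exact_mod_cast h3
  have hdistbc : 3 ≤ G.dist b c := by
    have h := hf c b hcb
    rw [hc, hb] at h
    norm_num at h
    rw [SimpleGraph.dist_comm]
    have : (G.diam : ℤ) ≤ G.dist c b := by omega
    have h3 : (3 : ℤ) ≤ G.dist c b := le_trans (by exact_mod_cast hdiam) this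
    exact_mod_cast h3
  -- distance ≥ 3 forces: non-adjacent and opposite parts
  have farprop : ∀ x y : V, 3 ≤ G.dist x y → ¬G.Adj x y ∧ ¬(x ∈ P ↔ y ∈ P) := by
    intro x y hxy
    constructor
    · intro h
      have := SimpleGraph.dist_eq_one_iff_adj.2 h
      omega
    · intro hsame
      obtain ⟨w, h1, h2⟩ := key x y hsame
      have : G.dist x y ≤ 2 := by
        have := SimpleGraph.dist_le
          (SimpleGraph.Walk.cons h1 (SimpleGraph.Walk.cons h2.symm SimpleGraph.Walk.nil))
        simpa using this
      omega
  obtain ⟨hba1, hba2⟩ := farprop b a hdistba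
  obtain ⟨hbc1, hbc2⟩ := farprop b c hdistbc
  -- a and c are both the unique far vertex of b, hence equal: contradiction
  have : a = c := by
    by_cases hbP : b ∈ P
    · exact uniq B b (hNB b hbP) hBcard a c
        ((hmemB a).2 (by tauto)) ((hmemB c).2 (by tauto)) hba1 hbc1
    · exact uniq A b (hNA b hbP) hAcard a c
        ((hmemA a).2 (by tauto)) ((hmemA c).2 (by tauto)) hba1 hbc1
  exact hac this
end

section
/- Let q ≥ 2 and let 𝒫 be a finite projective plane of order q, with point set P and line set L (so |P| = |L| = q² + q + 1, every line is incident to q+1 points and every point is incident to q+1 lines). Then the incidence graph G_I of 𝒫, the bipartite graph on vertex set P ∪ L in which a point p and a line l are adjacent if and only if p is incident to l, is radio graceful. -/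
open SimpleGraph

/-- The incidence graph of a point-line incidence structure: the bipartite graph
on `P ⊕ L` joining each point to the lines through it. -/
def incidenceGraph (P L : Type*) [Membership P L] : SimpleGraph (P ⊕ L) where
  Adj x y :=
    match x, y with
    | Sum.inl p, Sum.inr l => p ∈ l
    | Sum.inr l, Sum.inl p => p ∈ l
    | _, _ => False
  symm := ⟨by rintro (p | l) (p' | l') h <;> exact h⟩
  loopless := ⟨by rintro (p | l) h <;> exact h⟩

set_option linter.unusedSectionVars false

section RGwork
namespace RG

open Configuration Configuration.ProjectivePlane Finset

variable {P L : Type*} [Membership P L] [Fintype P] [Fintype L]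
  [Configuration.ProjectivePlane P L]

lemma adj_inl_inr {p : P} {l : L} : (incidenceGraph P L).Adj (Sum.inl p) (Sum.inr l) ↔ p ∈ l := Iff.rfl
lemma adj_inr_inl {p : P} {l : L} : (incidenceGraph P L).Adj (Sum.inr l) (Sum.inl p) ↔ p ∈ l := Iff.rfl
lemma adj_inl_inl {p p' : P} : ¬ (incidenceGraph P L).Adj (Sum.inl p) (Sum.inl p') := fun h => h
lemma adj_inr_inr {l l' : L} : ¬ (incidenceGraph P L).Adj (Sum.inr l) (Sum.inr l') := fun h => h

lemma exists_mem_line (l : L) : ∃ p : P, p ∈ l := by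
  classical
  have h := two_lt_pointCount P l
  have : Nonempty {p : P // p ∈ l} := by
    rw [← Nat.card_pos_iff.trans (and_iff_left (Finite.of_fintype _))]
    unfold pointCount at h; omega
  obtain ⟨⟨p, hp⟩⟩ := this
  exact ⟨p, hp⟩

lemma unique_line {p p' : P} {l l' : L} (h : p ≠ p') (h1 : p ∈ l) (h2 : p' ∈ l)
    (h3 : p ∈ l') (h4 : p' ∈ l') : l = l' :=
  (Nondegenerate.eq_or_eq h1 h2 h3 h4).resolve_left h

lemma unique_pt {p p' : P} {l l' : L} (h : l ≠ l') (h1 : p ∈ l) (h2 : p ∈ l')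
    (h3 : p' ∈ l) (h4 : p' ∈ l') : p = p' :=
  (Nondegenerate.eq_or_eq h1 h3 h2 h4).resolve_right h

open scoped Classical in
noncomputable def linesThrough (p : P) : Finset L := univ.filter (fun l => p ∈ l)

open scoped Classical in
noncomputable def pointsOn (l : L) : Finset P := univ.filter (fun p => p ∈ l)

open scoped Classical in
lemma card_linesThrough (p : P) : (linesThrough (L := L) p).card = order P L + 1 := by
  rw [← lineCount_eq L p, lineCount, Nat.card_eq_fintype_card, Fintype.card_subtype]
  congr 1

open scoped Classical in
lemma card_pointsOn (l : L) : (pointsOn (P := P) l).card = order P L + 1 := by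
  rw [← pointCount_eq P l, pointCount, Nat.card_eq_fintype_card, Fintype.card_subtype]
  congr 1

end RG

-- appended to skel for testing
namespace RG
open Configuration Configuration.ProjectivePlane Finset SimpleGraph

variable {P L : Type*} [Membership P L] [Fintype P] [Fintype L]
  [Configuration.ProjectivePlane P L]

/-- walk between two distinct points -/
noncomputable def walkPP {p p' : P} (h : p ≠ p') :
    (incidenceGraph P L).Walk (Sum.inl p) (Sum.inl p') :=
  Walk.cons (adj_inl_inr.mpr (HasLines.mkLine_ax h).1)
    (Walk.cons (adj_inr_inl.mpr (HasLines.mkLine_ax h).2) Walk.nil)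

@[simp] lemma walkPP_length {p p' : P} (h : p ≠ p') : (walkPP (L := L) h).length = 2 := rfl

noncomputable def walkLL {l l' : L} (h : l ≠ l') :
    (incidenceGraph P L).Walk (Sum.inr l) (Sum.inr l') :=
  Walk.cons (adj_inr_inl.mpr (HasPoints.mkPoint_ax h).1)
    (Walk.cons (adj_inl_inr.mpr (HasPoints.mkPoint_ax h).2) Walk.nil)

@[simp] lemma walkLL_length {l l' : L} (h : l ≠ l') : (walkLL (P := P) h).length = 2 := rfl

noncomputable def walkPL (p : P) (l : L) : (incidenceGraph P L).Walk (Sum.inl p) (Sum.inr l) := by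
  classical
  by_cases h : p ∈ l
  · exact Walk.cons (adj_inl_inr.mpr h) Walk.nil
  · have hz := (exists_mem_line (P := P) l).choose_spec
    set z := (exists_mem_line (P := P) l).choose
    have hpz : p ≠ z := fun e => h (e ▸ hz)
    exact Walk.cons (adj_inl_inr.mpr (HasLines.mkLine_ax hpz).1)
      (Walk.cons (adj_inr_inl.mpr (HasLines.mkLine_ax hpz).2)
        (Walk.cons (adj_inl_inr.mpr hz) Walk.nil))

lemma walkPL_length_le (p : P) (l : L) : (walkPL p l).length ≤ 3 := by
  classical
  unfold walkPL
  by_cases h : p ∈ l <;> simp [h]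

lemma reach : ∀ u v : P ⊕ L, (incidenceGraph P L).Reachable u v := by
  rintro (p | l) (p' | l')
  · by_cases h : p = p'
    · subst h; rfl
    · exact ⟨walkPP h⟩
  · exact ⟨walkPL p l'⟩
  · exact ⟨(walkPL p' l).reverse⟩
  · by_cases h : l = l'
    · subst h; rfl
    · exact ⟨walkLL h⟩

lemma edist_le_three : ∀ u v : P ⊕ L, (incidenceGraph P L).edist u v ≤ 3 := by
  have h30 : ((3:ℕ) : ℕ∞) = 3 := rfl
  rintro (p | l) (p' | l')
  · by_cases h : p = p'
    · subst h; simp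
    · refine le_trans (SimpleGraph.edist_le (walkPP h)) ?_
      rw [walkPP_length]; decide
  · refine le_trans (SimpleGraph.edist_le (walkPL p l')) ?_
    exact_mod_cast Nat.cast_le.mpr (walkPL_length_le p l')
  · rw [SimpleGraph.edist_comm]
    refine le_trans (SimpleGraph.edist_le (walkPL p' l)) ?_
    exact_mod_cast Nat.cast_le.mpr (walkPL_length_le p' l)
  · by_cases h : l = l'
    · subst h; simp
    · refine le_trans (SimpleGraph.edist_le (walkLL h)) ?_
      rw [walkLL_length]; decide

lemma diam_le_three : (incidenceGraph P L).diam ≤ 3 := by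
  have h := SimpleGraph.ediam_le_of_edist_le (G := incidenceGraph P L) (k := 3) (fun u v => edist_le_three u v)
  have : (incidenceGraph P L).diam = (incidenceGraph P L).ediam.toNat := rfl
  rw [this]
  calc (incidenceGraph P L).ediam.toNat ≤ (3 : ℕ∞).toNat := ENat.toNat_le_toNat h (by decide)
    _ = 3 := rfl

/-- parity of walks -/
lemma walk_parity : ∀ {u v : P ⊕ L} (w : (incidenceGraph P L).Walk u v),
    Even w.length ↔ (u.isLeft = v.isLeft) := by
  intro u v w
  induction w with
  | nil => simp
  | @cons a b c h w ih =>
    have hab : a.isLeft = !b.isLeft := by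
      rcases a with x | x <;> rcases b with y | y <;> first | exact h.elim | simp
    rw [Walk.length_cons, Nat.even_add_one, ih, hab]
    rcases b.isLeft <;> rcases c.isLeft <;> simp

lemma adj_of_length_one {u v : P ⊕ L} (w : (incidenceGraph P L).Walk u v) (h : w.length = 1) :
    (incidenceGraph P L).Adj u v := by
  cases w with
  | nil => simp at h
  | cons hadj w' =>
    have : w'.length = 0 := by rw [Walk.length_cons] at h; omega
    have := SimpleGraph.Walk.eq_of_length_eq_zero this
    exact this ▸ hadj

lemma dist_ge_one {u v : P ⊕ L} (h : u ≠ v) : 1 ≤ (incidenceGraph P L).dist u v :=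
  (reach u v).pos_dist_of_ne h

lemma dist_ge_two_of_same {u v : P ⊕ L} (h : u ≠ v) (hs : u.isLeft = v.isLeft) :
    2 ≤ (incidenceGraph P L).dist u v := by
  obtain ⟨w, hw⟩ := (reach u v).exists_walk_length_eq_dist
  have heven : Even w.length := (walk_parity w).mpr hs
  obtain ⟨r, hr⟩ := heven
  have h1 := dist_ge_one h
  omega

lemma dist_ge_three {p : P} {l : L} (h : p ∉ l) :
    3 ≤ (incidenceGraph P L).dist (Sum.inl p) (Sum.inr l) := by
  obtain ⟨w, hw⟩ := (reach (Sum.inl p) (Sum.inr l)).exists_walk_length_eq_dist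
  have hodd : ¬ Even w.length := by rw [walk_parity w]; simp
  have h1 : (incidenceGraph P L).dist (Sum.inl p) (Sum.inr l) ≠ 1 := by
    intro he
    exact h (adj_inl_inr.mp (adj_of_length_one w (hw.trans he)))
  have h0 : 1 ≤ (incidenceGraph P L).dist (Sum.inl p) (Sum.inr l) := dist_ge_one (by simp)
  rcases Nat.even_or_odd w.length with he | ho
  · exact absurd he hodd
  · obtain ⟨r, hr⟩ := ho
    omega

lemma dist_ge_three' {p : P} {l : L} (h : p ∉ l) :
    3 ≤ (incidenceGraph P L).dist (Sum.inr l) (Sum.inl p) := by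
  rw [SimpleGraph.dist_comm]; exact dist_ge_three h

end RG

namespace RG
open Configuration Configuration.ProjectivePlane Finset SimpleGraph

variable {P L : Type*} [Membership P L] [Fintype P] [Fintype L]
  [Configuration.ProjectivePlane P L]

theorem assembly (n : ℕ) (hn : 0 < n)
    (hcP : Fintype.card P = n) (hcL : Fintype.card L = n)
    (p : Fin n → P) (l : Fin n → L)
    (hp : Function.Bijective p) (hl : Function.Bijective l)
    (h1 : ∀ i, p i ∉ l i) (h2 : ∀ i : Fin n, p ⟨(i.val + 1) % n, Nat.mod_lt _ hn⟩ ∉ l i) :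
    ∃ f : P ⊕ L → ℕ, IsRadioLabeling (incidenceGraph P L) f ∧ Set.range f = Set.Icc 1 (Nat.card (P ⊕ L)) := by
  classical
  haveI : NeZero n := ⟨hn.ne'⟩
  let ep : Fin n ≃ P := Equiv.ofBijective p hp
  let el : Fin n ≃ L := Equiv.ofBijective l hl
  let f : P ⊕ L → ℕ := Sum.elim (fun x => 2 * (ep.symm x).val + 1) (fun y => 2 * (el.symm y).val + 2)
  have hfl : ∀ x : P, f (Sum.inl x) = 2 * (ep.symm x).val + 1 := fun _ => rfl
  have hfr : ∀ y : L, f (Sum.inr y) = 2 * (el.symm y).val + 2 := fun _ => rfl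
  have hep : ∀ i, ep.symm (p i) = i := fun i => ep.symm_apply_apply i
  have hel : ∀ i, el.symm (l i) = i := fun i => el.symm_apply_apply i
  -- the mixed-case bound
  have mixed : ∀ (x : P) (y : L),
      (4:ℤ) ≤ |(f (Sum.inl x) : ℤ) - (f (Sum.inr y) : ℤ)| + ((incidenceGraph P L).dist (Sum.inl x) (Sum.inr y) : ℤ) := by
    intro x y
    have hx : p (ep.symm x) = x := ep.apply_symm_apply x
    have hy : l (el.symm y) = y := el.apply_symm_apply y
    have hfx : (f (Sum.inl x) : ℤ) = 2 * ((ep.symm x : ℕ) : ℤ) + 1 := by rw [hfl]; push_cast; ring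
    have hfy : (f (Sum.inr y) : ℤ) = 2 * ((el.symm y : ℕ) : ℤ) + 2 := by rw [hfr]; push_cast; ring
    rw [hfx, hfy]
    have hAn : (ep.symm x : ℕ) < n := (ep.symm x).isLt
    have hBn : (el.symm y : ℕ) < n := (el.symm y).isLt
    have hAlt : (ep.symm x : ℕ) = (el.symm y : ℕ) ∨ (ep.symm x : ℕ) = (el.symm y : ℕ) + 1
        ∨ ((ep.symm x : ℕ) ≠ (el.symm y : ℕ) ∧ (ep.symm x : ℕ) ≠ (el.symm y : ℕ) + 1) := by omega
    rcases hAlt with hA | hA | ⟨hA1, hA2⟩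
    · have hij : ep.symm x = el.symm y := Fin.val_injective hA
      have hnm : x ∉ y := by rw [← hx, ← hy, hij]; exact h1 (el.symm y)
      have hdist : (3:ℤ) ≤ ((incidenceGraph P L).dist (Sum.inl x) (Sum.inr y) : ℤ) := by
        exact_mod_cast dist_ge_three (L := L) hnm
      rw [hA, abs_sub_comm]
      have habs : |2 * ((el.symm y : ℕ):ℤ) + 2 - (2 * ((el.symm y : ℕ):ℤ) + 1)| = 1 := by norm_num
      rw [habs]; linarith
    · have hij : ep.symm x = ⟨((el.symm y : ℕ) + 1) % n, Nat.mod_lt _ hn⟩ := by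
        apply Fin.val_injective
        show (ep.symm x : ℕ) = ((el.symm y : ℕ) + 1) % n
        rw [Nat.mod_eq_of_lt (by omega)]
        omega
      have hnm : x ∉ y := by
        rw [← hx, ← hy, hij]; exact h2 (el.symm y)
      have hdist : (3:ℤ) ≤ ((incidenceGraph P L).dist (Sum.inl x) (Sum.inr y) : ℤ) := by
        exact_mod_cast dist_ge_three (L := L) hnm
      rw [hA]
      have habs : |2 * (((el.symm y : ℕ):ℤ) + 1) + 1 - (2 * ((el.symm y : ℕ):ℤ) + 2)| = 1 := by
        rw [show (2 * (((el.symm y : ℕ):ℤ) + 1) + 1 - (2 * ((el.symm y : ℕ):ℤ) + 2)) = (1:ℤ) from by ring]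
        norm_num
      have hcast : ((((el.symm y : ℕ) + 1 : ℕ)) : ℤ) = ((el.symm y : ℕ):ℤ) + 1 := by push_cast; ring
      rw [hcast, habs]; linarith
    · have habs : (3:ℤ) ≤ |2 * ((ep.symm x : ℕ):ℤ) + 1 - (2 * ((el.symm y : ℕ):ℤ) + 2)| := by
        rcases abs_cases (2 * ((ep.symm x : ℕ):ℤ) + 1 - (2 * ((el.symm y : ℕ):ℤ) + 2)) with ⟨he, _⟩ | ⟨he, _⟩ <;>
          rw [he] <;> omega
      have hdist : (1:ℤ) ≤ ((incidenceGraph P L).dist (Sum.inl x) (Sum.inr y) : ℤ) := by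
        exact_mod_cast dist_ge_one (by simp)
      linarith
  refine ⟨f, ?_, ?_⟩
  · intro u v huv
    have hd : ((incidenceGraph P L).diam : ℤ) ≤ 3 := by exact_mod_cast diam_le_three (P := P) (L := L)
    have key : (4:ℤ) ≤ |(f u : ℤ) - (f v : ℤ)| + ((incidenceGraph P L).dist u v : ℤ) := by
      rcases u with x | y <;> rcases v with x' | y'
      · -- two points
        have hxx : x ≠ x' := fun e => huv (by rw [e])
        have hii : (ep.symm x : ℕ) ≠ (ep.symm x' : ℕ) := by
          intro e; exact hxx (by simpa using congrArg ep (Fin.val_injective e))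
        have habs : (2:ℤ) ≤ |(f (Sum.inl x) : ℤ) - (f (Sum.inl x') : ℤ)| := by
          rw [hfl, hfl]
          rcases abs_cases ((((2 * (ep.symm x : ℕ) + 1 : ℕ)) : ℤ) - (((2 * (ep.symm x' : ℕ) + 1 : ℕ)) : ℤ)) with ⟨he, _⟩ | ⟨he, _⟩ <;>
            rw [he] <;> push_cast <;> omega
        have hdist : (2:ℤ) ≤ ((incidenceGraph P L).dist (Sum.inl x) (Sum.inl x') : ℤ) := by
          exact_mod_cast dist_ge_two_of_same huv rfl
        linarith
      · exact mixed x y'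
      · rw [abs_sub_comm, SimpleGraph.dist_comm]; exact mixed x' y
      · have hyy : y ≠ y' := fun e => huv (by rw [e])
        have hii : (el.symm y : ℕ) ≠ (el.symm y' : ℕ) := by
          intro e; exact hyy (by simpa using congrArg el (Fin.val_injective e))
        have habs : (2:ℤ) ≤ |(f (Sum.inr y) : ℤ) - (f (Sum.inr y') : ℤ)| := by
          rw [hfr, hfr]
          rcases abs_cases ((((2 * (el.symm y : ℕ) + 2 : ℕ)) : ℤ) - (((2 * (el.symm y' : ℕ) + 2 : ℕ)) : ℤ)) with ⟨he, _⟩ | ⟨he, _⟩ <;>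
            rw [he] <;> push_cast <;> omega
        have hdist : (2:ℤ) ≤ ((incidenceGraph P L).dist (Sum.inr y) (Sum.inr y') : ℤ) := by
          exact_mod_cast dist_ge_two_of_same huv rfl
        linarith
    linarith
  · have hcard : Nat.card (P ⊕ L) = 2 * n := by
      rw [Nat.card_eq_fintype_card, Fintype.card_sum, hcP, hcL]; omega
    rw [hcard]
    ext m
    simp only [Set.mem_range, Set.mem_Icc]
    constructor
    · rintro ⟨u, rfl⟩
      rcases u with x | y
      · rw [hfl]; have := (ep.symm x).isLt; omega
      · rw [hfr]; have := (el.symm y).isLt; omega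
    · rintro ⟨h1m, h2m⟩
      rcases Nat.even_or_odd m with ⟨k, hk⟩ | ⟨k, hk⟩
      · have hk1 : 1 ≤ k := by omega
        have hkn : k - 1 < n := by omega
        refine ⟨Sum.inr (l ⟨k - 1, hkn⟩), ?_⟩
        rw [hfr, hel]
        simp only []
        omega
      · have hkn : k < n := by omega
        refine ⟨Sum.inl (p ⟨k, hkn⟩), ?_⟩
        rw [hfl, hep]
        simp only []
        omega

end RG

namespace RG
open Configuration Configuration.ProjectivePlane Finset SimpleGraph

variable {P L : Type*} [Membership P L] [Fintype P] [Fintype L]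
  [Configuration.ProjectivePlane P L]

section Hall

variable {n : ℕ} (hn : 0 < n)

/-- cyclic successor on `Fin n` -/
def cs (hn : 0 < n) (i : Fin n) : Fin n := ⟨(i.val + 1) % n, Nat.mod_lt _ hn⟩

lemma cs_val_or (i : Fin n) :
    ((cs hn i).val = i.val + 1 ∧ i.val + 1 < n) ∨ ((cs hn i).val = 0 ∧ i.val + 1 = n) := by
  have hi := i.isLt
  by_cases h : i.val + 1 = n
  · right; refine ⟨?_, h⟩; show (i.val + 1) % n = 0; rw [h]; exact Nat.mod_self n
  · left
    have hlt : i.val + 1 < n := by omega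
    exact ⟨Nat.mod_eq_of_lt hlt, hlt⟩

lemma cs_inj : Function.Injective (cs hn) := by
  intro a b h
  have h' := congrArg Fin.val h
  rcases cs_val_or hn a with ⟨e1, f1⟩ | ⟨e1, f1⟩ <;> rcases cs_val_or hn b with ⟨e2, f2⟩ | ⟨e2, f2⟩ <;>
    apply Fin.val_injective <;> omega

lemma cs_ne (hn2 : 2 ≤ n) (i : Fin n) : cs hn i ≠ i := by
  intro h
  have h' := congrArg Fin.val h
  rcases cs_val_or hn i with ⟨e1, f1⟩ | ⟨e1, f1⟩ <;> omega

lemma cs_cs_ne (hn3 : 3 ≤ n) (i : Fin n) : cs hn (cs hn i) ≠ i := by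
  intro h
  have h' := congrArg Fin.val h
  rcases cs_val_or hn i with ⟨e1, f1⟩ | ⟨e1, f1⟩ <;>
    rcases cs_val_or hn (cs hn i) with ⟨e2, f2⟩ | ⟨e2, f2⟩ <;> omega

lemma cs_cs_cs_ne (hn4 : 4 ≤ n) (i : Fin n) : cs hn (cs hn (cs hn i)) ≠ i := by
  intro h
  have h' := congrArg Fin.val h
  rcases cs_val_or hn i with ⟨e1, f1⟩ | ⟨e1, f1⟩ <;>
    rcases cs_val_or hn (cs hn i) with ⟨e2, f2⟩ | ⟨e2, f2⟩ <;>
      rcases cs_val_or hn (cs hn (cs hn i)) with ⟨e3, f3⟩ | ⟨e3, f3⟩ <;> omega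

/-- from any 3-element subset we can find a "spread" pair -/
lemma exists_spread_pair (hn13 : 13 ≤ n) {S : Finset (Fin n)} (hS : 3 ≤ S.card) :
    ∃ i ∈ S, ∃ j ∈ S, i ≠ j ∧ cs hn i ≠ j ∧ i ≠ cs hn j := by
  have hS1 : 0 < S.card := by omega
  obtain ⟨i1, hi1⟩ := Finset.card_pos.mp hS1
  have e1 := Finset.card_erase_of_mem hi1
  have h2 : 0 < (S.erase i1).card := by omega
  obtain ⟨i2, hi2⟩ := Finset.card_pos.mp h2
  have e2 := Finset.card_erase_of_mem hi2
  have h3 : 0 < ((S.erase i1).erase i2).card := by omega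
  obtain ⟨i3, hi3⟩ := Finset.card_pos.mp h3
  have hi2S : i2 ∈ S := Finset.mem_of_mem_erase hi2
  have hi3S : i3 ∈ S := Finset.mem_of_mem_erase (Finset.mem_of_mem_erase hi3)
  have h12 : i2 ≠ i1 := Finset.ne_of_mem_erase hi2
  have h32 : i3 ≠ i2 := Finset.ne_of_mem_erase hi3
  have h31 : i3 ≠ i1 := Finset.ne_of_mem_erase (Finset.mem_of_mem_erase hi3)
  by_contra hcon
  push_neg at hcon
  have key : ∀ a ∈ S, ∀ b ∈ S, a ≠ b → cs hn a = b ∨ a = cs hn b := by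
    intro a ha b hb hab
    by_cases hc : cs hn a = b
    · exact Or.inl hc
    · exact Or.inr (hcon a ha b hb hab hc)
  rcases key i1 hi1 i2 hi2S (Ne.symm h12) with hA | hA
  · rcases key i1 hi1 i3 hi3S (Ne.symm h31) with hB | hB
    · exact h32 (hB.symm.trans hA)
    · rcases key i2 hi2S i3 hi3S (Ne.symm h32) with hC | hC
      · exact cs_cs_cs_ne hn (by omega) i3 (by rw [← hB, hA, hC])
      · exact h12 (hC.trans hB.symm)
  · rcases key i1 hi1 i3 hi3S (Ne.symm h31) with hB | hB
    · rcases key i2 hi2S i3 hi3S (Ne.symm h32) with hC | hC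
      · have hX : cs hn (cs hn i2) = i3 := by rw [← hA]; exact hB
        exact cs_ne hn (by omega) (cs hn i2) (hX.trans hC.symm)
      · exact cs_cs_cs_ne hn (by omega) i3 (by rw [← hC, ← hA, hB])
    · exact h32 (cs_inj hn (hA.symm.trans hB)).symm
end Hall

end RG

namespace RG
open Configuration Configuration.ProjectivePlane Finset SimpleGraph

variable {P L : Type*} [Membership P L] [Fintype P] [Fintype L]
  [Configuration.ProjectivePlane P L]

theorem exists_cycle_hall (q : ℕ) (hq : 3 ≤ q) (horder : order P L = q)
    (hn : 0 < q^2+q+1) :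
    ∃ (p : Fin (q^2+q+1) → P) (l : Fin (q^2+q+1) → L),
      Function.Bijective p ∧ Function.Bijective l ∧
      (∀ i, p i ∉ l i) ∧
      (∀ i : Fin (q^2+q+1), p ⟨(i.val + 1) % (q^2+q+1), Nat.mod_lt _ hn⟩ ∉ l i) := by
  classical
  set n := q^2+q+1 with hndef
  have hqq : q + 6 ≤ q^2 := by nlinarith
  have hn13 : 13 ≤ n := by omega
  have hcP : Fintype.card P = n := by rw [card_points P L, horder]
  have hcL : Fintype.card L = n := by rw [card_lines P L, horder]
  let e : Fin n ≃ P := (Fintype.equivFinOfCardEq hcP).symm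
  let A : Fin n → Finset L := fun i => univ.filter (fun m => e i ∉ m ∧ e (cs hn i) ∉ m)
  let Bd : Finset (Fin n) → Finset L :=
    fun S => univ.filter (fun m => ∀ i ∈ S, e i ∈ m ∨ e (cs hn i) ∈ m)
  have hBdmem : ∀ (S : Finset (Fin n)) (m : L), m ∈ Bd S ↔ ∀ i ∈ S, e i ∈ m ∨ e (cs hn i) ∈ m := by
    intro S m; simp [Bd]
  have hBiUnion : ∀ S : Finset (Fin n), S.biUnion A = univ \ Bd S := by
    intro S; ext m
    rw [mem_biUnion, mem_sdiff]
    simp only [mem_univ, true_and, hBdmem]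
    constructor
    · rintro ⟨i, hi, hAi⟩
      have hA2 := (mem_filter.mp hAi).2
      intro hall
      rcases hall i hi with h' | h' <;> tauto
    · intro h
      push_neg at h
      obtain ⟨i, hi, h1, h2⟩ := h
      exact ⟨i, hi, mem_filter.mpr ⟨mem_univ m, h1, h2⟩⟩
  have hAcard : ∀ i, q^2 - q ≤ (A i).card := by
    intro i
    have hne : e i ≠ e (cs hn i) := fun h => cs_ne hn (by omega) i (e.injective h).symm
    have hAeq : A i = univ \ (linesThrough (e i) ∪ linesThrough (e (cs hn i))) := by
      ext m
      simp only [A, mem_filter, mem_univ, true_and, mem_sdiff, mem_union, linesThrough]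
      tauto
    rw [hAeq, card_sdiff_of_subset (subset_univ _)]
    have hint : (linesThrough (L := L) (e i) ∩ linesThrough (e (cs hn i))).Nonempty := by
      refine ⟨HasLines.mkLine hne, ?_⟩
      rw [mem_inter]
      constructor <;> simp only [linesThrough, mem_filter, mem_univ, true_and]
      · exact (HasLines.mkLine_ax hne).1
      · exact (HasLines.mkLine_ax hne).2
    have hsum := Finset.card_union_add_card_inter (linesThrough (L := L) (e i))
      (linesThrough (e (cs hn i)))
    have h1 := card_linesThrough (L := L) (e i)
    have h2 := card_linesThrough (L := L) (e (cs hn i))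
    rw [horder] at h1 h2
    have hmin : 1 ≤ (linesThrough (L := L) (e i) ∩ linesThrough (e (cs hn i))).card :=
      Finset.card_pos.mpr hint
    have hu : ((univ : Finset L)).card = n := by rw [card_univ, hcL]
    omega
  have hBd4 : ∀ S : Finset (Fin n), 3 ≤ S.card → (Bd S).card ≤ 4 := by
    intro S hS3
    obtain ⟨i, hi, j, hj, hij1, hij2, hij3⟩ := exists_spread_pair hn hn13 hS3
    have hab : e i ≠ e (cs hn i) := fun h => cs_ne hn (by omega) i (e.injective h).symm
    have hcd : e j ≠ e (cs hn j) := fun h => cs_ne hn (by omega) j (e.injective h).symm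
    have hac : e i ≠ e j := fun h => hij1 (e.injective h)
    have had : e i ≠ e (cs hn j) := fun h => hij3 (e.injective h)
    have hbc : e (cs hn i) ≠ e j := fun h => hij2 (e.injective h)
    have hbd : e (cs hn i) ≠ e (cs hn j) := fun h => hij1 (cs_inj hn (e.injective h))
    have hmaps : ∀ m ∈ Bd S,
        (fun m => ((if e i ∈ m then e i else e (cs hn i)), (if e j ∈ m then e j else e (cs hn j)))) m
          ∈ ({e i, e (cs hn i)} : Finset P) ×ˢ ({e j, e (cs hn j)} : Finset P) := by
      intro m hm
      simp only [mem_product, mem_insert, mem_singleton]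
      constructor
      · by_cases h : e i ∈ m <;> simp [h]
      · by_cases h : e j ∈ m <;> simp [h]
    have hinj : ∀ m ∈ Bd S, ∀ m' ∈ Bd S,
        (fun m => ((if e i ∈ m then e i else e (cs hn i)), (if e j ∈ m then e j else e (cs hn j)))) m =
        (fun m => ((if e i ∈ m then e i else e (cs hn i)), (if e j ∈ m then e j else e (cs hn j)))) m' →
        m = m' := by
      intro m hm m' hm' hEq
      simp only [Prod.mk.injEq] at hEq
      obtain ⟨hfst, hsnd⟩ := hEq
      have hxm : (if e i ∈ m then e i else e (cs hn i)) ∈ m := by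
        split
        · assumption
        · next h => exact ((hBdmem S m).mp hm i hi).resolve_left h
      have hym : (if e j ∈ m then e j else e (cs hn j)) ∈ m := by
        split
        · assumption
        · next h => exact ((hBdmem S m).mp hm j hj).resolve_left h
      have hxm' : (if e i ∈ m then e i else e (cs hn i)) ∈ m' := by
        rw [hfst]
        split
        · assumption
        · next h => exact ((hBdmem S m').mp hm' i hi).resolve_left h
      have hym' : (if e j ∈ m then e j else e (cs hn j)) ∈ m' := by
        rw [hsnd]
        split
        · assumption
        · next h => exact ((hBdmem S m').mp hm' j hj).resolve_left h
      have hxy : (if e i ∈ m then e i else e (cs hn i)) ≠ (if e j ∈ m then e j else e (cs hn j)) := by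
        split <;> split <;> assumption
      exact unique_line hxy hxm hym hxm' hym'
    have hcard4 : (({e i, e (cs hn i)} : Finset P) ×ˢ ({e j, e (cs hn j)} : Finset P)).card ≤ 4 := by
      rw [card_product]
      have c1 : ({e i, e (cs hn i)} : Finset P).card ≤ 2 := card_insert_le _ _ |>.trans (by simp)
      have c2 : ({e j, e (cs hn j)} : Finset P).card ≤ 2 := card_insert_le _ _ |>.trans (by simp)
      exact le_trans (Nat.mul_le_mul c1 c2) (by norm_num)
    exact le_trans (Finset.card_le_card_of_injOn _ hmaps hinj) hcard4
  have hBdlarge : ∀ S : Finset (Fin n), 2*q+3 ≤ S.card → Bd S = ∅ := by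
    intro S hcard
    rw [eq_empty_iff_forall_notMem]
    intro m hm
    have hle : S.card ≤ (pointsOn (P := P) m ×ˢ ({false, true} : Finset Bool)).card := by
      apply Finset.card_le_card_of_injOn
        (fun i => if e i ∈ m then (e i, false) else (e (cs hn i), true))
      · intro i hiS
        simp only [mem_coe, mem_product]
        by_cases h : e i ∈ m
        · simp only [h, if_true]
          refine ⟨?_, by simp⟩
          simp [pointsOn, h]
        · simp only [h, if_false]
          refine ⟨?_, by simp⟩
          have := ((hBdmem S m).mp hm i hiS).resolve_left h
          simp [pointsOn, this]
      · intro i hiS j hjS hEq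
        by_cases h1 : e i ∈ m <;> by_cases h2 : e j ∈ m <;>
          simp only [h1, h2, if_true, if_false, Prod.mk.injEq] at hEq
        · exact e.injective hEq.1
        · exact absurd hEq.2 (by decide)
        · exact absurd hEq.2 (by decide)
        · exact cs_inj hn (e.injective hEq.1)
    have hpc : (pointsOn (P := P) m).card = q+1 := by rw [card_pointsOn, horder]
    rw [card_product, hpc] at hle
    have hbl : ({false, true} : Finset Bool).card = 2 := rfl
    rw [hbl] at hle
    omega
  have hHall : ∀ S : Finset (Fin n), S.card ≤ (S.biUnion A).card := by
    intro S
    rcases S.eq_empty_or_nonempty with rfl | hSne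
    · simp
    obtain ⟨i0, hi0⟩ := hSne
    by_cases hsmall : S.card ≤ q^2 - q
    · refine le_trans hsmall (le_trans (hAcard i0) (Finset.card_le_card ?_))
      intro m hm; exact mem_biUnion.mpr ⟨i0, hi0, hm⟩
    · push_neg at hsmall
      have h3 : 3 ≤ S.card := by omega
      rw [hBiUnion S, card_sdiff_of_subset (subset_univ _), card_univ, hcL]
      have hcf : Fintype.card (Fin n) = n := Fintype.card_fin n
      by_cases hbig : 2*q+3 ≤ S.card
      · rw [hBdlarge S hbig]
        have h5 : S.card ≤ n := le_trans (Finset.card_le_univ S) (le_of_eq hcf)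
        simp only [card_empty]
        omega
      · have h4 := hBd4 S h3
        push_neg at hbig
        omega
  obtain ⟨σ, hσinj, hσmem⟩ := (Finset.all_card_le_biUnion_card_iff_exists_injective A).mp hHall
  have hσbij : Function.Bijective σ := by
    rw [Fintype.bijective_iff_injective_and_card]
    exact ⟨hσinj, by rw [Fintype.card_fin, hcL]⟩
  refine ⟨fun i => e i, σ, e.bijective, hσbij, ?_, ?_⟩
  · intro i
    have := hσmem i
    simp only [A, mem_filter] at this
    exact this.2.1
  · intro i
    have := hσmem i
    simp only [A, mem_filter] at this
    exact this.2.2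

end RG

namespace RG
open Configuration Configuration.ProjectivePlane Finset SimpleGraph

variable {P L : Type*} [Membership P L] [Fintype P] [Fintype L]
  [Configuration.ProjectivePlane P L]

theorem exists_cycle_two (horder : order P L = 2) (hn : 0 < (7:ℕ)) :
    ∃ (p : Fin 7 → P) (l : Fin 7 → L),
      Function.Bijective p ∧ Function.Bijective l ∧
      (∀ i, p i ∉ l i) ∧
      (∀ i : Fin 7, p ⟨(i.val + 1) % 7, Nat.mod_lt _ hn⟩ ∉ l i) := by
  classical
  have hcP7 : Fintype.card P = 7 := by
    have h := card_points P L; rw [horder] at h; norm_num at h; exact h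
  have hcL7 : Fintype.card L = 7 := by
    have h := card_lines P L; rw [horder] at h; norm_num at h; exact h
  obtain ⟨p₁, p₂, p₃, l₁, l₂, l₃, -, -, -, -, -, -, -, -⟩ :=
    @ProjectivePlane.exists_config P L _ _
  set Linf := l₁ with hLinf
  -- three points on Linf
  have hptL : (pointsOn (P := P) Linf).card = 3 := by rw [card_pointsOn, horder]
  obtain ⟨x0, x1, x2, hx01, hx02, hx12, hxset⟩ := Finset.card_eq_three.mp hptL
  have hmemP : ∀ y : P, y ∈ pointsOn (P := P) Linf ↔ y ∈ Linf := by
    intro y; simp [pointsOn]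
  have hx0L : x0 ∈ Linf := (hmemP x0).mp (hxset ▸ mem_insert_self _ _)
  have hx1L : x1 ∈ Linf := (hmemP x1).mp (hxset ▸ mem_insert_of_mem (mem_insert_self _ _))
  have hx2L : x2 ∈ Linf := (hmemP x2).mp
    (hxset ▸ mem_insert_of_mem (mem_insert_of_mem (mem_singleton_self _)))
  have hmemL : ∀ (y : P) (m : L), m ∈ linesThrough (L := L) y ↔ y ∈ m := by
    intro y m; simp [linesThrough]
  -- two further lines through x0
  have hlt0 : (linesThrough (L := L) x0).card = 3 := by rw [card_linesThrough, horder]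
  have hLmem0 : Linf ∈ linesThrough (L := L) x0 := (hmemL x0 Linf).mpr hx0L
  have herase0 : ((linesThrough (L := L) x0).erase Linf).card = 2 := by
    rw [card_erase_of_mem hLmem0, hlt0]
  obtain ⟨v1, v2, hv12, hvset⟩ := Finset.card_eq_two.mp herase0
  have hv1e : v1 ∈ (linesThrough (L := L) x0).erase Linf := hvset ▸ mem_insert_self _ _
  have hv2e : v2 ∈ (linesThrough (L := L) x0).erase Linf := hvset ▸ mem_insert_of_mem (mem_singleton_self _)
  have hv1L : v1 ≠ Linf := Finset.ne_of_mem_erase hv1e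
  have hv2L : v2 ≠ Linf := Finset.ne_of_mem_erase hv2e
  have hx0v1 : x0 ∈ v1 := (hmemL x0 v1).mp (Finset.mem_of_mem_erase hv1e)
  have hx0v2 : x0 ∈ v2 := (hmemL x0 v2).mp (Finset.mem_of_mem_erase hv2e)
  -- two further lines through x1
  have hlt1 : (linesThrough (L := L) x1).card = 3 := by rw [card_linesThrough, horder]
  have hLmem1 : Linf ∈ linesThrough (L := L) x1 := (hmemL x1 Linf).mpr hx1L
  have herase1 : ((linesThrough (L := L) x1).erase Linf).card = 2 := by
    rw [card_erase_of_mem hLmem1, hlt1]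
  obtain ⟨h1, h2, hh12, hhset⟩ := Finset.card_eq_two.mp herase1
  have hh1e : h1 ∈ (linesThrough (L := L) x1).erase Linf := hhset ▸ mem_insert_self _ _
  have hh2e : h2 ∈ (linesThrough (L := L) x1).erase Linf := hhset ▸ mem_insert_of_mem (mem_singleton_self _)
  have hh1L : h1 ≠ Linf := Finset.ne_of_mem_erase hh1e
  have hh2L : h2 ≠ Linf := Finset.ne_of_mem_erase hh2e
  have hx1h1 : x1 ∈ h1 := (hmemL x1 h1).mp (Finset.mem_of_mem_erase hh1e)
  have hx1h2 : x1 ∈ h2 := (hmemL x1 h2).mp (Finset.mem_of_mem_erase hh2e)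
  -- basic non-memberships
  have key1 : ∀ (u w : P) (m : L), u ≠ w → u ∈ m → u ∈ Linf → w ∈ Linf → m ≠ Linf → w ∉ m :=
    fun u w m huw hum huL hwL hmL hwm => hmL (unique_line huw hum hwm huL hwL)
  have hx1v1 : x1 ∉ v1 := key1 x0 x1 v1 hx01 hx0v1 hx0L hx1L hv1L
  have hx2v1 : x2 ∉ v1 := key1 x0 x2 v1 hx02 hx0v1 hx0L hx2L hv1L
  have hx1v2 : x1 ∉ v2 := key1 x0 x1 v2 hx01 hx0v2 hx0L hx1L hv2L
  have hx2v2 : x2 ∉ v2 := key1 x0 x2 v2 hx02 hx0v2 hx0L hx2L hv2L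
  have hx0h1 : x0 ∉ h1 := key1 x1 x0 h1 hx01.symm hx1h1 hx1L hx0L hh1L
  have hx0h2 : x0 ∉ h2 := key1 x1 x0 h2 hx01.symm hx1h2 hx1L hx0L hh2L
  have hx2h1 : x2 ∉ h1 := key1 x1 x2 h1 hx12 hx1h1 hx1L hx2L hh1L
  have hx2h2 : x2 ∉ h2 := key1 x1 x2 h2 hx12 hx1h2 hx1L hx2L hh2L
  -- v and h lines are distinct
  have hv1h1 : v1 ≠ h1 := fun h => hx1v1 (h.symm ▸ hx1h1)
  have hv1h2 : v1 ≠ h2 := fun h => hx1v1 (h.symm ▸ hx1h2)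
  have hv2h1 : v2 ≠ h1 := fun h => hx1v2 (h.symm ▸ hx1h1)
  have hv2h2 : v2 ≠ h2 := fun h => hx1v2 (h.symm ▸ hx1h2)
  -- the four affine points
  set a := HasPoints.mkPoint (P := P) hv1h1 with hadef
  set b := HasPoints.mkPoint (P := P) hv1h2 with hbdef
  set c := HasPoints.mkPoint (P := P) hv2h1 with hcdef
  set d := HasPoints.mkPoint (P := P) hv2h2 with hddef
  have ha_v1 : a ∈ v1 := (HasPoints.mkPoint_ax hv1h1).1
  have ha_h1 : a ∈ h1 := (HasPoints.mkPoint_ax hv1h1).2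
  have hb_v1 : b ∈ v1 := (HasPoints.mkPoint_ax hv1h2).1
  have hb_h2 : b ∈ h2 := (HasPoints.mkPoint_ax hv1h2).2
  have hc_v2 : c ∈ v2 := (HasPoints.mkPoint_ax hv2h1).1
  have hc_h1 : c ∈ h1 := (HasPoints.mkPoint_ax hv2h1).2
  have hd_v2 : d ∈ v2 := (HasPoints.mkPoint_ax hv2h2).1
  have hd_h2 : d ∈ h2 := (HasPoints.mkPoint_ax hv2h2).2
  -- affine points off Linf
  have haL : a ∉ Linf := fun h => hx0h1 ((unique_pt hv1L ha_v1 h hx0v1 hx0L) ▸ ha_h1)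
  have hbL : b ∉ Linf := fun h => hx0h2 ((unique_pt hv1L hb_v1 h hx0v1 hx0L) ▸ hb_h2)
  have hcL : c ∉ Linf := fun h => hx0h1 ((unique_pt hv2L hc_v2 h hx0v2 hx0L) ▸ hc_h1)
  have hdL : d ∉ Linf := fun h => hx0h2 ((unique_pt hv2L hd_v2 h hx0v2 hx0L) ▸ hd_h2)
  -- affine non-memberships
  have hav2 : a ∉ v2 := fun h => hx0h1 ((unique_pt hv12 ha_v1 h hx0v1 hx0v2) ▸ ha_h1)
  have hbv2 : b ∉ v2 := fun h => hx0h2 ((unique_pt hv12 hb_v1 h hx0v1 hx0v2) ▸ hb_h2)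
  have hcv1 : c ∉ v1 := fun h => hx0h1 ((unique_pt hv12 h hc_v2 hx0v1 hx0v2) ▸ hc_h1)
  have hdv1 : d ∉ v1 := fun h => hx0h2 ((unique_pt hv12 h hd_v2 hx0v1 hx0v2) ▸ hd_h2)
  have hah2 : a ∉ h2 := fun h => hx1v1 ((unique_pt hh12 ha_h1 h hx1h1 hx1h2) ▸ ha_v1)
  have hbh1 : b ∉ h1 := fun h => hx1v1 ((unique_pt hh12 h hb_h2 hx1h1 hx1h2) ▸ hb_v1)
  have hch2 : c ∉ h2 := fun h => hx1v2 ((unique_pt hh12 hc_h1 h hx1h1 hx1h2) ▸ hc_v2)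
  have hdh1 : d ∉ h1 := fun h => hx1v2 ((unique_pt hh12 h hd_h2 hx1h1 hx1h2) ▸ hd_v2)
  -- point distinctness
  have hax0 : a ≠ x0 := ne_of_mem_of_not_mem ha_h1 hx0h1
  have hax1 : a ≠ x1 := ne_of_mem_of_not_mem ha_v1 hx1v1
  have hax2 : a ≠ x2 := ne_of_mem_of_not_mem ha_v1 hx2v1
  have hbx0 : b ≠ x0 := ne_of_mem_of_not_mem hb_h2 hx0h2
  have hbx1 : b ≠ x1 := ne_of_mem_of_not_mem hb_v1 hx1v1
  have hbx2 : b ≠ x2 := ne_of_mem_of_not_mem hb_v1 hx2v1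
  have hcx0 : c ≠ x0 := ne_of_mem_of_not_mem hc_h1 hx0h1
  have hcx1 : c ≠ x1 := ne_of_mem_of_not_mem hc_v2 hx1v2
  have hcx2 : c ≠ x2 := ne_of_mem_of_not_mem hc_v2 hx2v2
  have hdx0 : d ≠ x0 := ne_of_mem_of_not_mem hd_h2 hx0h2
  have hdx1 : d ≠ x1 := ne_of_mem_of_not_mem hd_v2 hx1v2
  have hdx2 : d ≠ x2 := ne_of_mem_of_not_mem hd_v2 hx2v2
  have hab : a ≠ b := ne_of_mem_of_not_mem ha_h1 hbh1
  have hac : a ≠ c := ne_of_mem_of_not_mem ha_v1 hcv1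
  have had : a ≠ d := ne_of_mem_of_not_mem ha_v1 hdv1
  have hbc : b ≠ c := ne_of_mem_of_not_mem hb_v1 hcv1
  have hbd : b ≠ d := ne_of_mem_of_not_mem hb_v1 hdv1
  have hcd : c ≠ d := ne_of_mem_of_not_mem hc_h1 hdh1
  -- the two slope lines
  set s1 := HasLines.mkLine (P := P) (L := L) hax2 with hs1def
  set s2 := HasLines.mkLine (P := P) (L := L) hbx2 with hs2def
  have ha_s1 : a ∈ s1 := (HasLines.mkLine_ax hax2).1
  have hx2s1 : x2 ∈ s1 := (HasLines.mkLine_ax hax2).2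
  have hb_s2 : b ∈ s2 := (HasLines.mkLine_ax hbx2).1
  have hx2s2 : x2 ∈ s2 := (HasLines.mkLine_ax hbx2).2
  have hs1L : s1 ≠ Linf := fun h => haL (h ▸ ha_s1)
  have hs2L : s2 ≠ Linf := fun h => hbL (h ▸ hb_s2)
  have hs1v1 : s1 ≠ v1 := fun h => hx2v1 (h ▸ hx2s1)
  have hs1v2 : s1 ≠ v2 := fun h => hx2v2 (h ▸ hx2s1)
  have hs1h1 : s1 ≠ h1 := fun h => hx2h1 (h ▸ hx2s1)
  have hs1h2 : s1 ≠ h2 := fun h => hx2h2 (h ▸ hx2s1)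
  have hs2v1 : s2 ≠ v1 := fun h => hx2v1 (h ▸ hx2s2)
  have hs2v2 : s2 ≠ v2 := fun h => hx2v2 (h ▸ hx2s2)
  have hs2h1 : s2 ≠ h1 := fun h => hx2h1 (h ▸ hx2s2)
  have hs2h2 : s2 ≠ h2 := fun h => hx2h2 (h ▸ hx2s2)
  have hbs1 : b ∉ s1 := fun h => hx2v1 ((unique_line hab ha_v1 hb_v1 ha_s1 h).symm ▸ hx2s1)
  have hcs1 : c ∉ s1 := fun h => hx2h1 ((unique_line hac ha_h1 hc_h1 ha_s1 h).symm ▸ hx2s1)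
  have hs12 : s1 ≠ s2 := fun h => hbs1 (h.symm ▸ hb_s2)
  have hx0s2 : x0 ∉ s2 := fun h => hbL ((unique_line hx02 h hx2s2 hx0L hx2L) ▸ hb_s2)
  have hx1s2 : x1 ∉ s2 := fun h => hbL ((unique_line hx12 h hx2s2 hx1L hx2L) ▸ hb_s2)
  -- universes
  have hnmA : a ∉ ({b, c, d, x0, x1, x2} : Finset P) := by
    simp only [mem_insert, mem_singleton]
    push_neg
    exact ⟨hab, hac, had, hax0, hax1, hax2⟩
  have hnmB : b ∉ ({c, d, x0, x1, x2} : Finset P) := by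
    simp only [mem_insert, mem_singleton]
    push_neg
    exact ⟨hbc, hbd, hbx0, hbx1, hbx2⟩
  have hnmC : c ∉ ({d, x0, x1, x2} : Finset P) := by
    simp only [mem_insert, mem_singleton]
    push_neg
    exact ⟨hcd, hcx0, hcx1, hcx2⟩
  have hnmD : d ∉ ({x0, x1, x2} : Finset P) := by
    simp only [mem_insert, mem_singleton]
    push_neg
    exact ⟨hdx0, hdx1, hdx2⟩
  have hnmX0 : x0 ∉ ({x1, x2} : Finset P) := by
    simp only [mem_insert, mem_singleton]
    push_neg
    exact ⟨hx01, hx02⟩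
  have hnmX1 : x1 ∉ ({x2} : Finset P) := by
    simp only [mem_singleton]
    exact hx12
  have hPuniv : ({a, b, c, d, x0, x1, x2} : Finset P) = univ := by
    apply Finset.eq_univ_of_card
    rw [hcP7, card_insert_of_notMem hnmA, card_insert_of_notMem hnmB,
      card_insert_of_notMem hnmC, card_insert_of_notMem hnmD,
      card_insert_of_notMem hnmX0, card_insert_of_notMem hnmX1, card_singleton]
  have hnmV2 : v2 ∉ ({s1, Linf, h1, s2, v1, h2} : Finset L) := by
    simp only [mem_insert, mem_singleton]
    push_neg
    exact ⟨Ne.symm hs1v2, hv2L, hv2h1, Ne.symm hs2v2, hv12.symm, hv2h2⟩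
  have hnmS1 : s1 ∉ ({Linf, h1, s2, v1, h2} : Finset L) := by
    simp only [mem_insert, mem_singleton]
    push_neg
    exact ⟨hs1L, hs1h1, hs12, hs1v1, hs1h2⟩
  have hnmLi : Linf ∉ ({h1, s2, v1, h2} : Finset L) := by
    simp only [mem_insert, mem_singleton]
    push_neg
    exact ⟨Ne.symm hh1L, Ne.symm hs2L, Ne.symm hv1L, Ne.symm hh2L⟩
  have hnmH1 : h1 ∉ ({s2, v1, h2} : Finset L) := by
    simp only [mem_insert, mem_singleton]
    push_neg
    exact ⟨Ne.symm hs2h1, Ne.symm hv1h1, hh12⟩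
  have hnmS2 : s2 ∉ ({v1, h2} : Finset L) := by
    simp only [mem_insert, mem_singleton]
    push_neg
    exact ⟨hs2v1, hs2h2⟩
  have hnmV1 : v1 ∉ ({h2} : Finset L) := by
    simp only [mem_singleton]
    exact hv1h2
  have hLuniv : ({v2, s1, Linf, h1, s2, v1, h2} : Finset L) = univ := by
    apply Finset.eq_univ_of_card
    rw [hcL7, card_insert_of_notMem hnmV2, card_insert_of_notMem hnmS1,
      card_insert_of_notMem hnmLi, card_insert_of_notMem hnmH1,
      card_insert_of_notMem hnmS2, card_insert_of_notMem hnmV1, card_singleton]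
  -- vectors
  refine ⟨![a, b, c, d, x0, x1, x2], ![v2, s1, Linf, h1, s2, v1, h2], ?_, ?_, ?_, ?_⟩
  · rw [Fintype.bijective_iff_surjective_and_card]
    refine ⟨?_, by rw [Fintype.card_fin, hcP7]⟩
    intro y
    have hy : y ∈ ({a, b, c, d, x0, x1, x2} : Finset P) := hPuniv ▸ mem_univ y
    simp only [mem_insert, mem_singleton] at hy
    rcases hy with h|h|h|h|h|h|h
    · exact ⟨⟨0, by norm_num⟩, by subst h; rfl⟩
    · exact ⟨⟨1, by norm_num⟩, by subst h; rfl⟩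
    · exact ⟨⟨2, by norm_num⟩, by subst h; rfl⟩
    · exact ⟨⟨3, by norm_num⟩, by subst h; rfl⟩
    · exact ⟨⟨4, by norm_num⟩, by subst h; rfl⟩
    · exact ⟨⟨5, by norm_num⟩, by subst h; rfl⟩
    · exact ⟨⟨6, by norm_num⟩, by subst h; rfl⟩
  · rw [Fintype.bijective_iff_surjective_and_card]
    refine ⟨?_, by rw [Fintype.card_fin, hcL7]⟩
    intro y
    have hy : y ∈ ({v2, s1, Linf, h1, s2, v1, h2} : Finset L) := hLuniv ▸ mem_univ y
    simp only [mem_insert, mem_singleton] at hy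
    rcases hy with h|h|h|h|h|h|h
    · exact ⟨⟨0, by norm_num⟩, by subst h; rfl⟩
    · exact ⟨⟨1, by norm_num⟩, by subst h; rfl⟩
    · exact ⟨⟨2, by norm_num⟩, by subst h; rfl⟩
    · exact ⟨⟨3, by norm_num⟩, by subst h; rfl⟩
    · exact ⟨⟨4, by norm_num⟩, by subst h; rfl⟩
    · exact ⟨⟨5, by norm_num⟩, by subst h; rfl⟩
    · exact ⟨⟨6, by norm_num⟩, by subst h; rfl⟩
  · intro i
    fin_cases i
    · exact hav2
    · exact hbs1
    · exact hcL
    · exact hdh1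
    · exact hx0s2
    · exact hx1v1
    · exact hx2h2
  · intro i
    fin_cases i
    · exact hbv2
    · exact hcs1
    · exact hdL
    · exact hx0h1
    · exact hx1s2
    · exact hx2v1
    · exact hah2

end RG

end RGwork

theorem radioGraceful_incidenceGraph_projectivePlane
    (P L : Type*) [Fintype P] [Fintype L] [Membership P L]
    [Configuration.ProjectivePlane P L]
    (q : ℕ) (hq : 2 ≤ q)
    (horder : Configuration.ProjectivePlane.order P L = q) :
    RadioGraceful (incidenceGraph P L) := by
  classical
  rcases eq_or_lt_of_le hq with h2 | h3
  · -- q = 2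
    have horder2 : Configuration.ProjectivePlane.order P L = 2 := by rw [horder, ← h2]
    have hn : 0 < (7:ℕ) := by norm_num
    obtain ⟨p, l, hp, hl, hc1, hc2⟩ := RG.exists_cycle_two horder2 hn
    have hcP : Fintype.card P = 7 := by
      have h := Configuration.ProjectivePlane.card_points P L
      rw [horder2] at h; norm_num at h; exact h
    have hcL : Fintype.card L = 7 := by
      have h := Configuration.ProjectivePlane.card_lines P L
      rw [horder2] at h; norm_num at h; exact h
    exact RG.assembly 7 hn hcP hcL p l hp hl hc1 hc2
  · -- 3 ≤ q
    have hq3 : 3 ≤ q := h3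
    have hn : 0 < q^2+q+1 := by positivity
    obtain ⟨p, l, hp, hl, hc1, hc2⟩ := RG.exists_cycle_hall q hq3 horder hn
    have hcP : Fintype.card P = q^2+q+1 := by
      rw [Configuration.ProjectivePlane.card_points P L, horder]
    have hcL : Fintype.card L = q^2+q+1 := by
      rw [Configuration.ProjectivePlane.card_lines P L, horder]
    exact RG.assembly (q^2+q+1) hn hcP hcL p l hp hl hc1 hc2
end

section
/- Let q ≥ 2 and let G be a finite connected bipartite (q+1)-regular simple graph of girth 8 on 2(q+1)(q²+1) vertices (i.e., a (q+1,8)-cage, the incidence graph of a generalized quadrangle of order q). Then G is not radio graceful. -/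
open SimpleGraph

/-! ### Auxiliary lemmas -/

lemma RGAux.walk_parity {V : Type*} {G : SimpleGraph V} {P : Set V}
    (hP : IsBipartition G P) :
    ∀ {u w : V} (p : G.Walk u w), ((u ∈ P) ↔ (w ∈ P)) ↔ Even p.length := by
  intro u w p
  induction p with
  | nil => simp
  | cons h p ih =>
    have h1 := hP _ _ h
    rw [Walk.length_cons, Nat.even_add_one, ← ih]
    tauto

lemma RGAux.dist_parity {V : Type*} {G : SimpleGraph V} {P : Set V}
    (hP : IsBipartition G P)
    {u w : V} (hr : G.Reachable u w) : ((u ∈ P) ↔ (w ∈ P)) ↔ Even (G.dist u w) := by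
  obtain ⟨p, hp⟩ := hr.exists_walk_length_eq_dist
  rw [← hp]; exact RGAux.walk_parity hP p

lemma RGAux.adj_level {V : Type*} {G : SimpleGraph V} {P : Set V}
    (hP : IsBipartition G P)
    (hconn : G.Connected) {u w : V} (h : G.Adj u w) (v : V) :
    G.dist v w = G.dist v u + 1 ∨ G.dist v u = G.dist v w + 1 := by
  have h1 : G.dist u w = 1 := (dist_eq_one_iff_adj).mpr h
  have t1 : G.dist v w ≤ G.dist v u + 1 := by
    have := hconn.dist_triangle (u := v) (v := u) (w := w); omega
  have t2 : G.dist v u ≤ G.dist v w + 1 := by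
    have h1' : G.dist w u = 1 := (dist_eq_one_iff_adj).mpr h.symm
    have := hconn.dist_triangle (u := v) (v := w) (w := u); omega
  have p1 := (RGAux.dist_parity hP (hconn.preconnected v u)).symm
  have p2 := (RGAux.dist_parity hP (hconn.preconnected v w)).symm
  have p3 := hP _ _ h
  have hne : ¬ (Even (G.dist v u) ↔ Even (G.dist v w)) := by tauto
  rw [Nat.even_iff, Nat.even_iff] at hne
  have : G.dist v u % 2 = 0 ∨ G.dist v u % 2 = 1 := Nat.mod_two_eq_zero_or_one _
  have : G.dist v w % 2 = 0 ∨ G.dist v w % 2 = 1 := Nat.mod_two_eq_zero_or_one _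
  omega

lemma RGAux.down_nbr {V : Type*} {G : SimpleGraph V} (hconn : G.Connected)
    {v u : V} {k : ℕ} (hd : G.dist v u = k + 1) :
    ∃ w : V, G.Adj u w ∧ G.dist v w = k := by
  obtain ⟨p, hp⟩ := (hconn.preconnected u v).exists_walk_length_eq_dist
  rw [SimpleGraph.dist_comm (u := v) (v := u)] at hd
  cases p with
  | nil => rw [hd] at hp; simp at hp
  | @cons _ w _ ha q =>
      refine ⟨w, ha, ?_⟩
      rw [Walk.length_cons, hd] at hp
      have hle : G.dist w v ≤ k := by have := SimpleGraph.dist_le q; omega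
      have : G.dist u v ≤ G.dist u w + G.dist w v := hconn.dist_triangle
      have h1 : G.dist u w = 1 := (dist_eq_one_iff_adj).mpr ha
      rw [SimpleGraph.dist_comm (u := v) (v := w)]
      omega

lemma RGAux.girth_bound {V : Type*} {G : SimpleGraph V} (hg : G.girth = 8) :
    ∀ (a : V) (w : G.Walk a a), w.IsCycle → 8 ≤ w.length := by
  have he : G.egirth = 8 := by
    have : G.egirth ≠ ⊤ := by
      intro h
      rw [SimpleGraph.girth, h] at hg
      simp at hg
    rw [SimpleGraph.girth] at hg
    exact (ENat.toNat_eq_iff (by norm_num)).mp hg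
  intro a w hw
  have : G.egirth ≤ w.length := by
    rw [SimpleGraph.egirth]
    exact iInf_le_of_le a (iInf_le_of_le w (iInf_le_of_le hw le_rfl))
  rw [he] at this
  exact_mod_cast this

lemma RGAux.cycle4 {V : Type*} {G : SimpleGraph V} {a b c d : V}
    (h1 : G.Adj a b) (h2 : G.Adj b c) (h3 : G.Adj c d) (h4 : G.Adj d a)
    (hac : a ≠ c) (hbd : b ≠ d) :
    ∃ (w : G.Walk a a), w.IsCycle ∧ w.length = 4 := by
  refine ⟨Walk.cons h1 (Walk.cons h2 (Walk.cons h3 (Walk.cons h4 Walk.nil))), ?_, by simp⟩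
  have hab := h1.ne; have hbc := h2.ne; have hcd := h3.ne; have hda := h4.ne
  simp [Walk.isCycle_def, Walk.isTrail_def, List.nodup_cons, Sym2.eq, Sym2.rel_iff']
  aesop

lemma RGAux.cycle6 {V : Type*} {G : SimpleGraph V} {a b c d e f : V}
    (h1 : G.Adj a b) (h2 : G.Adj b c) (h3 : G.Adj c d) (h4 : G.Adj d e)
    (h5 : G.Adj e f) (h6 : G.Adj f a)
    (hac : a ≠ c) (had : a ≠ d) (hae : a ≠ e)
    (hbd : b ≠ d) (hbe : b ≠ e) (hbf : b ≠ f)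
    (hce : c ≠ e) (hcf : c ≠ f) (hdf : d ≠ f) :
    ∃ (w : G.Walk a a), w.IsCycle ∧ w.length = 6 := by
  refine ⟨Walk.cons h1 (Walk.cons h2 (Walk.cons h3 (Walk.cons h4 (Walk.cons h5
    (Walk.cons h6 Walk.nil))))), ?_, by simp⟩
  have hab := h1.ne; have hbc := h2.ne; have hcd := h3.ne
  have hde := h4.ne; have hef := h5.ne; have hfa := h6.ne
  simp [Walk.isCycle_def, Walk.isTrail_def, List.nodup_cons, Sym2.eq, Sym2.rel_iff']
  aesop

lemma RGAux.unique_down {V : Type*} {G : SimpleGraph V} (hconn : G.Connected)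
    (hg8 : ∀ (a : V) (w : G.Walk a a), w.IsCycle → 8 ≤ w.length)
    {v u w₁ w₂ : V} {k : ℕ} (hk1 : 1 ≤ k) (hk3 : k ≤ 3) (hu : G.dist v u = k)
    (h1 : G.Adj u w₁) (h2 : G.Adj u w₂)
    (hd1 : G.dist v w₁ = k - 1) (hd2 : G.dist v w₂ = k - 1) : w₁ = w₂ := by
  by_contra hne
  have hvu : v ≠ u := by
    intro h; rw [h] at hu; rw [SimpleGraph.dist_self] at hu; omega
  interval_cases k
  · have e1 : v = w₁ := (hconn.dist_eq_zero_iff).mp hd1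
    have e2 : v = w₂ := (hconn.dist_eq_zero_iff).mp hd2
    exact hne (e1 ▸ e2)
  · have a1 : G.Adj v w₁ := dist_eq_one_iff_adj.mp hd1
    have a2 : G.Adj v w₂ := dist_eq_one_iff_adj.mp hd2
    obtain ⟨w, hw, hlen⟩ := RGAux.cycle4 a1 h1.symm h2 a2.symm hvu hne
    have := hg8 _ _ hw; omega
  · obtain ⟨x₁, hx1a, hx1d⟩ := RGAux.down_nbr hconn (k := 1) hd1
    obtain ⟨x₂, hx2a, hx2d⟩ := RGAux.down_nbr hconn (k := 1) hd2
    have av1 : G.Adj v x₁ := dist_eq_one_iff_adj.mp hx1d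
    have av2 : G.Adj v x₂ := dist_eq_one_iff_adj.mp hx2d
    have hx1u : x₁ ≠ u := by intro h; rw [h] at hx1d; omega
    have hx2u : x₂ ≠ u := by intro h; rw [h] at hx2d; omega
    have hx1w2 : x₁ ≠ w₂ := by intro h; rw [h, hd2] at hx1d; omega
    have hx2w1 : x₂ ≠ w₁ := by intro h; rw [h, hd1] at hx2d; omega
    by_cases hx : x₁ = x₂
    · obtain ⟨w, hw, hlen⟩ := RGAux.cycle4 hx1a.symm h1.symm h2
        (show G.Adj w₂ x₁ by rw [hx]; exact hx2a) hx1u hne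
      have := hg8 _ _ hw; omega
    · have hvw1 : v ≠ w₁ := by
        intro h; rw [← h, SimpleGraph.dist_self] at hd1; omega
      have hvw2 : v ≠ w₂ := by
        intro h; rw [← h, SimpleGraph.dist_self] at hd2; omega
      obtain ⟨w, hw, hlen⟩ := RGAux.cycle6 av1 hx1a.symm h1.symm h2 hx2a av2.symm
        hvw1 hvu hvw2 hx1u hx1w2 hx hne hx2w1.symm hx2u.symm
      have := hg8 _ _ hw; omega

lemma RGAux.level_counts {V : Type*} [Fintype V] (G : SimpleGraph V) [DecidableRel G.Adj]
    (q : ℕ) (hq : 2 ≤ q) {P : Set V}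
    (hP : IsBipartition G P)
    (hconn : G.Connected)
    (hg8 : ∀ (a : V) (w : G.Walk a a), w.IsCycle → 8 ≤ w.length)
    (hreg : G.IsRegularOfDegree (q + 1))
    (hcard : Fintype.card V = 2 * (q + 1) * (q ^ 2 + 1)) (v : V) :
    (∀ u : V, G.dist v u ≤ 4) ∧ (∃ u : V, G.dist v u = 4) := by
  classical
  set L : ℕ → Finset V := fun k => Finset.univ.filter (fun u => G.dist v u = k) with hL
  have memL : ∀ (k : ℕ) (u : V), u ∈ L k ↔ G.dist v u = k := by
    intro k u; simp [hL]
  have downB : ∀ j : ℕ, j ≤ 2 → ∀ b ∈ L (j+1), ((L j).bipartiteBelow G.Adj b).card = 1 := by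
    intro j hj b hb
    rw [memL] at hb
    obtain ⟨w, hwa, hwd⟩ := RGAux.down_nbr hconn hb
    rw [Finset.card_eq_one]
    refine ⟨w, ?_⟩
    rw [Finset.eq_singleton_iff_unique_mem]
    constructor
    · rw [Finset.mem_bipartiteBelow, memL]; exact ⟨hwd, hwa.symm⟩
    · intro a ha
      rw [Finset.mem_bipartiteBelow, memL] at ha
      exact RGAux.unique_down hconn hg8 (k := j+1) (by omega) (by omega) hb ha.2.symm hwa
        (by simpa using ha.1) (by simpa using hwd)
  have upA : ∀ j : ℕ, j ≤ 2 → ∀ a ∈ L (j+1), ((L (j+2)).bipartiteAbove G.Adj a).card = q := by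
    intro j hj a ha
    have hadeg : (G.neighborFinset a).card = q + 1 := by
      rw [G.card_neighborFinset_eq_degree]; exact hreg a
    have hda := (memL _ _).mp ha
    have hsplit : (G.neighborFinset a).filter (fun b => G.dist v b = j+2) ∪
        (G.neighborFinset a).filter (fun b => G.dist v b = j) = G.neighborFinset a := by
      ext b
      simp only [Finset.mem_union, Finset.mem_filter, mem_neighborFinset]
      constructor
      · rintro (⟨h, _⟩ | ⟨h, _⟩) <;> exact h
      · intro h
        rcases RGAux.adj_level hP hconn h v with h' | h' <;> rw [hda] at h'
        · exact Or.inl ⟨h, h'⟩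
        · exact Or.inr ⟨h, by omega⟩
    have hdisj : Disjoint ((G.neighborFinset a).filter (fun b => G.dist v b = j+2))
        ((G.neighborFinset a).filter (fun b => G.dist v b = j)) := by
      rw [Finset.disjoint_left]
      intro b h1 h2
      rw [Finset.mem_filter] at h1 h2
      omega
    have hcards : ((G.neighborFinset a).filter (fun b => G.dist v b = j+2)).card +
        ((G.neighborFinset a).filter (fun b => G.dist v b = j)).card = q + 1 := by
      rw [← Finset.card_union_of_disjoint hdisj, hsplit, hadeg]
    have e1 : (L (j+2)).bipartiteAbove G.Adj a =
        (G.neighborFinset a).filter (fun b => G.dist v b = j+2) := by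
      ext b
      simp only [Finset.mem_bipartiteAbove, Finset.mem_filter, mem_neighborFinset, memL]
      tauto
    have e2 : (L j).bipartiteBelow G.Adj a =
        (G.neighborFinset a).filter (fun b => G.dist v b = j) := by
      ext b
      simp only [Finset.mem_bipartiteBelow, Finset.mem_filter, mem_neighborFinset, memL]
      constructor
      · rintro ⟨hd, hadj⟩; exact ⟨hadj.symm, hd⟩
      · rintro ⟨hadj, hd⟩; exact ⟨hd, hadj.symm⟩
    have := downB j hj a ha
    rw [e2] at this
    rw [e1]
    omega
  have card0 : (L 0).card = 1 := by
    have : L 0 = {v} := by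
      ext u
      rw [memL, Finset.mem_singleton]
      exact (hconn.dist_eq_zero_iff).trans eq_comm
    rw [this, Finset.card_singleton]
  have card1 : (L 1).card = q + 1 := by
    have : L 1 = G.neighborFinset v := by
      ext u
      rw [memL, mem_neighborFinset]
      exact dist_eq_one_iff_adj
    rw [this, G.card_neighborFinset_eq_degree]; exact hreg v
  have step : ∀ j : ℕ, j ≤ 1 → (L (j+2)).card = (L (j+1)).card * q := by
    intro j hj
    have := Finset.card_mul_eq_card_mul G.Adj (s := L (j+1)) (t := L (j+2))
      (m := q) (n := 1) (upA j (by omega)) (downB (j+1) (by omega))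
    omega
  have card2 : (L 2).card = (q + 1) * q := by
    have h := step 0 (by omega)
    norm_num at h
    rw [h, card1]
  have card3 : (L 3).card = (q + 1) * q * q := by
    have h := step 1 (by omega)
    norm_num at h
    rw [h, card2]
  have card4 : q * q * q ≤ (L 4).card := by
    have hle := Finset.card_mul_le_card_mul G.Adj (s := L 3) (t := L 4)
      (m := q) (n := q + 1)
      (fun a ha => le_of_eq (upA 2 (by omega) a ha).symm)
      (fun b hb => by
        apply le_trans (Finset.card_le_card (t := G.neighborFinset b) ?_)
        · rw [G.card_neighborFinset_eq_degree]; exact le_of_eq (hreg b)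
        · intro a ha
          rw [Finset.mem_bipartiteBelow] at ha
          rw [mem_neighborFinset]
          exact ha.2.symm)
    rw [card3] at hle
    have hq1 : 0 < q + 1 := by omega
    nlinarith [hle]
  have hdisjL : ∀ i j : ℕ, i ≠ j → Disjoint (L i) (L j) := by
    intro i j hij
    rw [Finset.disjoint_left]
    intro b h1 h2
    rw [memL] at h1 h2
    omega
  set U : Finset V := L 0 ∪ L 1 ∪ L 2 ∪ L 3 ∪ L 4 with hU
  have cardU : U.card = (L 0).card + (L 1).card + (L 2).card + (L 3).card + (L 4).card := by
    rw [hU]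
    rw [Finset.card_union_of_disjoint, Finset.card_union_of_disjoint,
      Finset.card_union_of_disjoint, Finset.card_union_of_disjoint]
    · exact hdisjL 0 1 (by omega)
    · exact Finset.disjoint_union_left.mpr ⟨hdisjL 0 2 (by omega), hdisjL 1 2 (by omega)⟩
    · exact Finset.disjoint_union_left.mpr ⟨Finset.disjoint_union_left.mpr
        ⟨hdisjL 0 3 (by omega), hdisjL 1 3 (by omega)⟩, hdisjL 2 3 (by omega)⟩
    · exact Finset.disjoint_union_left.mpr ⟨Finset.disjoint_union_left.mpr
        ⟨Finset.disjoint_union_left.mpr ⟨hdisjL 0 4 (by omega), hdisjL 1 4 (by omega)⟩,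
          hdisjL 2 4 (by omega)⟩, hdisjL 3 4 (by omega)⟩
  have hUcard : Fintype.card V ≤ U.card := by
    rw [cardU, card0, card1, card2, card3, hcard]
    nlinarith [card4]
  have hUuniv : U = Finset.univ := Finset.eq_univ_of_card U
    (le_antisymm (Finset.card_le_univ U) hUcard)
  constructor
  · intro u
    have : u ∈ U := hUuniv ▸ Finset.mem_univ u
    rw [hU] at this
    simp only [Finset.mem_union, memL] at this
    omega
  · have : (L 4).Nonempty := by
      rw [← Finset.card_pos]
      nlinarith [card4]
    obtain ⟨u, hu⟩ := this
    exact ⟨u, (memL _ _).mp hu⟩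

lemma RGAux.diam_eq_four {V : Type*} [Fintype V] (G : SimpleGraph V) (hconn : G.Connected)
    (h4 : ∀ u w : V, G.dist u w ≤ 4) (hex : ∃ u w : V, G.dist u w = 4) :
    G.diam = 4 := by
  have hne : Nonempty V := hconn.nonempty
  have hcoe : ∀ u w : V, G.edist u w = (G.dist u w : ℕ∞) := by
    intro u w
    have : G.edist u w ≠ ⊤ := edist_ne_top_iff_reachable.mpr (hconn.preconnected u w)
    rw [SimpleGraph.dist]
    exact (ENat.coe_toNat this).symm
  have hediam : G.ediam = 4 := by
    apply le_antisymm
    · apply ediam_le_of_edist_le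
      intro u w
      rw [hcoe]
      exact_mod_cast Nat.cast_le.mpr (h4 u w)
    · obtain ⟨u, w, huw⟩ := hex
      have := G.edist_le_ediam (u := u) (v := w)
      rw [hcoe, huw] at this
      exact_mod_cast this
  rw [SimpleGraph.diam, hediam]
  rfl

theorem not_radioGraceful_quadrangle_cage
    {V : Type*} [Fintype V] (G : SimpleGraph V) [DecidableRel G.Adj]
    (q : ℕ) (hq : 2 ≤ q)
    (hconn : G.Connected) (hbip : Bipartite G)
    (hreg : G.IsRegularOfDegree (q + 1)) (hgirth : G.girth = 8)
    (hcard : Fintype.card V = 2 * (q + 1) * (q ^ 2 + 1)) :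
    ¬ RadioGraceful G := by
  rintro ⟨f, hlab, hrange⟩
  obtain ⟨P, hP⟩ := hbip
  have hg8 := RGAux.girth_bound hgirth
  have hcount := fun v => RGAux.level_counts G q hq hP hconn hg8 hreg hcard v
  have h4 : ∀ u w : V, G.dist u w ≤ 4 := fun u w => (hcount u).1 w
  have hne : Nonempty V := hconn.nonempty
  obtain ⟨v0⟩ := hne
  have hdiam : G.diam = 4 := by
    obtain ⟨u, hu⟩ := (hcount v0).2
    exact RGAux.diam_eq_four G hconn h4 ⟨v0, u, hu⟩
  -- injectivity of f
  have hinj : Function.Injective f := by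
    intro a b hab
    by_contra hneq
    have hl := hlab a b hneq
    rw [hab, sub_self, abs_zero, hdiam] at hl
    have hd := h4 a b
    have : ((4 : ℕ) : ℤ) + 1 ≤ (G.dist a b : ℤ) := by simpa using hl
    have : (G.dist a b : ℤ) ≤ 4 := by exact_mod_cast hd
    omega
  have hfmem : ∀ u : V, f u ∈ Set.Icc 1 (Nat.card V) := by
    intro u; rw [← hrange]; exact Set.mem_range_self u
  have hsame : ∀ x w : V, G.dist x w = 4 → (x ∈ P ↔ w ∈ P) := by
    intro x w hd
    rw [RGAux.dist_parity hP (hconn.preconnected x w), hd]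
    decide
  have key : ∀ m : ℕ, ∀ x w : V, f w = f x + m → (x ∈ P ↔ w ∈ P) := by
    intro m
    induction m with
    | zero =>
      intro x w h
      have : x = w := hinj (by omega)
      rw [this]
    | succ m ih =>
      intro x w h
      have h1 : 1 ≤ f x := (hfmem x).1
      have h2 : f w ≤ Nat.card V := (hfmem w).2
      have hmem : f x + m ∈ Set.Icc 1 (Nat.card V) := ⟨by omega, by omega⟩
      rw [← hrange] at hmem
      obtain ⟨y, hy⟩ := hmem
      have hxy := ih x y hy
      have hyw : y ≠ w := by intro e; rw [e] at hy; omega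
      have hl := hlab y w hyw
      have habs : |(f y : ℤ) - (f w : ℤ)| = 1 := by
        have : (f y : ℤ) - (f w : ℤ) = -1 := by
          rw [hy, h]; push_cast; ring
        rw [this]; norm_num
      rw [hdiam, habs] at hl
      have hdle := h4 y w
      have hdist : G.dist y w = 4 := by
        have h5 : ((4 : ℕ) : ℤ) + 1 ≤ 1 + (G.dist y w : ℤ) := by simpa using hl
        have h6 : (4 : ℤ) ≤ (G.dist y w : ℤ) := by omega
        have h7 : (4 : ℕ) ≤ G.dist y w := by exact_mod_cast h6
        omega
      have hyw' := hsame y w hdist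
      tauto
  -- an edge exists
  have hdeg : (G.neighborFinset v0).card = q + 1 := by
    rw [G.card_neighborFinset_eq_degree]; exact hreg v0
  have : (G.neighborFinset v0).Nonempty := by
    rw [← Finset.card_pos, hdeg]; omega
  obtain ⟨w0, hw0⟩ := this
  rw [mem_neighborFinset] at hw0
  have hopp := hP v0 w0 hw0
  rcases le_total (f v0) (f w0) with hle | hle
  · have := key (f w0 - f v0) v0 w0 (by omega)
    tauto
  · have := key (f v0 - f w0) w0 v0 (by omega)
    tauto
end

section
/- Let ℓ ≥ 1 and let G be a finite simple graph on n ≥ 2ℓ + 1 vertices whose minimum degree satisfies δ(G) ≥ ((4ℓ - 1)/(4ℓ)) · n. Then G contains the ℓ-th power of a Hamiltonian cycle. -/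
open SimpleGraph

/-- `G` contains the `l`-th power of a Hamiltonian cycle: there is a cyclic
ordering of all vertices in which vertices at cyclic distance at most `l`
are adjacent. -/
def ContainsPowHamCycle {V : Type*} (G : SimpleGraph V) (l : ℕ) : Prop :=
  ∃ e : ZMod (Nat.card V) ≃ V,
    ∀ (i : ZMod (Nat.card V)) (k : ℕ), 1 ≤ k → k ≤ l →
      G.Adj (e i) (e (i + (k : ZMod (Nat.card V))))

theorem powHamCycle_of_min_degree
    {V : Type*} [Fintype V] (G : SimpleGraph V) [DecidableRel G.Adj]
    (l : ℕ) (hl : 1 ≤ l) (hn : 2 * l + 1 ≤ Fintype.card V)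
    (hdeg : (4 * (l : ℚ) - 1) / (4 * l) * (Fintype.card V : ℚ) ≤ (G.minDegree : ℚ)) :
    ContainsPowHamCycle G l := by
  classical
  unfold ContainsPowHamCycle
  rw [Nat.card_eq_fintype_card]
  set n := Fintype.card V with hndef
  haveI : NeZero n := ⟨by omega⟩
  haveI : Nonempty V := Fintype.card_pos_iff.mp (by omega)
  -- basic degree facts
  have hδle : G.minDegree + 1 ≤ n := by
    obtain ⟨v⟩ := ‹Nonempty V›
    have h1 := G.minDegree_le_degree v
    have h2 := G.degree_lt_card_verts v
    omega
  -- key arithmetic: 4 * l * (n - δ) ≤ n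
  have hkey : 4 * l * (n - G.minDegree) ≤ n := by
    have h4l : (0 : ℚ) < 4 * l := by positivity
    rw [div_mul_eq_mul_div, div_le_iff₀ h4l] at hdeg
    have : ((4 * l * (n - G.minDegree) : ℕ) : ℚ) ≤ (n : ℚ) := by
      push_cast [Nat.cast_sub (by omega : G.minDegree ≤ n)]
      nlinarith [hdeg]
    exact_mod_cast this
  -- badness of an ordering
  set B : (ZMod n ≃ V) → Finset (ZMod n × ℕ) := fun e =>
    (Finset.univ ×ˢ Finset.Icc 1 l).filter
      (fun p => ¬ G.Adj (e p.1) (e (p.1 + (p.2 : ZMod n)))) with hBdef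
  -- nonzero casts
  have hne0 : ∀ m : ℤ, 1 ≤ m.natAbs → m.natAbs ≤ l → (m : ZMod n) ≠ 0 := by
    intro m h1 h2 h0
    rw [ZMod.intCast_zmod_eq_zero_iff_dvd] at h0
    have h3 : n ∣ m.natAbs := by
      have := Int.natAbs_dvd_natAbs.mpr h0
      simpa using this
    have := Nat.le_of_dvd (by omega) h3
    omega
  -- the descent step
  have descent : ∀ e : ZMod n ≃ V, (B e).Nonempty →
      ∃ e' : ZMod n ≃ V, (B e').card < (B e).card := by
    intro e hne
    obtain ⟨⟨i, k⟩, hik⟩ := hne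
    rw [hBdef, Finset.mem_filter, Finset.mem_product, Finset.mem_Icc] at hik
    obtain ⟨⟨-, hk1, hk2⟩, hbad⟩ := hik
    set u := e i with hu
    -- counting non-neighbors
    have hS : ∀ x : V, (Finset.univ.filter (fun w => w ≠ x ∧ ¬ G.Adj x w)).card
        ≤ n - G.minDegree - 1 := by
      intro x
      have h1 : Finset.univ.filter (fun w => w ≠ x ∧ ¬ G.Adj x w)
          = (G.neighborFinset x)ᶜ \ {x} := by
        ext w
        simp only [Finset.mem_filter, Finset.mem_univ, true_and, Finset.mem_sdiff,
          Finset.mem_compl, mem_neighborFinset, Finset.mem_singleton]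
        tauto
      rw [h1, Finset.card_sdiff_of_subset (by simp [SimpleGraph.irrefl]),
        Finset.card_compl, card_neighborFinset_eq_degree, Finset.card_singleton]
      have := G.minDegree_le_degree x
      have := G.degree_lt_card_verts x
      omega
    set M : Finset ℤ := (Finset.Icc (-(l : ℤ)) l).erase 0 with hMdef
    have hMmem : ∀ m : ℤ, 1 ≤ m.natAbs → m.natAbs ≤ l → m ∈ M := by
      intro m h1 h2
      rw [hMdef, Finset.mem_erase, Finset.mem_Icc]
      omega
    have hIcard : (Finset.Icc (-(l : ℤ)) l).card = 2 * l + 1 := by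
      rw [Int.card_Icc]
      omega
    have hMcard : M.card ≤ 2 * l := by
      rw [hMdef, Finset.card_erase_of_mem (by rw [Finset.mem_Icc]; omega), hIcard]
      omega
    set Z : Finset (ZMod n) := (Finset.Icc (-(l : ℤ)) l).image
      (fun t : ℤ => i + (t : ZMod n)) with hZdef
    have hZcard : Z.card ≤ 2 * l + 1 := by
      rw [hZdef]
      exact le_trans Finset.card_image_le hIcard.le
    set A : Finset (ZMod n) := M.biUnion (fun m =>
      (Finset.univ.filter (fun w => w ≠ u ∧ ¬ G.Adj u w)).image
        (fun w => e.symm w - (m : ZMod n))) with hAdef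
    have hAcard : A.card ≤ 2 * l * (n - G.minDegree - 1) := by
      refine le_trans Finset.card_biUnion_le ?_
      refine le_trans (Finset.sum_le_card_nsmul M _ (n - G.minDegree - 1)
        (fun m _ => le_trans Finset.card_image_le (hS u))) ?_
      simp only [smul_eq_mul]
      exact Nat.mul_le_mul_right _ hMcard
    set C : Finset (ZMod n) := M.biUnion (fun m =>
      (Finset.univ.filter (fun w => w ≠ e (i + (m : ZMod n))
        ∧ ¬ G.Adj (e (i + (m : ZMod n))) w)).image e.symm) with hCdef
    have hCcard : C.card ≤ 2 * l * (n - G.minDegree - 1) := by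
      refine le_trans Finset.card_biUnion_le ?_
      refine le_trans (Finset.sum_le_card_nsmul M _ (n - G.minDegree - 1)
        (fun m _ => le_trans Finset.card_image_le (hS _))) ?_
      simp only [smul_eq_mul]
      exact Nat.mul_le_mul_right _ hMcard
    -- there is a good position j
    have hex : ∃ j : ZMod n, j ∉ Z ∪ A ∪ C := by
      by_contra hcon
      push_neg at hcon
      have hsub : (Finset.univ : Finset (ZMod n)) ⊆ Z ∪ A ∪ C :=
        fun j _ => hcon j
      have hle := Finset.card_le_card hsub
      rw [Finset.card_univ, ZMod.card] at hle
      have h1 := Finset.card_union_le (Z ∪ A) C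
      have h2 := Finset.card_union_le Z A
      -- arithmetic contradiction
      set D := n - G.minDegree with hD
      have hD1 : 1 ≤ D := by omega
      have e1 : 2 * l * (D - 1) + 2 * l = 2 * l * D := by
        have : (D - 1) + 1 = D := by omega
        calc 2 * l * (D - 1) + 2 * l = 2 * l * ((D - 1) + 1) := by ring
          _ = 2 * l * D := by rw [this]
      have e2 : 2 * l * D + 2 * l * D = 4 * l * D := by ring
      omega
    obtain ⟨j, hj⟩ := hex
    have hjZ : j ∉ Z := fun h => hj (by simp [Finset.mem_union, h])
    have hjA : j ∉ A := fun h => hj (by simp [Finset.mem_union, h])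
    have hjC : j ∉ C := fun h => hj (by simp [Finset.mem_union, h])
    -- the three properties of j
    have hj1 : ∀ t : ℤ, t.natAbs ≤ l → j ≠ i + (t : ZMod n) := by
      intro t ht heq
      exact hjZ (by
        rw [hZdef]
        exact Finset.mem_image.mpr ⟨t, Finset.mem_Icc.mpr (by omega), heq.symm⟩)
    have hj2 : ∀ m : ℤ, 1 ≤ m.natAbs → m.natAbs ≤ l →
        G.Adj u (e (j + (m : ZMod n))) := by
      intro m hm1 hm2
      by_contra hadj
      by_cases hw : e (j + (m : ZMod n)) = u
      · have heq : j + (m : ZMod n) = i := e.injective (by rw [hw, hu])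
        refine hj1 (-m) (by omega) ?_
        push_cast
        rw [← heq]
        ring
      · refine hjA ?_
        rw [hAdef]
        refine Finset.mem_biUnion.mpr ⟨m, hMmem m hm1 hm2, Finset.mem_image.mpr
          ⟨e (j + (m : ZMod n)), ?_, ?_⟩⟩
        · simp only [Finset.mem_filter, Finset.mem_univ, true_and]
          exact ⟨hw, hadj⟩
        · rw [Equiv.symm_apply_apply]
          ring
    have hj3 : ∀ m : ℤ, 1 ≤ m.natAbs → m.natAbs ≤ l →
        G.Adj (e j) (e (i + (m : ZMod n))) := by
      intro m hm1 hm2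
      by_contra hadj
      by_cases hw : e j = e (i + (m : ZMod n))
      · exact hj1 m (by omega) (e.injective hw)
      · refine hjC ?_
        rw [hCdef]
        refine Finset.mem_biUnion.mpr ⟨m, hMmem m hm1 hm2, Finset.mem_image.mpr
          ⟨e j, ?_, Equiv.symm_apply_apply _ _⟩⟩
        simp only [Finset.mem_filter, Finset.mem_univ, true_and]
        exact ⟨fun h => hw h, fun h => hadj h.symm⟩
    have hij : i ≠ j := by
      intro h
      exact hj1 0 (by simp) (by simp [← h])
    -- the swapped ordering
    set e' : ZMod n ≃ V := (Equiv.swap i j).trans e with he'def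
    have he'i : e' i = e j := by simp [he'def, Equiv.swap_apply_left]
    have he'j : e' j = e i := by simp [he'def, Equiv.swap_apply_right]
    have he'other : ∀ p : ZMod n, p ≠ i → p ≠ j → e' p = e p := by
      intro p h1 h2
      simp [he'def, Equiv.swap_apply_of_ne_of_ne h1 h2]
    -- casts for natural offsets
    -- (i, k) is not bad for e'
    have hik' : (i, k) ∉ B e' := by
      rw [hBdef, Finset.mem_filter]
      rintro ⟨-, hbad'⟩
      apply hbad'
      have h1 : i + (k : ZMod n) ≠ i := by
        intro h
        have : (k : ZMod n) = 0 := by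
          have := add_left_cancel (a := i) (b := (k : ZMod n)) (c := 0)
            (by rw [add_zero]; exact h)
          exact this
        exact hne0 k (by omega) (by omega) (by push_cast; exact this)
      have h2 : i + (k : ZMod n) ≠ j := by
        intro h
        exact hj1 k (by omega) (by push_cast; exact h.symm)
      simp only [he'i, he'other _ h1 h2]
      have := hj3 k (by omega) (by omega)
      push_cast at this
      exact this
    -- every pair bad for e' is bad for e
    have hsub : B e' ⊆ B e := by
      rintro ⟨p, k'⟩ hmem'
      rw [hBdef, Finset.mem_filter, Finset.mem_product, Finset.mem_Icc] at hmem' ⊢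
      obtain ⟨⟨-, hk'1, hk'2⟩, hbad'⟩ := hmem'
      refine ⟨⟨Finset.mem_univ _, hk'1, hk'2⟩, ?_⟩
      set q := p + (k' : ZMod n) with hq
      have hqp : q ≠ p := by
        rw [hq]
        intro h
        have h0 : (k' : ZMod n) = 0 := by
          have := add_left_cancel (a := p) (b := (k' : ZMod n)) (c := 0)
            (by rw [add_zero]; exact h)
          exact this
        exact hne0 k' (by omega) (by omega) (by push_cast; exact h0)
      by_cases hpi : p = i
      · exfalso
        apply hbad'
        subst hpi
        have hqi : q ≠ p := hqp
        have hqj : q ≠ j := by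
          intro h
          exact hj1 k' (by omega) (by push_cast; rw [← hq, h])
        rw [he'i, he'other q hqi hqj]
        have := hj3 k' (by omega) (by omega)
        push_cast at this
        rwa [← hq] at this
      · by_cases hqi : q = i
        · exfalso
          apply hbad'
          have hpj : p ≠ j := by
            intro h
            refine hj1 (-(k' : ℤ)) (by omega) ?_
            push_cast
            rw [← h]
            have : p = q - (k' : ZMod n) := by rw [hq]; ring
            rw [this, hqi]
            ring
          rw [he'other p hpi hpj, hqi, he'i]
          have := hj3 (-(k' : ℤ)) (by omega) (by omega)
          push_cast at this
          have hpe : i + -(k' : ZMod n) = p := by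
            rw [← hqi, hq]; ring
          rw [hpe] at this
          exact this.symm
        · by_cases hpj : p = j
          · exfalso
            apply hbad'
            subst hpj
            have hqj : q ≠ p := hqp
            rw [he'j, he'other q hqi hqj]
            have := hj2 k' (by omega) (by omega)
            push_cast at this
            rw [← hq] at this
            exact this
          · by_cases hqj : q = j
            · exfalso
              apply hbad'
              rw [he'other p hpi hpj, hqj, he'j]
              have := hj2 (-(k' : ℤ)) (by omega) (by omega)
              push_cast at this
              have hpe : j + -(k' : ZMod n) = p := by
                rw [← hqj, hq]; ring
              rw [hpe] at this
              exact this.symm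
            · rw [he'other p hpi hpj, he'other q hqi hqj] at hbad'
              exact hbad'
    -- badness strictly decreases
    have hikmem : (i, k) ∈ B e := by
      rw [hBdef, Finset.mem_filter, Finset.mem_product, Finset.mem_Icc]
      exact ⟨⟨Finset.mem_univ _, hk1, hk2⟩, hbad⟩
    exact ⟨e', Finset.card_lt_card
      ((Finset.ssubset_iff_of_subset hsub).mpr ⟨(i, k), hikmem, hik'⟩)⟩
  -- iterate descent
  have main : ∀ b : ℕ, ∀ e : ZMod n ≃ V, (B e).card ≤ b → ∃ e', B e' = ∅ := by
    intro b
    induction b with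
    | zero =>
      intro e he
      refine ⟨e, Finset.card_eq_zero.mp (by omega)⟩
    | succ b ih =>
      intro e he
      by_cases h : (B e).Nonempty
      · obtain ⟨e', hlt⟩ := descent e h
        exact ih e' (by omega)
      · exact ⟨e, Finset.not_nonempty_iff_eq_empty.mp h⟩
  have e0 : ZMod n ≃ V := Fintype.equivOfCardEq (by rw [ZMod.card])
  obtain ⟨e, he⟩ := main (B e0).card e0 le_rfl
  refine ⟨e, fun i k hk1 hk2 => ?_⟩
  by_contra hadj
  have hmem : (i, k) ∈ B e := by
    rw [hBdef, Finset.mem_filter, Finset.mem_product, Finset.mem_Icc]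
    exact ⟨⟨Finset.mem_univ _, hk1, hk2⟩, hadj⟩
  rw [he] at hmem
  exact Finset.notMem_empty _ hmem
end

section
/- Let q ≥ 2 and let G be a finite connected bipartite (q+1)-regular simple graph of girth 12 on 2(q³+1)(q²+q+1) vertices (a (q+1,12)-cage, the incidence graph of a generalized hexagon of order q). Then G is not radio graceful. -/
open SimpleGraph

section Aux

variable {V : Type*} (G : SimpleGraph V)

lemma bip_walk_parity {P : Set V} (hP : IsBipartition G P) :
    ∀ {u v : V} (p : G.Walk u v), ((u ∈ P ↔ v ∈ P) ↔ Even p.length) := by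
  intro u v p
  induction p with
  | nil => simp
  | @cons a b c h p ih =>
      rw [Walk.length_cons, Nat.even_add_one, ← ih]
      have := hP a b h
      tauto

lemma bip_dist_parity (hconn : G.Connected) {P : Set V} (hP : IsBipartition G P)
    (u v : V) : ((u ∈ P ↔ v ∈ P) ↔ Even (G.dist u v)) := by
  obtain ⟨p, hp⟩ := hconn.exists_walk_length_eq_dist u v
  rw [← hp]; exact bip_walk_parity G hP p

lemma adj_dist_cases (hconn : G.Connected) {P : Set V} (hP : IsBipartition G P)
    {u w : V} (r : V) (h : G.Adj u w) :
    G.dist r w = G.dist r u + 1 ∨ G.dist r u = G.dist r w + 1 := by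
  have h1 : G.dist u w = 1 := dist_eq_one_iff_adj.mpr h
  have h1' : G.dist w u = 1 := dist_eq_one_iff_adj.mpr h.symm
  have t1 : G.dist r w ≤ G.dist r u + 1 := by
    have := hconn.dist_triangle (u := r) (v := u) (w := w); omega
  have t2 : G.dist r u ≤ G.dist r w + 1 := by
    have := hconn.dist_triangle (u := r) (v := w) (w := u); omega
  have hne : G.dist r u ≠ G.dist r w := by
    intro he
    have e1 := bip_dist_parity G hconn hP r u
    have e2 := bip_dist_parity G hconn hP r w
    rw [he] at e1
    have := hP u w h
    tauto
  omega

lemma twelve_le_of_two_down (hg : ∀ (x : V) (c : G.Walk x x), c.IsCycle → 12 ≤ c.length)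
    {v a b : V} (hab : a ≠ b) (hva : G.Adj v a) (hvb : G.Adj v b)
    (p : G.Walk a b) (hvp : v ∉ p.support) : 12 ≤ p.length + 2 := by
  classical
  set q := p.bypass with hq
  have hqp : q.IsPath := p.bypass_isPath
  have hvq : v ∉ q.support := fun h => hvp (p.support_bypass_subset h)
  have hql : q.length ≤ p.length := p.length_bypass_le
  have hbmem : b ∈ q.support := Walk.end_mem_support q
  have hbq : (q.concat hvb.symm).IsPath := by
    rw [Walk.isPath_def, Walk.support_concat]
    refine List.Nodup.append hqp.support_nodup (List.nodup_singleton v) ?_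
    intro x hx hx'
    rw [List.mem_singleton] at hx'
    subst hx'
    exact hvq hx
  have hcyc : (Walk.cons hva (q.concat hvb.symm)).IsCycle := by
    rw [Walk.cons_isCycle_iff]
    refine ⟨hbq, ?_⟩
    rw [Walk.edges_concat, List.concat_eq_append]
    intro hmem
    rcases List.mem_append.mp hmem with hmem | hmem
    · exact hvq (Walk.fst_mem_support_of_mem_edges q hmem)
    · rw [List.mem_singleton] at hmem
      rw [Sym2.eq_iff] at hmem
      rcases hmem with ⟨h1, h2⟩ | ⟨h1, h2⟩
      · exact hab (h2.trans h1)
      · exact hab h2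
  have := hg v _ hcyc
  rw [Walk.length_cons, Walk.length_concat] at this
  omega

lemma dist_le_of_mem_support [DecidableEq V] {r u x : V} (p : G.Walk r u)
    (hx : x ∈ p.support) : G.dist r x ≤ p.length := by
  calc G.dist r x ≤ (p.takeUntil x hx).length := dist_le _
  _ ≤ p.length := Walk.length_takeUntil_le p hx

lemma exists_down (hconn : G.Connected) {r u : V} {i : ℕ} (h : G.dist r u = i + 1) :
    ∃ a, G.Adj u a ∧ G.dist r a = i := by
  obtain ⟨p, hp⟩ := hconn.exists_walk_length_eq_dist r u
  obtain ⟨w, hw⟩ : ∃ w : G.Walk u r, w.length = i + 1 :=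
    ⟨p.reverse, by rw [Walk.length_reverse, hp, h]⟩
  cases w with
  | nil => exact absurd hw (by simp)
  | @cons _ b _ h' t =>
    refine ⟨b, h', ?_⟩
    rw [Walk.length_cons] at hw
    have hle : G.dist r b ≤ i := by
      have h2 := dist_le (p := t.reverse)
      rw [Walk.length_reverse] at h2
      omega
    have h1 : G.dist b u = 1 := dist_eq_one_iff_adj.mpr h'.symm
    have := hconn.dist_triangle (u := r) (v := b) (w := u)
    omega

lemma down_unique [DecidableEq V] (hconn : G.Connected)
    (hg : ∀ (x : V) (c : G.Walk x x), c.IsCycle → 12 ≤ c.length)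
    {r u a b : V} {i : ℕ} (hi : i ≤ 4)
    (hu : G.dist r u = i + 1) (ha : G.dist r a = i) (hb : G.dist r b = i)
    (hua : G.Adj u a) (hub : G.Adj u b) (hab : a ≠ b) : False := by
  obtain ⟨pa, hpa⟩ := hconn.exists_walk_length_eq_dist r a
  obtain ⟨pb, hpb⟩ := hconn.exists_walk_length_eq_dist r b
  set p : G.Walk a b := pa.reverse.append pb with hpdef
  have hlen : p.length = 2 * i := by
    rw [hpdef, Walk.length_append, Walk.length_reverse, hpa, hpb, ha, hb]; ring
  have hvp : u ∉ p.support := by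
    intro h
    rw [hpdef, Walk.mem_support_append_iff] at h
    rcases h with h | h
    · rw [Walk.support_reverse, List.mem_reverse] at h
      have := dist_le_of_mem_support G pa h
      omega
    · have := dist_le_of_mem_support G pb h
      omega
  have := twelve_le_of_two_down G hg hab hua hub p hvp
  omega

lemma double_count [DecidableEq V] [Fintype V] [DecidableRel G.Adj] (A B : Finset V) :
    (∑ u ∈ A, (B.filter (G.Adj u)).card) = ∑ w ∈ B, (A.filter (G.Adj w)).card := by
  simp_rw [Finset.card_filter]
  rw [Finset.sum_comm]
  refine Finset.sum_congr rfl fun w _ => Finset.sum_congr rfl fun u _ => ?_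
  simp [G.adj_comm u w]

variable [Fintype V] [DecidableRel G.Adj]

/-- The sphere of radius `i` around `r`. -/
noncomputable def sph (r : V) (i : ℕ) : Finset V := Finset.univ.filter (fun w => G.dist r w = i)

lemma mem_sph {r w : V} {i : ℕ} : w ∈ sph G r i ↔ G.dist r w = i := by
  simp [sph]

lemma dist_facts (q : ℕ) (hq : 2 ≤ q)
    (hconn : G.Connected) (hbip : Bipartite G)
    (hreg : G.IsRegularOfDegree (q + 1))
    (hg : ∀ (x : V) (c : G.Walk x x), c.IsCycle → 12 ≤ c.length)
    (hcard : Fintype.card V = 2 * (q ^ 3 + 1) * (q ^ 2 + q + 1)) (r : V) :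
    (∀ w, G.dist r w ≤ 6) ∧ ∃ w, G.dist r w = 6 := by
  classical
  obtain ⟨P, hP⟩ := hbip
  have nb_cases : ∀ (u w : V), G.Adj u w →
      G.dist r w = G.dist r u + 1 ∨ G.dist r u = G.dist r w + 1 :=
    fun u w h => adj_dist_cases G hconn hP r h
  -- down-neighbour count
  have card_down : ∀ i, i ≤ 4 → ∀ u, G.dist r u = i + 1 →
      ((G.neighborFinset u).filter (fun a => G.dist r a = i)).card = 1 := by
    intro i hi u hu
    obtain ⟨a, haadj, had⟩ := exists_down G hconn hu
    refine le_antisymm ?_ ?_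
    · rw [Finset.card_le_one]
      intro x hx y hy
      simp only [Finset.mem_filter, mem_neighborFinset] at hx hy
      by_contra hxy
      exact down_unique G hconn hg hi hu hx.2 hy.2 hx.1 hy.1 hxy
    · rw [Nat.one_le_iff_ne_zero, ← Nat.pos_iff_ne_zero, Finset.card_pos]
      exact ⟨a, by simp [mem_neighborFinset, haadj, had]⟩
  -- up-neighbour count
  have card_up : ∀ i, i ≤ 4 → ∀ u, G.dist r u = i + 1 →
      ((G.neighborFinset u).filter (fun a => G.dist r a = i + 2)).card = q := by
    intro i hi u hu
    have hsplit := Finset.card_filter_add_card_filter_not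
      (s := G.neighborFinset u) (p := fun a => G.dist r a = i)
    have hdeg : (G.neighborFinset u).card = q + 1 := hreg u
    have he : (G.neighborFinset u).filter (fun a => ¬ G.dist r a = i)
        = (G.neighborFinset u).filter (fun a => G.dist r a = i + 2) := by
      apply Finset.filter_congr
      intro x hx
      rw [mem_neighborFinset] at hx
      have := nb_cases u x hx
      omega
    rw [he] at hsplit
    have hd := card_down i hi u hu
    omega
  have cardS1 : (sph G r 1).card = q + 1 := by
    have : sph G r 1 = G.neighborFinset r := by
      ext w
      rw [mem_sph, mem_neighborFinset, dist_eq_one_iff_adj]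
    rw [this, card_neighborFinset_eq_degree]
    exact hreg r
  -- the chain
  have chain : ∀ j, 1 ≤ j → j ≤ 4 → (sph G r (j+1)).card = q * (sph G r j).card := by
    intro j hj1 hj4
    have hcount := double_count G (sph G r j) (sph G r (j+1))
    have hL : ∀ u ∈ sph G r j, ((sph G r (j+1)).filter (G.Adj u)).card = q := by
      intro u hu
      rw [mem_sph] at hu
      obtain ⟨i, rfl⟩ : ∃ i, j = i + 1 := ⟨j - 1, by omega⟩
      have hcu := card_up i (by omega) u hu
      have : (sph G r (i+1+1)).filter (G.Adj u)
          = (G.neighborFinset u).filter (fun a => G.dist r a = i + 2) := by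
        ext a
        simp only [Finset.mem_filter, mem_sph, mem_neighborFinset]
        constructor
        · rintro ⟨h1, h2⟩; exact ⟨h2, by omega⟩
        · rintro ⟨h1, h2⟩; exact ⟨by omega, h1⟩
      rw [this, hcu]
    have hR : ∀ w ∈ sph G r (j+1), ((sph G r j).filter (G.Adj w)).card = 1 := by
      intro w hw
      rw [mem_sph] at hw
      have hcd := card_down j hj4 w hw
      have : (sph G r j).filter (G.Adj w)
          = (G.neighborFinset w).filter (fun a => G.dist r a = j) := by
        ext a
        simp only [Finset.mem_filter, mem_sph, mem_neighborFinset]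
        tauto
      rw [this, hcd]
    rw [Finset.sum_congr rfl hL, Finset.sum_congr rfl hR] at hcount
    simp only [Finset.sum_const, smul_eq_mul, mul_one] at hcount
    rw [← hcount, mul_comm]
  have c0 : (sph G r 0).card = 1 := by
    have : sph G r 0 = {r} := by
      ext w
      rw [mem_sph, Finset.mem_singleton, hconn.dist_eq_zero_iff, eq_comm]
    rw [this, Finset.card_singleton]
  have c2 : (sph G r 2).card = (q+1) * q := by
    rw [chain 1 le_rfl (by omega), cardS1]; ring
  have c3 : (sph G r 3).card = (q+1) * q^2 := by
    rw [chain 2 (by omega) (by omega), c2]; ring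
  have c4 : (sph G r 4).card = (q+1) * q^3 := by
    rw [chain 3 (by omega) (by omega), c3]; ring
  have c5 : (sph G r 5).card = (q+1) * q^4 := by
    rw [chain 4 (by omega) (by omega), c4]; ring
  set T : Finset V := Finset.univ.filter (fun w => 6 ≤ G.dist r w) with hTdef
  have peel : ∀ k, (Finset.univ.filter (fun w => k ≤ G.dist r w)).card
      = (sph G r k).card + (Finset.univ.filter (fun w => k+1 ≤ G.dist r w)).card := by
    intro k
    have h1 := Finset.card_filter_add_card_filter_not
      (s := Finset.univ.filter (fun w => k ≤ G.dist r w)) (p := fun w => G.dist r w = k)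
    rw [Finset.filter_filter, Finset.filter_filter] at h1
    have e1 : Finset.univ.filter (fun w => k ≤ G.dist r w ∧ G.dist r w = k) = sph G r k := by
      ext w; rw [mem_sph]; simp only [Finset.mem_filter, Finset.mem_univ, true_and]; omega
    have e2 : Finset.univ.filter (fun w => k ≤ G.dist r w ∧ ¬ G.dist r w = k)
        = Finset.univ.filter (fun w => k+1 ≤ G.dist r w) := by
      ext w; simp only [Finset.mem_filter, Finset.mem_univ, true_and]; omega
    rw [e1, e2] at h1
    omega
  have hfull : (Finset.univ.filter (fun w => 0 ≤ G.dist r w)) = Finset.univ := by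
    simp
  have hNeq : Fintype.card V = (sph G r 0).card + (sph G r 1).card + (sph G r 2).card
      + (sph G r 3).card + (sph G r 4).card + (sph G r 5).card + T.card := by
    have p0 := peel 0
    have p1 := peel 1
    have p2 := peel 2
    have p3 := peel 3
    have p4 := peel 4
    have p5 := peel 5
    rw [hfull, Finset.card_univ] at p0
    simp only [Nat.reduceAdd] at p0 p1 p2 p3 p4 p5
    rw [← hTdef] at p5
    omega
  have hT : T.card = q^5 := by
    have hZ : (T.card : ℤ) = (q:ℤ)^5 := by
      have h1 : ((Fintype.card V : ℕ) : ℤ) = 2 * ((q:ℤ) ^ 3 + 1) * ((q:ℤ) ^ 2 + (q:ℤ) + 1) := by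
        rw [hcard]; push_cast; ring
      have h2 : ((Fintype.card V : ℕ) : ℤ) = 1 + ((q:ℤ)+1) + ((q:ℤ)+1)*(q:ℤ)
          + ((q:ℤ)+1)*(q:ℤ)^2 + ((q:ℤ)+1)*(q:ℤ)^3 + ((q:ℤ)+1)*(q:ℤ)^4 + (T.card : ℤ) := by
        rw [hNeq, c0, cardS1, c2, c3, c4, c5]; push_cast; ring
      linear_combination h1 - h2
    exact_mod_cast hZ
  -- every vertex beyond distance 5 is at distance exactly 6
  have claim6 : ∀ w, 6 ≤ G.dist r w → G.dist r w = 6 := by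
    by_contra hcon
    push_neg at hcon
    obtain ⟨w0, hw06, hw0ne⟩ := hcon
    have hw0T : w0 ∈ T := by rw [hTdef, Finset.mem_filter]; exact ⟨Finset.mem_univ _, hw06⟩
    have hcount := double_count G (sph G r 5) T
    have hL : ∀ u ∈ sph G r 5, (T.filter (G.Adj u)).card = q := by
      intro u hu
      rw [mem_sph] at hu
      have hcu := card_up 4 le_rfl u hu
      have : T.filter (G.Adj u)
          = (G.neighborFinset u).filter (fun a => G.dist r a = 6) := by
        ext a
        simp only [hTdef, Finset.mem_filter, Finset.mem_univ, true_and, mem_neighborFinset]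
        constructor
        · rintro ⟨h1, h2⟩
          refine ⟨h2, ?_⟩
          have := nb_cases u a h2
          omega
        · rintro ⟨h1, h2⟩; exact ⟨by omega, h1⟩
      rw [this] at *
      exact hcu
    rw [Finset.sum_congr rfl hL] at hcount
    simp only [Finset.sum_const, smul_eq_mul] at hcount
    -- bound the right side
    have f0 : ((sph G r 5).filter (G.Adj w0)).card = 0 := by
      rw [Finset.card_eq_zero, Finset.filter_eq_empty_iff]
      intro a ha hadj
      rw [mem_sph] at ha
      have := nb_cases w0 a hadj
      omega
    have hbound : ∀ w ∈ T, ((sph G r 5).filter (G.Adj w)).card ≤ q + 1 := by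
      intro w _
      calc ((sph G r 5).filter (G.Adj w)).card
          ≤ (G.neighborFinset w).card := by
            apply Finset.card_le_card
            intro a ha
            rw [Finset.mem_filter] at ha
            rw [mem_neighborFinset]
            exact ha.2
      _ = G.degree w := (card_neighborFinset_eq_degree G w)
      _ = q + 1 := hreg w
    have hsplit := Finset.sum_erase_add T (fun w => ((sph G r 5).filter (G.Adj w)).card) hw0T
    have hle : ∑ w ∈ T.erase w0, ((sph G r 5).filter (G.Adj w)).card
        ≤ (q+1) * (T.erase w0).card := by
      rw [mul_comm]
      apply Finset.sum_le_card_nsmul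
      intro w hw
      exact hbound w (Finset.erase_subset _ _ hw)
    have hce : (T.erase w0).card = q^5 - 1 := by
      rw [Finset.card_erase_of_mem hw0T, hT]
    have hq5 : 1 ≤ q^5 := Nat.one_le_pow _ _ (by omega)
    simp only [f0, add_zero] at hsplit
    rw [hsplit, hce] at hle
    rw [c5] at hcount
    have hXle : (q+1) * q^4 * q ≤ (q+1) * (q^5 - 1) := by
      calc (q+1) * q^4 * q = ∑ w ∈ T, ((sph G r 5).filter (G.Adj w)).card := hcount
      _ ≤ (q+1) * (q^5 - 1) := hle
    have heq : (q+1) * q^5 = (q+1) * q^4 * q := by ring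
    have hXle' : (q+1) * q^5 ≤ (q+1) * (q^5 - 1) := heq ▸ hXle
    have hlt : (q+1) * (q^5 - 1) < (q+1) * q^5 :=
      mul_lt_mul_of_pos_left (by omega) (by omega)
    exact lt_irrefl _ (lt_of_le_of_lt hXle' hlt)
  have hle6 : ∀ w, G.dist r w ≤ 6 := by
    intro w
    by_cases h : 6 ≤ G.dist r w
    · exact le_of_eq (claim6 w h)
    · omega
  refine ⟨hle6, ?_⟩
  have hTne : T.Nonempty := by
    rw [← Finset.card_pos, hT]
    exact Nat.pow_pos (by omega)
  obtain ⟨w, hw⟩ := hTne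
  rw [hTdef, Finset.mem_filter] at hw
  exact ⟨w, claim6 w hw.2⟩

end Aux

theorem not_radioGraceful_hexagon_cage
    {V : Type*} [Fintype V] (G : SimpleGraph V) [DecidableRel G.Adj]
    (q : ℕ) (hq : 2 ≤ q)
    (hconn : G.Connected) (hbip : Bipartite G)
    (hreg : G.IsRegularOfDegree (q + 1)) (hgirth : G.girth = 12)
    (hcard : Fintype.card V = 2 * (q ^ 3 + 1) * (q ^ 2 + q + 1)) :
    ¬ RadioGraceful G := by
  classical
  rintro ⟨f, hf, hrange⟩
  obtain ⟨P, hP⟩ := hbip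
  -- all cycles have length at least 12
  have hgn : G.egirth.toNat = 12 := hgirth
  have hnetop : G.egirth ≠ ⊤ := by
    intro h
    rw [h] at hgn
    simp at hgn
  have hegirth : G.egirth = 12 := by
    rw [← ENat.coe_toNat hnetop, hgn]
    rfl
  have hg : ∀ (x : V) (c : G.Walk x x), c.IsCycle → 12 ≤ c.length := by
    intro x c hc
    have h12 : (12 : ℕ∞) ≤ (c.length : ℕ∞) :=
      (le_egirth.mp (le_of_eq hegirth.symm)) x c hc
    exact_mod_cast h12
  have hN : 0 < Fintype.card V := by rw [hcard]; positivity
  have : Nonempty V := Fintype.card_pos_iff.mp hN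
  have hdf := dist_facts G q hq hconn ⟨P, hP⟩ hreg hg hcard
  have hle6 : ∀ u v : V, G.dist u v ≤ 6 := fun u v => (hdf u).1 v
  have hedist : ∀ u v : V, G.edist u v = (G.dist u v : ℕ∞) := by
    intro u v
    have hne := edist_ne_top_iff_reachable.mpr (hconn u v)
    rw [SimpleGraph.dist, ENat.coe_toNat hne]
  have hediam : G.ediam ≠ ⊤ := by
    intro htop
    have hle : G.ediam ≤ (6 : ℕ∞) := by
      apply ediam_le_of_edist_le
      intro u v
      rw [hedist u v]
      exact_mod_cast hle6 u v
    rw [htop] at hle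
    exact absurd (le_antisymm le_top hle) (by simp)
  have hdiam : G.diam = 6 := by
    refine le_antisymm ?_ ?_
    · obtain ⟨u, v, huv⟩ := exists_dist_eq_diam (G := G)
      rw [← huv]; exact hle6 u v
    · obtain ⟨w, hw⟩ := (hdf (Classical.arbitrary V)).2
      have := dist_le_diam hediam (u := Classical.arbitrary V) (v := w)
      omega
  set N := Fintype.card V with hNdef
  have hNcard : Nat.card V = N := Nat.card_eq_fintype_card
  rw [hNcard] at hrange
  have hmem : ∀ v, f v ∈ Set.Icc 1 N := fun v => hrange ▸ Set.mem_range_self v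
  have hsurj : ∀ n, 1 ≤ n → n ≤ N → ∃ v, f v = n := by
    intro n h1 h2
    have : n ∈ Set.range f := by rw [hrange]; exact ⟨h1, h2⟩
    exact this
  have hinj : Function.Injective f := by
    have himg : Finset.univ.image f = Finset.Icc 1 N := by
      apply Finset.coe_injective
      rw [Finset.coe_image, Finset.coe_univ, Set.image_univ, hrange, Finset.coe_Icc]
    have hcardimg : (Finset.univ.image f).card = (Finset.univ : Finset V).card := by
      rw [himg, Nat.card_Icc]
      simp only [Finset.card_univ]
      omega
    have hio := Finset.card_image_iff.mp hcardimg
    intro a b hab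
    exact hio (Finset.mem_univ a) (Finset.mem_univ b) hab
  have consec : ∀ v w : V, f w = f v + 1 → (v ∈ P ↔ w ∈ P) := by
    intro v w hvw
    have hne : v ≠ w := by
      intro h; rw [h] at hvw; omega
    have hrl := hf v w hne
    rw [hdiam] at hrl
    have habs : |(f v : ℤ) - (f w : ℤ)| = 1 := by
      rw [hvw]
      push_cast
      rw [show (f v : ℤ) - ((f v : ℤ) + 1) = -1 by ring]
      norm_num
    rw [habs] at hrl
    push_cast at hrl
    have h6 : (6 : ℤ) ≤ (G.dist v w : ℤ) := by linarith
    have h6' : 6 ≤ G.dist v w := by exact_mod_cast h6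
    have hd6 : G.dist v w = 6 := by
      have := hle6 v w; omega
    have hpar := bip_dist_parity G hconn hP v w
    rw [hd6] at hpar
    exact hpar.mpr ⟨3, rfl⟩
  have step : ∀ k, ∀ v w : V, f w = f v + k → (v ∈ P ↔ w ∈ P) := by
    intro k
    induction k with
    | zero =>
      intro v w h
      have : w = v := hinj (by omega)
      rw [this]
    | succ k ih =>
      intro v w h
      have h1 : 1 ≤ f v := (hmem v).1
      have h2 : f w ≤ N := (hmem w).2
      obtain ⟨x, hx⟩ := hsurj (f v + k) (by omega) (by omega)
      have e1 := ih v x (by omega)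
      have e2 := consec x w (by omega)
      tauto
  have allsame : ∀ v w : V, (v ∈ P ↔ w ∈ P) := by
    intro v w
    rcases le_total (f v) (f w) with h | h
    · exact step (f w - f v) v w (by omega)
    · exact (step (f v - f w) w v (by omega)).symm
  have hnt : Nontrivial V := by
    rw [← Fintype.one_lt_card_iff_nontrivial, ← hNdef, hcard]
    have ha : 1 ≤ q ^ 3 + 1 := Nat.le_add_left 1 _
    have hb : 1 ≤ q ^ 2 + q + 1 := Nat.le_add_left 1 _
    nlinarith
  obtain ⟨x, y, hxy⟩ := exists_pair_ne V
  obtain ⟨p, hp⟩ := hconn.exists_walk_length_eq_dist x y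
  cases p with
  | nil => exact hxy rfl
  | @cons _ z _ h t =>
    have h1 := hP x z h
    have h2 := allsame x z
    tauto
end

section
/- Let G be a finite connected simple graph of diameter 2 on n vertices whose maximum degree satisfies Δ(G) ≤ (n-1)/2. Then G is radio graceful. -/
open SimpleGraph

private lemma cycListChain_iff {V : Type*} (R : V → V → Prop) (c : List V) (hc : c ≠ []) :
    Cycle.Chain R ↑c ↔ List.Chain' R (c ++ [c.head hc]) := by
  cases c with
  | nil => exact absurd rfl hc
  | cons a t =>
      rw [List.cons_append, List.head_cons]
      exact Cycle.chain_coe_cons R a t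

private lemma common_neighbor {V : Type*} [Fintype V] {H : SimpleGraph V} [DecidableRel H.Adj]
    (hd : ∀ v, Fintype.card V - 1 ≤ 2 * H.degree v)
    {u w : V} (hne : u ≠ w) (hna : ¬ H.Adj u w) : ∃ x, H.Adj u x ∧ H.Adj x w := by
  classical
  by_contra hcon
  push_neg at hcon
  have hdisj : Disjoint (H.neighborFinset u) (H.neighborFinset w) := by
    rw [Finset.disjoint_left]
    intro x hx hx'
    exact hcon x ((H.mem_neighborFinset u x).1 hx) ((H.mem_neighborFinset w x).1 hx').symm
  have hsub : H.neighborFinset u ∪ H.neighborFinset w ⊆ Finset.univ \ {u, w} := by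
    intro x hx
    simp only [Finset.mem_union, SimpleGraph.mem_neighborFinset] at hx
    simp only [Finset.mem_sdiff, Finset.mem_univ, Finset.mem_insert, Finset.mem_singleton,
      true_and]
    push_neg
    rcases hx with h | h
    · exact ⟨fun e => H.loopless.irrefl u (e ▸ h), fun e => hna (e ▸ h)⟩
    · exact ⟨fun e => hna (e ▸ h.symm), fun e => H.loopless.irrefl w (e ▸ h)⟩
  have hcard := Finset.card_le_card hsub
  rw [Finset.card_union_of_disjoint hdisj] at hcard
  have hcard2 : (Finset.univ \ {u, w} : Finset V).card = Fintype.card V - 2 := by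
    rw [Finset.card_sdiff_of_subset (Finset.subset_univ _), Finset.card_univ]
    congr 1
    rw [Finset.card_insert_of_notMem (by simp [hne]), Finset.card_singleton]
  have hn : 2 ≤ Fintype.card V := Fintype.one_lt_card_iff_nontrivial.mpr ⟨u, w, hne⟩
  have h1 := hd u
  have h2 := hd w
  have hud := H.degree u
  rw [hcard2] at hcard
  unfold SimpleGraph.degree at h1 h2
  omega

open List in
private lemma extend_chain {V : Type*} [Fintype V] [DecidableEq V] {H : SimpleGraph V}
    [DecidableRel H.Adj] (hd : ∀ v, Fintype.card V - 1 ≤ 2 * H.degree v)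
    {l : List V} (hnd : l.Nodup) (hch : l.Chain' H.Adj) {v : V} (hv : v ∉ l) :
    ∃ l' : List V, l'.Nodup ∧ l'.Chain' H.Adj ∧ l'.length = l.length + 1 := by
  rcases eq_or_ne l [] with rfl | hne
  · exact ⟨[v], List.nodup_singleton v, List.isChain_singleton v, rfl⟩
  have hk0 : 0 < l.length := List.length_pos_iff.mpr hne
  have hkn : l.length < Fintype.card V := by
    have h1 : l.toFinset.card = l.length := List.toFinset_card_of_nodup hnd
    have h2 : l.toFinset ⊂ Finset.univ := Finset.ssubset_univ_iff.mpr (fun h => hv (by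
      rw [← List.mem_toFinset, h]; exact Finset.mem_univ v))
    have := Finset.card_lt_card h2
    rwa [h1, Finset.card_univ] at this
  by_cases hca : ∃ x, x ∉ l ∧ H.Adj x (l.head hne)
  · obtain ⟨x, hx1, hx2⟩ := hca
    refine ⟨x :: l, List.nodup_cons.mpr ⟨hx1, hnd⟩, hch.cons ?_, rfl⟩
    simp only [List.head?_eq_head hne, Option.mem_some_iff]
    rintro y rfl
    exact hx2
  by_cases hcb : ∃ x, x ∉ l ∧ H.Adj (l.getLast hne) x
  · obtain ⟨x, hx1, hx2⟩ := hcb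
    refine ⟨l ++ [x], by simp [List.nodup_append, hnd, hx1]; exact fun a ha h => hx1 (h ▸ ha),
      hch.append (List.isChain_singleton x) ?_, by simp⟩
    simp only [List.getLast?_eq_getLast hne, Option.mem_some_iff, List.head?_cons]
    rintro y rfl z rfl
    exact hx2
  push_neg at hca hcb
  have ha' : ∀ x, H.Adj (l.head hne) x → x ∈ l := fun x hx =>
    by_contra fun h => hca x h hx.symm
  have hb' : ∀ x, H.Adj (l.getLast hne) x → x ∈ l := fun x hx =>
    by_contra fun h => hcb x h hx
  set S : Finset ℕ :=
    (Finset.range (l.length - 1)).filter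
      (fun i => H.Adj (l.head hne) (l.getD (i + 1) (l.head hne))) with hS
  set T : Finset ℕ :=
    (Finset.range (l.length - 1)).filter
      (fun i => H.Adj (l.getLast hne) (l.getD i (l.head hne))) with hT
  have hkeyA : ∀ x, H.Adj (l.head hne) x →
      x ∈ l ∧ l.idxOf x ≠ 0 ∧ l.idxOf x < l.length := by
    intro x hx
    have hxl : x ∈ l := ha' x hx
    have hlt : l.idxOf x < l.length := List.idxOf_lt_length_iff.mpr hxl
    refine ⟨hxl, fun h0 => ?_, hlt⟩
    apply H.loopless.irrefl (l.head hne)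
    have hg : l[l.idxOf x] = x := List.getElem_idxOf hlt
    simp only [h0] at hg
    rw [show l.head hne = x from by rw [← hg]; exact (List.getElem_zero hk0).symm] at hx ⊢
    exact hx
  have hkeyB : ∀ x, H.Adj (l.getLast hne) x →
      x ∈ l ∧ l.idxOf x ≠ l.length - 1 ∧ l.idxOf x < l.length := by
    intro x hx
    have hxl : x ∈ l := hb' x hx
    have hlt : l.idxOf x < l.length := List.idxOf_lt_length_iff.mpr hxl
    refine ⟨hxl, fun h0 => ?_, hlt⟩
    apply H.loopless.irrefl (l.getLast hne)
    have hg : l[l.idxOf x] = x := List.getElem_idxOf hlt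
    simp only [h0] at hg
    have hgl : l.getLast hne = x := by
      rw [← hg, List.getLast_eq_getElem]
    rw [hgl] at hx ⊢
    exact hx
  have hSc : H.degree (l.head hne) ≤ S.card := by
    rw [← SimpleGraph.card_neighborFinset_eq_degree]
    apply Finset.card_le_card_of_injOn (fun x => l.idxOf x - 1)
    · intro x hx
      rw [Finset.mem_coe, SimpleGraph.mem_neighborFinset] at hx
      obtain ⟨hxl, h0, hlt⟩ := hkeyA x hx
      rw [Finset.mem_coe, hS, Finset.mem_filter, Finset.mem_range]
      beta_reduce
      constructor
      · omega
      · have : l.idxOf x - 1 + 1 = l.idxOf x := by omega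
        rw [this, List.getD_eq_getElem _ _ hlt, List.getElem_idxOf hlt]
        exact hx
    · intro x hx y hy hxy
      simp only [Finset.mem_coe, SimpleGraph.mem_neighborFinset] at hx hy
      simp only at hxy
      obtain ⟨hxl, hx0, -⟩ := hkeyA x hx
      obtain ⟨hyl, hy0, -⟩ := hkeyA y hy
      exact (List.idxOf_inj hxl).mp (by omega)
  have hTc : H.degree (l.getLast hne) ≤ T.card := by
    rw [← SimpleGraph.card_neighborFinset_eq_degree]
    apply Finset.card_le_card_of_injOn (fun x => l.idxOf x)
    · intro x hx
      rw [Finset.mem_coe, SimpleGraph.mem_neighborFinset] at hx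
      obtain ⟨hxl, h0, hlt⟩ := hkeyB x hx
      rw [Finset.mem_coe, hT, Finset.mem_filter, Finset.mem_range]
      beta_reduce
      refine ⟨by omega, ?_⟩
      rw [List.getD_eq_getElem _ _ hlt, List.getElem_idxOf hlt]
      exact hx
    · intro x hx y hy hxy
      simp only [Finset.mem_coe, SimpleGraph.mem_neighborFinset] at hx hy
      simp only at hxy
      obtain ⟨hxl, -, -⟩ := hkeyB x hx
      obtain ⟨hyl, -, -⟩ := hkeyB y hy
      exact (List.idxOf_inj hxl).mp hxy
  have hunion : (S ∪ T).card ≤ l.length - 1 := by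
    have hsub : S ∪ T ⊆ Finset.range (l.length - 1) :=
      Finset.union_subset (Finset.filter_subset _ _) (Finset.filter_subset _ _)
    have := Finset.card_le_card hsub
    rwa [Finset.card_range] at this
  have hdeg2 : Fintype.card V - 1 ≤ H.degree (l.head hne) + H.degree (l.getLast hne) := by
    have := hd (l.head hne)
    have := hd (l.getLast hne)
    omega
  have hint : (S ∩ T).Nonempty := by
    rw [← Finset.card_pos]
    have := Finset.card_union_add_card_inter S T
    omega
  obtain ⟨i, hi⟩ := hint
  rw [Finset.mem_inter, hS, hT, Finset.mem_filter, Finset.mem_filter, Finset.mem_range] at hi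
  obtain ⟨⟨hik, hiA⟩, -, hiB⟩ := hi
  have hi1 : i + 1 < l.length := by omega
  have hAx : H.Adj (l.head hne) (l[i + 1]'hi1) := by
    rwa [List.getD_eq_getElem _ _ hi1] at hiA
  have hBx : H.Adj (l.getLast hne) (l[i]'(by omega)) := by
    rwa [List.getD_eq_getElem _ _ (by omega)] at hiB
  set c : List V := l.drop (i + 1) ++ (l.take (i + 1)).reverse with hc
  have hdropne : l.drop (i + 1) ≠ [] := by
    apply List.ne_nil_of_length_pos
    rw [List.length_drop]
    omega
  have htakene : (l.take (i + 1)).reverse ≠ [] := by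
    apply List.ne_nil_of_length_pos
    rw [List.length_reverse, List.length_take]
    omega
  have hcperm : c ~ l := by
    calc c ~ l.drop (i + 1) ++ l.take (i + 1) :=
          List.Perm.append_left _ ((l.take (i + 1)).reverse_perm)
      _ ~ l.take (i + 1) ++ l.drop (i + 1) := List.perm_append_comm
      _ = l := List.take_append_drop _ _
  have hcne : c ≠ [] := fun h => hdropne (List.append_eq_nil_iff.mp h).1
  have hchead? : c.head? = some (l[i + 1]'hi1) := by
    rw [hc, List.head?_append_of_ne_nil _ hdropne, List.head?_eq_getElem?, List.getElem?_drop]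
    simp [List.getElem?_eq_getElem hi1]
  have hdlast? : (l.drop (i + 1)).getLast? = some (l.getLast hne) := by
    rw [List.getLast?_eq_getElem?, List.getElem?_drop, List.length_drop]
    have h' : i + 1 + (l.length - (i + 1) - 1) = l.length - 1 := by omega
    rw [h', ← List.getLast?_eq_getElem?, List.getLast?_eq_getLast hne]
  have htlast? : (l.take (i + 1)).reverse.getLast? = some (l.head hne) := by
    rw [List.getLast?_reverse, List.head?_eq_getElem?,
      List.getElem?_take_of_lt (by omega : 0 < i + 1), ← List.head?_eq_getElem?,
      List.head?_eq_head hne]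
  have hthead? : (l.take (i + 1)).reverse.head? = some (l[i]'(by omega)) := by
    rw [List.head?_reverse, List.getLast?_eq_getElem?, List.length_take]
    have h' : min (i + 1) l.length - 1 = i := by omega
    rw [h', List.getElem?_take_of_lt (by omega), List.getElem?_eq_getElem (by omega)]
  have hchd : c.head hcne = l[i + 1]'hi1 := by
    have h2 := List.head?_eq_head hcne
    rw [hchead?] at h2
    exact (Option.some_inj.mp h2).symm
  have hcyc : List.Chain' H.Adj (c ++ [c.head hcne]) := by
    rw [hchd, hc, List.append_assoc]
    apply List.IsChain.append (hch.drop (i + 1))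
    · apply List.IsChain.append
      · exact List.isChain_reverse.mpr ((hch.take (i + 1)).imp fun _ _ h => h.symm)
      · exact List.isChain_singleton _
      · rw [htlast?]
        simp only [Option.mem_some_iff, List.head?_cons]
        rintro x rfl y rfl
        exact hAx
    · rw [hdlast?, List.head?_append_of_ne_nil _ htakene, hthead?]
      simp only [Option.mem_some_iff]
      rintro x rfl y rfl
      exact hBx
  have hWedge : ∃ w, w ∉ l ∧ ∃ y, y ∈ l ∧ H.Adj w y := by
    have hal : l.head hne ∈ l := List.head_mem hne
    by_cases hva : H.Adj v (l.head hne)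
    · exact ⟨v, hv, l.head hne, hal, hva⟩
    · have hvna : v ≠ l.head hne := fun h => hv (h ▸ hal)
      obtain ⟨x, hx1, hx2⟩ := common_neighbor hd hvna hva
      by_cases hxl : x ∈ l
      · exact ⟨v, hv, x, hxl, hx1⟩
      · exact ⟨x, hxl, l.head hne, hal, hx2⟩
  obtain ⟨w, hwl, y, hyl, hwy⟩ := hWedge
  have hyc : y ∈ c := hcperm.mem_iff.mpr hyl
  have hjlt : c.idxOf y < c.length := List.idxOf_lt_length_iff.mpr hyc
  set c' := c.rotate (c.idxOf y) with hc'
  have hc'perm : c' ~ c := List.rotate_perm c _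
  have hc'ne : c' ≠ [] := by
    intro h
    rw [h] at hc'perm
    exact hcne hc'perm.symm.eq_nil
  have hc'head : c'.head? = some y := by
    rw [hc', List.head?_eq_getElem?, List.getElem?_rotate (by omega : 0 < c.length),
      Nat.zero_add, Nat.mod_eq_of_lt hjlt, List.getElem?_eq_getElem hjlt,
      List.getElem_idxOf hjlt]
  have hc'cyc : List.Chain' H.Adj (c' ++ [c'.head hc'ne]) := by
    have h1 : Cycle.Chain H.Adj ↑c := (cycListChain_iff _ c hcne).mpr hcyc
    have h2 : (↑c' : Cycle V) = ↑c := Quot.sound (List.IsRotated.symm ⟨_, rfl⟩)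
    exact (cycListChain_iff _ c' hc'ne).mp (h2 ▸ h1)
  have hc'nodup : c'.Nodup := (hc'perm.trans hcperm).nodup_iff.mpr hnd
  refine ⟨w :: c', List.nodup_cons.mpr
    ⟨fun h => hwl ((hc'perm.trans hcperm).mem_iff.mp h), hc'nodup⟩, ?_, ?_⟩
  · apply List.IsChain.cons (hc'cyc.prefix (List.prefix_append _ _))
    rw [hc'head]
    simp only [Option.mem_some_iff]
    rintro z rfl
    exact hwy
  · simp only [List.length_cons, hc', List.length_rotate]
    rw [hcperm.length_eq]

private lemma exists_ham_list {V : Type*} [Fintype V] [DecidableEq V] (H : SimpleGraph V)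
    [DecidableRel H.Adj] (hd : ∀ v, Fintype.card V - 1 ≤ 2 * H.degree v) :
    ∃ l : List V, l.Nodup ∧ l.Chain' H.Adj ∧ ∀ v, v ∈ l := by
  have key : ∀ m, m ≤ Fintype.card V →
      ∃ l : List V, l.Nodup ∧ l.Chain' H.Adj ∧ l.length = m := by
    intro m
    induction m with
    | zero => exact fun _ => ⟨[], List.nodup_nil, List.isChain_nil, rfl⟩
    | succ m ih =>
        intro hm
        obtain ⟨l, h1, h2, h3⟩ := ih (by omega)
        have hex : ∃ v, v ∉ l := by
          by_contra hcon
          push_neg at hcon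
          have h4 : l.toFinset = Finset.univ := Finset.eq_univ_iff_forall.mpr
            (fun v => List.mem_toFinset.mpr (hcon v))
          have h5 := List.toFinset_card_of_nodup h1
          rw [h4, Finset.card_univ] at h5
          omega
        obtain ⟨v, hv⟩ := hex
        obtain ⟨l', h1', h2', h3'⟩ := extend_chain hd h1 h2 hv
        exact ⟨l', h1', h2', by omega⟩
  obtain ⟨l, h1, h2, h3⟩ := key (Fintype.card V) le_rfl
  refine ⟨l, h1, h2, fun v => ?_⟩
  have h5 := List.toFinset_card_of_nodup h1
  rw [h3] at h5
  have h6 : l.toFinset = Finset.univ := Finset.eq_univ_of_card _ h5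
  rw [← List.mem_toFinset, h6]
  exact Finset.mem_univ v

open SimpleGraph in
theorem radioGraceful_of_diam_two_max_degree'
    {V : Type*} [Fintype V] (G : SimpleGraph V) [DecidableRel G.Adj]
    (hconn : G.Connected) (hdiam : G.diam = 2)
    (hdeg : (G.maxDegree : ℚ) ≤ ((Fintype.card V : ℚ) - 1) / 2) :
    ∃ f : V → ℕ, (∀ u v : V, u ≠ v →
      (G.diam : ℤ) + 1 ≤ |(f u : ℤ) - (f v : ℤ)| + (G.dist u v : ℤ)) ∧
      Set.range f = Set.Icc 1 (Nat.card V) := by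
  classical
  have hnV : Nonempty V := hconn.nonempty
  have hn1 : 1 ≤ Fintype.card V := Fintype.card_pos
  have hΔ : 2 * G.maxDegree ≤ Fintype.card V - 1 := by
    have h3 : ((2 * G.maxDegree : ℕ) : ℚ) ≤ ((Fintype.card V - 1 : ℕ) : ℚ) := by
      push_cast [hn1]
      linarith
    exact_mod_cast h3
  have hdc : ∀ v : V, Fintype.card V - 1 ≤ 2 * (Gᶜ).degree v := by
    intro v
    have h1 : G.degree v ≤ G.maxDegree := G.degree_le_maxDegree v
    have h2 : (Gᶜ).degree v = Fintype.card V - 1 - G.degree v := G.degree_compl v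
    omega
  obtain ⟨l, hnd, hch, hmem⟩ := exists_ham_list Gᶜ hdc
  have hlen : l.length = Fintype.card V := by
    have h1 := List.toFinset_card_of_nodup hnd
    have h2 : l.toFinset = Finset.univ := Finset.eq_univ_iff_forall.mpr
      (fun v => List.mem_toFinset.mpr (hmem v))
    rw [h2, Finset.card_univ] at h1
    omega
  refine ⟨fun v => l.idxOf v + 1, ?_, ?_⟩
  · intro u v huv
    simp only
    rw [hdiam]
    have hul : u ∈ l := hmem u
    have hvl : v ∈ l := hmem v
    have hdl : 1 ≤ G.dist u v := hconn.pos_dist_of_ne huv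
    have hne2 : l.idxOf u ≠ l.idxOf v := fun h => huv ((List.idxOf_inj hul).mp h)
    have hcons : ∀ p q : V, p ∈ l → q ∈ l → l.idxOf q = l.idxOf p + 1 →
        2 ≤ G.dist p q := by
      intro p q hp hq hpq
      have hltq : l.idxOf q < l.length := List.idxOf_lt_length_iff.mpr hq
      have hltp : l.idxOf p < l.length := List.idxOf_lt_length_iff.mpr hp
      have hadj : Gᶜ.Adj (l.get ⟨l.idxOf p, by omega⟩)
          (l.get ⟨l.idxOf p + 1, by omega⟩) :=
        List.isChain_iff_getElem.mp hch _ (by omega)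
      have h1 : l.get ⟨l.idxOf p, by omega⟩ = p := List.idxOf_get _
      have h2 : l.get ⟨l.idxOf p + 1, by omega⟩ = q := by
        have h3 : l.get ⟨l.idxOf q, hltq⟩ = q := List.idxOf_get _
        rw [show (⟨l.idxOf p + 1, by omega⟩ : Fin l.length) = ⟨l.idxOf q, hltq⟩ from
          Fin.ext hpq.symm]
        exact h3
      rw [h1, h2] at hadj
      have hna : ¬ G.Adj p q := hadj.2
      have hd1 : G.dist p q ≠ 1 := fun h => hna (SimpleGraph.dist_eq_one_iff_adj.mp h)
      have hd0 : 0 < G.dist p q := hconn.pos_dist_of_ne hadj.1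
      omega
    rcases lt_trichotomy (l.idxOf u) (l.idxOf v) with h | h | h
    · have habs : |((l.idxOf u + 1 : ℕ) : ℤ) - ((l.idxOf v + 1 : ℕ) : ℤ)| =
          ((l.idxOf v : ℕ) : ℤ) - ((l.idxOf u : ℕ) : ℤ) := by
        rw [abs_of_nonpos (by push_cast; omega)]
        push_cast
        ring
      rw [habs]
      by_cases hc1 : l.idxOf v = l.idxOf u + 1
      · have := hcons u v hul hvl hc1
        push_cast
        omega
      · push_cast
        omega
    · exact absurd h hne2
    · have habs : |((l.idxOf u + 1 : ℕ) : ℤ) - ((l.idxOf v + 1 : ℕ) : ℤ)| =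
          ((l.idxOf u : ℕ) : ℤ) - ((l.idxOf v : ℕ) : ℤ) := by
        rw [abs_of_nonneg (by push_cast; omega)]
        push_cast
        ring
      rw [habs]
      by_cases hc1 : l.idxOf u = l.idxOf v + 1
      · have h2 := hcons v u hvl hul hc1
        rw [SimpleGraph.dist_comm] at h2
        push_cast
        omega
      · push_cast
        omega
  · ext m
    simp only [Set.mem_range, Set.mem_Icc, Nat.card_eq_fintype_card]
    constructor
    · rintro ⟨x, rfl⟩
      have := List.idxOf_lt_length_iff.mpr (hmem x)
      omega
    · rintro ⟨h1, h2⟩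
      have hm : m - 1 < l.length := by omega
      refine ⟨l.get ⟨m - 1, hm⟩, ?_⟩
      rw [List.get_idxOf hnd]
      show m - 1 + 1 = m
      omega

theorem radioGraceful_of_diam_two_max_degree
    {V : Type*} [Fintype V] (G : SimpleGraph V) [DecidableRel G.Adj]
    (hconn : G.Connected) (hdiam : G.diam = 2)
    (hdeg : (G.maxDegree : ℚ) ≤ ((Fintype.card V : ℚ) - 1) / 2) :
    RadioGraceful G := by
  obtain ⟨f, h1, h2⟩ := radioGraceful_of_diam_two_max_degree' G hconn hdiam hdeg
  exact ⟨f, h1, h2⟩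
end
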